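/- arXiv:2211.13831 — 7 statements merged into one kernel-verified Lean document; each statement's English description precedes it below -/
import Mathlib

section
/- Let n ≥ 1 and θ : ℕ → ℝ with θ_1 = 1 and θ_i > 0 for all i. For r : {1,…,n} → {0,1} with r(1) = 1, list the elements of {i : r(i) = 1} ∪ {n+1} in decreasing order n+1 = s_0 > s_1 > ⋯ > s_K = 1, and define the cycle type C(r) = (C_1(r), …, C_n(r)) by C_j(r) := #{t ∈ {1,…,K} : s_{t−1} − s_t = j}. Fix c = (c_1,…,c_n) ∈ ℤ_{≥0}^n with Σ_{j=1}^n j·c_j = n, let ‖c‖ := Σ_j c_j, and let c̄ ∈ ℕ^{‖c‖} be the nondecreasing list containing each j with multiplicity c_j. Then Σ_{r : r(1)=1, C(r)=c} Π_{i=1}^{n} b_i(r(i)) = ((n−1)!/θ_{<n>})·θ_1·( Π_{i=1}^{n} 1/c_i! )·Σ_{σ ∈ Sym(‖c‖)} Π_{i=1}^{‖c‖−1} θ_{ε(i,c,σ)}/(ε(i,c,σ) − 1), where b_i(1) = θ_i/(i−1+θ_i), b_i(0) = (i−1)/(i−1+θ_i), θ_{<n>} := Π_{k=1}^{n}(θ_k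 + k − 1), and ε(i,c,σ) := n + 1 − Σ_{j=1}^{i} c̄(σ(j)). -/
open Finset Filter

/-- The number of `j`-spacings (`j`-cycles) of a binary string of length `n`, encoded by
the set `s ⊆ {1,…,n}` of its `1`-positions: the number of `i ∈ s` whose successor in
`s ∪ {n+1}` is `i + j`. -/
def cycCount (n : ℕ) (s : Finset ℕ) (j : ℕ) : ℕ :=
  ((Finset.Icc 1 n).filter (fun i =>
    i ∈ s ∧ (i + j ∈ s ∨ i + j = n + 1) ∧ ∀ m ∈ Finset.Ioo i (i + j), m ∉ s)).card


namespace Stmt12Aux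
open Finset
set_option linter.unusedSectionVars false
set_option linter.unusedVariables false
set_option maxHeartbeats 1000000


variable {n K : ℕ}

/-- partial sum of the first `i` values of `f`. -/
def psum (f : Fin K → ℕ) (i : ℕ) : ℕ :=
  ∑ t ∈ Finset.univ.filter (fun t : Fin K => (t : ℕ) < i), f t

@[simp] lemma psum_zero (f : Fin K → ℕ) : psum f 0 = 0 := by
  simp [psum]

lemma psum_succ (f : Fin K → ℕ) {i : ℕ} (hi : i < K) :
    psum f (i + 1) = psum f i + f ⟨i, hi⟩ := by
  have h : Finset.univ.filter (fun t : Fin K => (t : ℕ) < i + 1)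
      = insert ⟨i, hi⟩ (Finset.univ.filter (fun t : Fin K => (t : ℕ) < i)) := by
    ext t
    simp [Nat.lt_succ_iff_lt_or_eq, Fin.ext_iff, or_comm]
    omega
  rw [psum, h, Finset.sum_insert (by simp), add_comm, psum]

lemma psum_K (f : Fin K → ℕ) : psum f K = ∑ t, f t := by
  rw [psum]
  congr 1
  ext t
  simp [t.isLt]

lemma psum_mono (f : Fin K → ℕ) {i i' : ℕ} (h : i ≤ i') : psum f i ≤ psum f i' := by
  apply Finset.sum_le_sum_of_subset
  intro t ht
  simp only [Finset.mem_filter, Finset.mem_univ, true_and] at ht ⊢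
  omega

lemma psum_le (f : Fin K → ℕ) (i : ℕ) : psum f i ≤ ∑ t, f t := by
  rw [← psum_K]
  apply Finset.sum_le_sum_of_subset
  intro t ht
  simp [t.isLt]

lemma psum_strict (f : Fin K → ℕ) (h1 : ∀ t, 1 ≤ f t) {i i' : ℕ} (h : i < i') (h' : i' ≤ K) :
    psum f i < psum f i' := by
  have hi : i < K := lt_of_lt_of_le h h'
  have := psum_succ f hi
  have := h1 ⟨i, hi⟩
  have := psum_mono f (show i + 1 ≤ i' by omega)
  omega

lemma le_psum (f : Fin K → ℕ) (h1 : ∀ t, 1 ≤ f t) {i : ℕ} (hi : i ≤ K) : i ≤ psum f i := by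
  induction i with
  | zero => simp
  | succ m ih =>
    have hm : m < K := by omega
    have := psum_succ f hm
    have := h1 ⟨m, hm⟩
    have := ih (by omega)
    omega

lemma psum_add_le (f : Fin K → ℕ) (h1 : ∀ t, 1 ≤ f t) {i : ℕ} (hi : i ≤ K) :
    psum f i + (K - i) ≤ ∑ t, f t := by
  have key : ∀ d i, i + d ≤ K → psum f i + d ≤ psum f (i + d) := by
    intro d
    induction d with
    | zero => intro i _; simp
    | succ m ih =>
      intro i hid
      have hm : i + m < K := by omega
      have h2 := psum_succ f hm
      have h3 := h1 ⟨i + m, hm⟩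
      have h4 := ih i (by omega)
      have : i + (m+1) = (i + m) + 1 := by omega
      rw [this]
      omega
  have := key (K - i) i (by omega)
  have h5 : i + (K - i) = K := by omega
  rw [h5] at this
  rw [← psum_K]
  omega


/-- position of the `i`-th one (from the top), `pos f 0 = n+1`, `pos f K = 1`. -/
def pos (n : ℕ) (f : Fin K → ℕ) (i : ℕ) : ℕ := n + 1 - psum f i

/-- the set of ones determined by spacings `f`. -/
def sOf (n : ℕ) (f : Fin K → ℕ) : Finset ℕ := (Finset.Icc 1 K).image (pos n f)

set_option linter.unusedSectionVars false
section posLemmas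
variable {f : Fin K → ℕ} (h1 : ∀ t, 1 ≤ f t) (hs : ∑ t, f t = n)


include hs in
lemma psum_le_n (i : ℕ) : psum f i ≤ n := hs ▸ psum_le f i

@[simp] lemma pos_zero (f : Fin K → ℕ) : pos n f 0 = n + 1 := by
  simp [pos, psum_zero]

include hs in
lemma pos_K : pos n f K = 1 := by
  simp [pos, psum_K, hs]

include hs in
lemma psum_of_pos (i : ℕ) : psum f i = n + 1 - pos n f i := by
  have := psum_le_n hs i
  simp only [pos]; omega

include h1 hs in
lemma pos_lt_pos {i i' : ℕ} (h : i < i') (h' : i' ≤ K) : pos n f i' < pos n f i := by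
  have h2 := psum_strict f h1 h h'
  have h3 := psum_le_n hs i'
  simp only [pos]; omega

include h1 hs in
lemma pos_anti {i i' : ℕ} (h : i ≤ i') (h' : i' ≤ K) : pos n f i' ≤ pos n f i := by
  rcases eq_or_lt_of_le h with rfl | h
  · exact le_refl _
  · exact le_of_lt (pos_lt_pos h1 hs h h')

include h1 hs in
lemma pos_le_of_one_le {i : ℕ} (hi : 1 ≤ i) (hiK : i ≤ K) : pos n f i ≤ n + 1 - i := by
  have h3 : i ≤ psum f i := le_psum f h1 hiK
  simp only [pos]; omega

include h1 hs in
lemma pos_le_n {i : ℕ} (hi : 1 ≤ i) (hiK : i ≤ K) : pos n f i ≤ n := by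
  have := pos_le_of_one_le h1 hs hi hiK; omega

include h1 hs in
lemma pos_ge {i : ℕ} (hi : i ≤ K) : K - i + 1 ≤ pos n f i := by
  have h2 := psum_add_le f h1 hi
  rw [hs] at h2
  simp only [pos]; omega

include h1 hs in
lemma one_le_pos {i : ℕ} (hi : i ≤ K) : 1 ≤ pos n f i := by
  have := pos_ge h1 hs hi; omega

include h1 hs in
lemma two_le_pos {i : ℕ} (hi : i ≤ K - 1) (hK : 1 ≤ K) : 2 ≤ pos n f i := by
  have := pos_ge h1 hs (show i ≤ K by omega); omega

include h1 hs in
lemma pos_succ_add {i : ℕ} (hi : i < K) : pos n f (i + 1) + f ⟨i, hi⟩ = pos n f i := by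
  have h2 := psum_succ f hi
  have h3 := psum_le_n hs (i + 1)
  simp only [pos]; omega

lemma mem_sOf {x : ℕ} : x ∈ sOf n f ↔ ∃ i, 1 ≤ i ∧ i ≤ K ∧ pos n f i = x := by
  simp [sOf, Finset.mem_image, Finset.mem_Icc]
  constructor
  · rintro ⟨i, ⟨hi1, hi2⟩, h⟩; exact ⟨i, hi1, hi2, h⟩
  · rintro ⟨i, hi1, hi2, h⟩; exact ⟨i, ⟨hi1, hi2⟩, h⟩

include h1 hs in
lemma pos_injOn : Set.InjOn (pos n f) (Finset.Icc 1 K) := by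
  intro a ha b hb hab
  simp only [Finset.coe_Icc, Set.mem_Icc] at ha hb
  by_contra hne
  rcases lt_or_gt_of_ne hne with h | h
  · have := pos_lt_pos h1 hs (n := n) h hb.2; omega
  · have := pos_lt_pos h1 hs (n := n) h ha.2; omega

include h1 hs in
lemma sOf_subset : sOf n f ⊆ Finset.Icc 1 n := by
  intro x hx
  rw [mem_sOf] at hx
  obtain ⟨i, hi1, hi2, rfl⟩ := hx
  rw [Finset.mem_Icc]
  exact ⟨one_le_pos h1 hs hi2, pos_le_n h1 hs hi1 hi2⟩

include h1 hs in
lemma one_mem_sOf (hK : 1 ≤ K) : 1 ∈ sOf n f := by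
  rw [mem_sOf]
  exact ⟨K, hK, le_refl K, pos_K hs⟩

include h1 hs in
lemma card_sOf : (sOf n f).card = K := by
  rw [sOf, Finset.card_image_of_injOn (pos_injOn h1 hs), Nat.card_Icc]; omega

end posLemmas


open Finset
section C
variable {f : Fin K → ℕ} (h1 : ∀ t, 1 ≤ f t) (hs : ∑ t, f t = n)
set_option linter.unusedSectionVars false

include h1 hs in
lemma filter_cyc_eq {j : ℕ} (hj : 1 ≤ j) :
    (Finset.Icc 1 n).filter (fun x =>
      x ∈ sOf n f ∧ (x + j ∈ sOf n f ∨ x + j = n + 1) ∧ ∀ m ∈ Finset.Ioo x (x + j), m ∉ sOf n f)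
    = (Finset.univ.filter (fun u : Fin K => f u = j)).image
        (fun u : Fin K => pos n f ((u : ℕ) + 1)) := by
  ext x
  simp only [Finset.mem_filter, Finset.mem_Icc, Finset.mem_image, Finset.mem_univ, true_and]
  constructor
  · rintro ⟨⟨hx1, hxn⟩, hxs, hnext, hgap⟩
    obtain ⟨a, ha1, haK, hpa⟩ := mem_sOf.1 hxs
    have hb : ∃ b, b ≤ K ∧ pos n f b = x + j := by
      rcases hnext with h | h
      · obtain ⟨b, _, hbK, hpb⟩ := mem_sOf.1 h
        exact ⟨b, hbK, hpb⟩
      · exact ⟨0, Nat.zero_le _, by rw [pos_zero]; omega⟩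
    obtain ⟨b, hbK, hpb⟩ := hb
    have hba : b < a := by
      by_contra hcon
      push_neg at hcon
      have := pos_anti h1 hs (n := n) hcon hbK
      omega
    have hba1 : b = a - 1 := by
      by_contra hne
      have h1' : b < a - 1 := by omega
      have hmem : pos n f (a - 1) ∈ sOf n f := mem_sOf.2 ⟨a - 1, by omega, by omega, rfl⟩
      have hlt : pos n f a < pos n f (a - 1) := pos_lt_pos h1 hs (by omega) (by omega)
      have hgt : pos n f (a - 1) < pos n f b := pos_lt_pos h1 hs h1' (by omega)
      exact hgap _ (Finset.mem_Ioo.2 (by omega)) hmem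
    have haK' : a - 1 < K := by omega
    have hadd := pos_succ_add h1 hs haK'
    rw [show a - 1 + 1 = a by omega] at hadd
    refine ⟨⟨a - 1, haK'⟩, by subst hba1; omega, ?_⟩
    show pos n f (a - 1 + 1) = x
    rw [show a - 1 + 1 = a by omega]
    exact hpa
  · rintro ⟨u, hu, rfl⟩
    have huK : (u : ℕ) + 1 ≤ K := u.isLt
    have hadd := pos_succ_add h1 hs u.isLt
    rw [show ((u : ℕ) + 1 : ℕ) = (u : ℕ) + 1 from rfl] at hadd
    have hx1 : 1 ≤ pos n f ((u : ℕ) + 1) := one_le_pos h1 hs huK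
    have hxn : pos n f ((u : ℕ) + 1) ≤ n := pos_le_n h1 hs (by omega) huK
    have hfu : f ⟨(u : ℕ), u.isLt⟩ = j := by
      convert hu using 2
    have hxj : pos n f ((u : ℕ) + 1) + j = pos n f (u : ℕ) := by rw [← hfu]; exact hadd
    refine ⟨⟨hx1, hxn⟩, mem_sOf.2 ⟨(u : ℕ) + 1, by omega, huK, rfl⟩, ?_, ?_⟩
    · rcases Nat.eq_zero_or_pos (u : ℕ) with h0 | h0
      · right; rw [hxj, h0, pos_zero]
      · left; exact mem_sOf.2 ⟨(u : ℕ), h0, by omega, hxj.symm⟩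
    · intro m hm hms
      rw [Finset.mem_Ioo] at hm
      obtain ⟨a, ha1, haK, hpa⟩ := mem_sOf.1 hms
      have hlt : a < (u : ℕ) + 1 := by
        by_contra hcon
        push_neg at hcon
        have := pos_anti h1 hs (n := n) hcon haK
        omega
      have hgt : (u : ℕ) < a := by
        by_contra hcon
        push_neg at hcon
        have := pos_anti h1 hs (n := n) hcon (by omega : (u:ℕ) ≤ K)
        omega
      omega

include h1 hs in
lemma cycCount_sOf {j : ℕ} (hj : 1 ≤ j) :
    cycCount n (sOf n f) j = (Finset.univ.filter (fun u : Fin K => f u = j)).card := by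
  rw [cycCount, filter_cyc_eq h1 hs hj]
  apply Finset.card_image_of_injOn
  intro u hu v hv huv
  have h := pos_injOn (n := n) h1 hs
    (show ((u : ℕ) + 1 : ℕ) ∈ ((Finset.Icc 1 K : Finset ℕ) : Set ℕ) by
      simp [Finset.mem_Icc])
    (show ((v : ℕ) + 1 : ℕ) ∈ ((Finset.Icc 1 K : Finset ℕ) : Set ℕ) by
      simp [Finset.mem_Icc]) huv
  exact Fin.ext (by omega)

end C

/-- Every valid set of ones arises from a spacing function. -/
lemma exists_spacings (s : Finset ℕ) (hsub : s ⊆ Finset.Icc 1 n) (h1s : 1 ∈ s)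
    (hcard : s.card = K) (hK : 1 ≤ K) :
    ∃ f : Fin K → ℕ, (∀ t, 1 ≤ f t) ∧ (∑ t, f t = n) ∧ sOf n f = s := by
  set e := s.orderEmbOfFin hcard with he
  have hemem : ∀ v : Fin K, e v ∈ s := fun v => s.orderEmbOfFin_mem hcard v
  have hele : ∀ v : Fin K, 1 ≤ e v ∧ e v ≤ n := by
    intro v
    have := hsub (hemem v)
    rwa [Finset.mem_Icc] at this
  set q : ℕ → ℕ := fun i => if h : 1 ≤ i ∧ i ≤ K then e ⟨K - i, by omega⟩ else n + 1 - i
    with hq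
  have hq0 : q 0 = n + 1 := by simp [hq]
  have hqe : ∀ i (h1 : 1 ≤ i) (h2 : i ≤ K), q i = e ⟨K - i, by omega⟩ := by
    intro i hi1 hi2
    simp [hq, hi1, hi2]
  have hqmem : ∀ i, 1 ≤ i → i ≤ K → q i ∈ s := by
    intro i hi1 hi2
    rw [hqe i hi1 hi2]
    exact hemem _
  have hqK : q K = 1 := by
    rw [hqe K hK (le_refl K)]
    have h0 : e ⟨K - K, by omega⟩ = s.min' ⟨1, h1s⟩ := by
      have := Finset.orderEmbOfFin_zero hcard (by omega : 0 < K)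
      simpa [show K - K = 0 by omega] using this
    rw [h0]
    refine le_antisymm (Finset.min'_le s 1 h1s) ?_
    have := (hele ⟨K - K, by omega⟩)
    have hm := s.min'_mem ⟨1, h1s⟩
    have := hsub hm
    rw [Finset.mem_Icc] at this
    exact this.1
  have hdec : ∀ i, i < K → q (i + 1) < q i := by
    intro i hi
    rcases Nat.eq_zero_or_pos i with rfl | h0
    · rw [hq0, hqe 1 (by omega) (by omega)]
      have := (hele ⟨K - 1, by omega⟩).2
      omega
    · rw [hqe i h0 (by omega), hqe (i + 1) (by omega) (by omega)]
      have : (⟨K - (i + 1), by omega⟩ : Fin K) < ⟨K - i, by omega⟩ := by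
        simp [Fin.lt_def]; omega
      exact e.strictMono this
  set f : Fin K → ℕ := fun u => q u.val - q (u.val + 1) with hf
  have key : ∀ i, i ≤ K → psum f i + q i = n + 1 := by
    intro i
    induction i with
    | zero => intro _; rw [psum_zero, hq0]; omega
    | succ m ih =>
      intro h
      have hm : m < K := by omega
      rw [psum_succ f hm]
      have hd := hdec m hm
      have hih := ih (by omega)
      have hfm : f ⟨m, hm⟩ = q m - q (m + 1) := rfl
      omega
  have hsum : ∑ t, f t = n := by
    rw [← psum_K]
    have := key K (le_refl K)
    omega
  have hposq : ∀ i, i ≤ K → pos n f i = q i := by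
    intro i hi
    have := key i hi
    simp only [pos]
    omega
  refine ⟨f, fun u => ?_, hsum, ?_⟩
  · have := hdec u.val u.isLt
    show 1 ≤ q u.val - q (u.val + 1)
    omega
  · ext x
    rw [mem_sOf]
    constructor
    · rintro ⟨i, hi1, hi2, rfl⟩
      rw [hposq i hi2]
      exact hqmem i hi1 hi2
    · intro hx
      have : x ∈ Set.range e := by
        rw [he, Finset.range_orderEmbOfFin]
        exact hx
      obtain ⟨v, hv⟩ := this
      refine ⟨K - v.val, by omega, by omega, ?_⟩
      rw [hposq _ (by omega), hqe _ (by omega) (by omega)]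
      rw [show (⟨K - (K - v.val), by omega⟩ : Fin K) = v from Fin.ext (by simp; have := v.isLt; omega)]
      exact hv

/-- Uniqueness of the spacing function. -/
lemma spacings_unique {f g : Fin K → ℕ} (h1f : ∀ t, 1 ≤ f t) (hsf : ∑ t, f t = n)
    (h1g : ∀ t, 1 ≤ g t) (hsg : ∑ t, g t = n) (h : sOf n f = sOf n g) : f = g := by
  set F : Fin K → ℕ := fun v => pos n f (K - (v : ℕ)) with hF
  set G : Fin K → ℕ := fun v => pos n g (K - (v : ℕ)) with hG
  have hFmono : StrictMono F := by
    intro v v' hvv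
    exact pos_lt_pos h1f hsf (by have := v'.isLt; omega) (by omega)
  have hGmono : StrictMono G := by
    intro v v' hvv
    exact pos_lt_pos h1g hsg (by have := v'.isLt; omega) (by omega)
  have hFs : ∀ v, F v ∈ sOf n f := by
    intro v
    exact mem_sOf.2 ⟨K - (v : ℕ), by have := v.isLt; omega, by omega, rfl⟩
  have hGs : ∀ v, G v ∈ sOf n f := by
    intro v
    rw [h]
    exact mem_sOf.2 ⟨K - (v : ℕ), by have := v.isLt; omega, by omega, rfl⟩
  have hcf : (sOf n f).card = K := card_sOf h1f hsf
  have hFeq := Finset.orderEmbOfFin_unique hcf hFs hFmono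
  have hGeq := Finset.orderEmbOfFin_unique hcf hGs hGmono
  have hFG : F = G := hFeq.trans hGeq.symm
  have hpos : ∀ i, 1 ≤ i → i ≤ K → pos n f i = pos n g i := by
    intro i hi1 hi2
    have hv : K - (⟨K - i, by omega⟩ : Fin K).val = i := by simp; omega
    have := congrFun hFG ⟨K - i, by omega⟩
    rw [hF, hG] at this
    simpa [hv] using this
  have hps : ∀ i, i ≤ K → psum f i = psum g i := by
    intro i hi
    rcases Nat.eq_zero_or_pos i with rfl | h0
    · rw [psum_zero, psum_zero]
    · rw [psum_of_pos hsf, psum_of_pos hsg, hpos i h0 hi]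
  funext u
  have h1 := psum_succ f u.isLt
  have h2 := psum_succ g u.isLt
  have e1 := hps u.val (by have := u.isLt; omega)
  have e2 := hps (u.val + 1) u.isLt
  have hu : (⟨u.val, u.isLt⟩ : Fin K) = u := Fin.ext rfl
  rw [hu] at h1 h2
  omega

lemma sum_cycCount {n : ℕ} (s : Finset ℕ) (hsub : s ⊆ Finset.Icc 1 n) :
    ∑ j ∈ Finset.Icc 1 n, cycCount n s j = s.card := by
  classical
  have h1 : ∀ j, cycCount n s j = ∑ i ∈ Finset.Icc 1 n,
      if (i ∈ s ∧ (i + j ∈ s ∨ i + j = n + 1) ∧ ∀ m ∈ Finset.Ioo i (i + j), m ∉ s)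
      then 1 else 0 := by
    intro j
    rw [cycCount, Finset.card_filter]
  simp_rw [h1]
  rw [Finset.sum_comm]
  have h2 : ∀ i ∈ Finset.Icc 1 n, (∑ j ∈ Finset.Icc 1 n,
      if (i ∈ s ∧ (i + j ∈ s ∨ i + j = n + 1) ∧ ∀ m ∈ Finset.Ioo i (i + j), m ∉ s)
      then 1 else 0) = if i ∈ s then 1 else 0 := by
    intro i hi
    rw [Finset.mem_Icc] at hi
    by_cases his : i ∈ s
    · rw [if_pos his]
      -- the next element of s ∪ {n+1} above i
      have hne : ((insert (n + 1) s).filter (fun x => i < x)).Nonempty :=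
        ⟨n + 1, by simp [Finset.mem_filter]; omega⟩
      set m := ((insert (n + 1) s).filter (fun x => i < x)).min' hne with hm
      have hmmem := ((insert (n + 1) s).filter (fun x => i < x)).min'_mem hne
      rw [Finset.mem_filter, Finset.mem_insert] at hmmem
      have hmin : ∀ x ∈ insert (n + 1) s, i < x → m ≤ x := by
        intro x hx hix
        exact Finset.min'_le _ x (Finset.mem_filter.2 ⟨hx, hix⟩)
      have hmn : m ≤ n + 1 := by
        rcases hmmem.1 with h | h
        · omega
        · have := hsub h; rw [Finset.mem_Icc] at this; omega
      have hmi : i < m := hmmem.2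
      set j0 := m - i with hj0
      have hj0mem : j0 ∈ Finset.Icc 1 n := by
        rw [Finset.mem_Icc]
        omega
      rw [Finset.sum_eq_single_of_mem j0 hj0mem]
      · rw [if_pos]
        refine ⟨his, ?_, ?_⟩
        · rcases hmmem.1 with h | h
          · right; omega
          · left; rw [show i + j0 = m by omega]; exact h
        · intro x hx hxs
          rw [Finset.mem_Ioo] at hx
          have := hmin x (Finset.mem_insert_of_mem hxs) hx.1
          omega
      · intro j hj hjne
        rw [Finset.mem_Icc] at hj
        rw [if_neg]
        rintro ⟨-, hnext, hgap⟩
        have hijm : m ≤ i + j := by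
          rcases hnext with h | h
          · exact hmin _ (Finset.mem_insert_of_mem h) (by omega)
          · rw [h]; exact hmin _ (Finset.mem_insert_self _ _) (by omega)
        have hij1 : i + j ≤ n + 1 := by
          rcases hnext with h | h
          · have := hsub h; rw [Finset.mem_Icc] at this; omega
          · omega
        rcases Nat.lt_or_ge m (i + j) with hlt | hge
        · have hms : m ∈ s := by
            rcases hmmem.1 with h | h
            · omega
            · exact h
          exact hgap m (Finset.mem_Ioo.2 ⟨hmi, hlt⟩) hms
        · apply hjne
          omega
    · rw [if_neg his]
      apply Finset.sum_eq_zero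
      intro j hj
      rw [if_neg]
      rintro ⟨h, -⟩
      exact his h
  rw [Finset.sum_congr rfl h2, Finset.sum_ite_mem, Finset.sum_const]
  rw [Finset.inter_eq_right.2 hsub]
  simp
lemma factorial_eq_prod {n : ℕ} (hn : 1 ≤ n) :
    (((n - 1).factorial : ℕ) : ℝ) = ∏ i ∈ Finset.Icc 2 n, ((i : ℝ) - 1) := by
  have h1 : ∀ i ∈ Finset.Icc 2 n, ((i : ℝ) - 1) = (((i - 1 : ℕ)) : ℝ) := by
    intro i hi
    rw [Finset.mem_Icc] at hi
    push_cast [Nat.cast_sub (by omega : 1 ≤ i)]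
    ring
  rw [Finset.prod_congr rfl h1, ← Nat.cast_prod]
  congr 1
  rw [← Finset.prod_Ico_id_eq_factorial (n - 1), show (n - 1) + 1 = n by omega]
  apply Finset.prod_nbij' (fun i => i + 1) (fun j => j - 1)
  · intro a ha; simp only [Finset.mem_Icc, Finset.mem_Ico] at *; omega
  · intro a ha; simp only [Finset.mem_Icc, Finset.mem_Ico] at *; omega
  · intro a ha; simp only [Finset.mem_Icc, Finset.mem_Ico] at *; omega
  · intro a ha; simp only [Finset.mem_Icc, Finset.mem_Ico] at *; omega
  · intro a ha; omega

section B
variable {θ : ℕ → ℝ} (hθpos : ∀ i, 1 ≤ i → 0 < θ i)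
variable {f : Fin K → ℕ} (h1 : ∀ t, 1 ≤ f t) (hs : ∑ t, f t = n)

include h1 hs hθpos in
lemma prod_weights (hK : 1 ≤ K) (hn : 1 ≤ n) :
    ∏ i ∈ Finset.Icc 1 n,
      (if i ∈ sOf n f then θ i / ((i : ℝ) - 1 + θ i) else ((i : ℝ) - 1) / ((i : ℝ) - 1 + θ i))
    = (((n - 1).factorial : ℝ) / ∏ k ∈ Finset.Icc 1 n, ((k : ℝ) - 1 + θ k)) * θ 1
      * ∏ i ∈ Finset.Icc 1 (K - 1), θ (pos n f i) / ((pos n f i : ℝ) - 1) := by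
  classical
  set s := sOf n f with hsdef
  have hsub : s ⊆ Finset.Icc 1 n := sOf_subset h1 hs
  have h1s : (1 : ℕ) ∈ s := one_mem_sOf h1 hs hK
  -- each factor as a quotient
  have step1 : ∀ i ∈ Finset.Icc 1 n,
      (if i ∈ s then θ i / ((i : ℝ) - 1 + θ i) else ((i : ℝ) - 1) / ((i : ℝ) - 1 + θ i))
      = (if i ∈ s then θ i else ((i : ℝ) - 1)) / ((i : ℝ) - 1 + θ i) := by
    intro i _
    split_ifs <;> rfl
  rw [Finset.prod_congr rfl step1, Finset.prod_div_distrib, Finset.prod_ite]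
  have hfilter : (Finset.Icc 1 n).filter (fun i => i ∈ s) = s := by
    rw [Finset.filter_mem_eq_inter, Finset.inter_eq_right.2 hsub]
  -- numerator over s
  have hA : ∏ i ∈ (Finset.Icc 1 n).filter (fun i => i ∈ s), θ i
      = θ 1 * ∏ i ∈ Finset.Icc 1 (K - 1), θ (pos n f i) := by
    rw [hfilter, hsdef, sOf, Finset.prod_image (fun a ha b hb hab =>
      pos_injOn h1 hs (by simpa using ha) (by simpa using hb) hab)]
    have hins : Finset.Icc 1 K = insert K (Finset.Icc 1 (K - 1)) := by
      ext x
      simp only [Finset.mem_insert, Finset.mem_Icc]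
      omega
    rw [hins, Finset.prod_insert (by simp [Finset.mem_Icc]; omega), pos_K hs]
  -- the complement part
  have hsplit : Finset.Icc 2 n = ((Finset.Icc 1 n).filter (fun i => i ∉ s)) ∪ (s.erase 1) := by
    ext x
    simp only [Finset.mem_union, Finset.mem_filter, Finset.mem_Icc, Finset.mem_erase]
    constructor
    · intro hx
      by_cases hxs : x ∈ s
      · right; exact ⟨by omega, hxs⟩
      · left; exact ⟨⟨by omega, hx.2⟩, hxs⟩
    · rintro (⟨⟨hx1, hx2⟩, hxs⟩ | ⟨hx1, hxs⟩)
      · constructor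
        · rcases Nat.eq_or_lt_of_le hx1 with h | h
          · exact absurd (h ▸ h1s) hxs
          · omega
        · exact hx2
      · have := hsub hxs
        rw [Finset.mem_Icc] at this
        omega
  have hdisj : Disjoint ((Finset.Icc 1 n).filter (fun i => i ∉ s)) (s.erase 1) := by
    rw [Finset.disjoint_left]
    intro a ha hb
    rw [Finset.mem_filter] at ha
    exact ha.2 (Finset.mem_of_mem_erase hb)
  have herase : s.erase 1 = (Finset.Icc 1 (K - 1)).image (pos n f) := by
    ext x
    simp only [Finset.mem_erase, Finset.mem_image, Finset.mem_Icc]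
    constructor
    · rintro ⟨hx1, hxs⟩
      obtain ⟨i, hi1, hi2, rfl⟩ := mem_sOf.1 hxs
      refine ⟨i, ⟨hi1, ?_⟩, rfl⟩
      rcases Nat.eq_or_lt_of_le hi2 with h | h
      · exact absurd (h ▸ pos_K hs : pos n f i = 1) hx1
      · omega
    · rintro ⟨i, ⟨hi1, hi2⟩, rfl⟩
      have h2 := two_le_pos h1 hs hi2 hK
      exact ⟨by omega, mem_sOf.2 ⟨i, hi1, by omega, rfl⟩⟩
  have hB : (((n - 1).factorial : ℕ) : ℝ)
      = (∏ i ∈ (Finset.Icc 1 n).filter (fun i => i ∉ s), ((i : ℝ) - 1))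
        * ∏ i ∈ Finset.Icc 1 (K - 1), ((pos n f i : ℝ) - 1) := by
    rw [factorial_eq_prod hn, hsplit, Finset.prod_union hdisj]
    congr 1
    rw [herase, Finset.prod_image]
    intro a ha b hb hab
    simp only [Finset.mem_coe, Finset.mem_Icc] at ha hb
    exact pos_injOn h1 hs (by simp [Finset.mem_Icc]; omega) (by simp [Finset.mem_Icc]; omega) hab
  -- denominators nonzero
  have hDpos : ∀ k ∈ Finset.Icc 1 n, (0 : ℝ) < (k : ℝ) - 1 + θ k := by
    intro k hk
    rw [Finset.mem_Icc] at hk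
    have h2 := hθpos k hk.1
    have : (1 : ℝ) ≤ (k : ℝ) := by exact_mod_cast hk.1
    linarith
  have hDne : (∏ k ∈ Finset.Icc 1 n, ((k : ℝ) - 1 + θ k)) ≠ 0 :=
    ne_of_gt (Finset.prod_pos hDpos)
  have hPne : (∏ i ∈ Finset.Icc 1 (K - 1), ((pos n f i : ℝ) - 1)) ≠ 0 := by
    apply ne_of_gt
    apply Finset.prod_pos
    intro i hi
    rw [Finset.mem_Icc] at hi
    have := two_le_pos h1 hs (n := n) hi.2 hK
    have : (2 : ℝ) ≤ (pos n f i : ℝ) := by exact_mod_cast this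
    linarith
  rw [hA, hB]
  rw [Finset.prod_div_distrib]
  field_simp
end B
/-- Number of permutations `σ` with `cbar ∘ σ = f`, when the fibers match in size. -/
lemma card_realize (cbar f : Fin K → ℕ)
    (hcount : ∀ j : ℕ, (Finset.univ.filter (fun u : Fin K => f u = j)).card
      = (Finset.univ.filter (fun u : Fin K => cbar u = j)).card) :
    (Finset.univ.filter (fun σ : Equiv.Perm (Fin K) => cbar ∘ σ = f)).card
    = ∏ j ∈ Finset.univ.image f, ((Finset.univ.filter (fun u : Fin K => f u = j)).card).factorial := by
  classical
  have hcard' : ∀ j : ℕ, Fintype.card {u : Fin K // f u = j}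
      = Fintype.card {u : Fin K // cbar u = j} := by
    intro j
    rw [Fintype.card_subtype, Fintype.card_subtype]
    exact hcount j
  let g : ∀ j : ℕ, {u : Fin K // f u = j} ≃ {u : Fin K // cbar u = j} :=
    fun j => Fintype.equivOfCardEq (hcard' j)
  let σ0 : Equiv.Perm (Fin K) :=
    (Equiv.sigmaFiberEquiv f).symm.trans
      ((Equiv.sigmaCongrRight g).trans (Equiv.sigmaFiberEquiv cbar))
  have hσ0 : ∀ x, cbar (σ0 x) = f x := by
    intro x
    exact (g (f x) ⟨x, rfl⟩).prop
  have hinv : ∀ y, f (σ0⁻¹ y) = cbar y := by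
    intro y
    have := hσ0 (σ0⁻¹ y)
    rw [Equiv.Perm.coe_inv, Equiv.apply_symm_apply] at this
    exact this.symm
  have hiff : ∀ σ : Equiv.Perm (Fin K), (cbar ∘ σ = f) ↔ (f ∘ (σ0⁻¹ * σ) = f) := by
    intro σ
    constructor
    · intro h
      funext x
      simp only [Function.comp_apply, Equiv.Perm.mul_apply, hinv]
      exact congrFun h x
    · intro h
      funext x
      have := congrFun h x
      simp only [Function.comp_apply, Equiv.Perm.mul_apply, hinv] at this
      exact this
  have hbij : (Finset.univ.filter (fun σ : Equiv.Perm (Fin K) => cbar ∘ σ = f)).card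
      = (Finset.univ.filter (fun g : Equiv.Perm (Fin K) => f ∘ g = f)).card := by
    apply Finset.card_nbij (fun σ => σ0⁻¹ * σ)
    · intro σ hσ
      simp only [Finset.coe_filter, Set.mem_setOf_eq, Finset.mem_filter, Finset.mem_univ, true_and] at hσ ⊢
      exact (hiff σ).1 hσ
    · intro a ha b hb hab
      simpa using hab
    · intro b hb
      simp only [Finset.coe_filter, Finset.mem_univ, true_and, Set.mem_setOf_eq] at hb ⊢
      refine ⟨σ0 * b, ?_, by group⟩
      show cbar ∘ ⇑(σ0 * b) = f
      rw [hiff]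
      rwa [show σ0⁻¹ * (σ0 * b) = b by group]
  rw [hbij]
  have hd := DomMulAct.stabilizer_card' f
  rw [show (Finset.univ.filter (fun g : Equiv.Perm (Fin K) => f ∘ g = f)).card
      = Fintype.card {g : Equiv.Perm (Fin K) // f ∘ g = f} from (Fintype.card_subtype _).symm,
    hd]
  apply Finset.prod_congr rfl
  intro j _
  rw [Fintype.card_subtype]

/-- product appearing in the right-hand side. -/
noncomputable def rhsProd (n : ℕ) {K : ℕ} (θ : ℕ → ℝ) (g : Fin K → ℕ) : ℝ :=
  ∏ i ∈ Finset.Icc 1 (K - 1), θ (pos n g i) / ((pos n g i : ℝ) - 1)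

lemma main (n : ℕ) (hn : 1 ≤ n)
    (θ : ℕ → ℝ) (hθ1 : θ 1 = 1) (hθpos : ∀ i, 1 ≤ i → 0 < θ i)
    (c : ℕ → ℕ) (hc : ∑ j ∈ Finset.Icc 1 n, j * c j = n)
    (K : ℕ) (hK : K = ∑ j ∈ Finset.Icc 1 n, c j)
    (cbar : Fin K → ℕ) (hmono : Monotone cbar)
    (hrange : ∀ t : Fin K, 1 ≤ cbar t ∧ cbar t ≤ n)
    (hmult : ∀ j : ℕ, 1 ≤ j → j ≤ n →
      (Finset.univ.filter (fun t : Fin K => cbar t = j)).card = c j) :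
    ∑ s ∈ (Finset.Icc 1 n).powerset.filter
        (fun s => 1 ∈ s ∧ ∀ j ∈ Finset.Icc 1 n, cycCount n s j = c j),
      ∏ i ∈ Finset.Icc 1 n,
        (if i ∈ s then θ i / ((i : ℝ) - 1 + θ i) else ((i : ℝ) - 1) / ((i : ℝ) - 1 + θ i))
    = (((n - 1).factorial : ℝ) / ∏ k ∈ Finset.Icc 1 n, (θ k + (k : ℝ) - 1)) * θ 1
      * (∏ i ∈ Finset.Icc 1 n, 1 / ((c i).factorial : ℝ))
      * ∑ σ : Equiv.Perm (Fin K), ∏ i ∈ Finset.Icc 1 (K - 1),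
          θ (n + 1 - ∑ t ∈ Finset.univ.filter (fun t : Fin K => (t : ℕ) < i), cbar (σ t))
            / (((n + 1 - ∑ t ∈ Finset.univ.filter (fun t : Fin K => (t : ℕ) < i),
                  cbar (σ t) : ℕ) : ℝ) - 1) := by
  classical
  have hK1 : 1 ≤ K := by
    by_contra h
    have hK0 : ∑ j ∈ Finset.Icc 1 n, c j = 0 := by omega
    have hall : ∀ j ∈ Finset.Icc 1 n, c j = 0 := Finset.sum_eq_zero_iff.1 hK0
    rw [Finset.sum_congr rfl (fun j hj => by rw [hall j hj, mul_zero])] at hc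
    simp at hc
    omega
  have hcsum : ∑ t : Fin K, cbar t = n := by
    rw [← Finset.sum_fiberwise_of_maps_to (g := cbar)
      (fun t _ => Finset.mem_Icc.2 ⟨(hrange t).1, (hrange t).2⟩) cbar]
    calc ∑ j ∈ Finset.Icc 1 n, ∑ t ∈ Finset.univ.filter (fun t => cbar t = j), cbar t
        = ∑ j ∈ Finset.Icc 1 n, j * c j := by
          apply Finset.sum_congr rfl
          intro j hj
          rw [Finset.mem_Icc] at hj
          rw [Finset.sum_congr rfl (fun t ht => (Finset.mem_filter.1 ht).2),
            Finset.sum_const, hmult j hj.1 hj.2]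
          simp [mul_comm]
      _ = n := hc
  set M : ℕ := ∏ j ∈ Finset.Icc 1 n, (c j).factorial with hM
  set Cθ : ℝ := (((n - 1).factorial : ℝ) / ∏ k ∈ Finset.Icc 1 n, ((k : ℝ) - 1 + θ k)) * θ 1
    with hCθ
  have hfprop : ∀ σ : Equiv.Perm (Fin K),
      (∀ t : Fin K, 1 ≤ (fun t => cbar (σ t)) t) ∧ (∑ t, (fun t => cbar (σ t)) t) = n := by
    intro σ
    refine ⟨fun t => (hrange (σ t)).1, ?_⟩
    simp only
    rw [Equiv.sum_comp σ cbar]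
    exact hcsum
  set V := (Finset.Icc 1 n).powerset.filter
      (fun s => 1 ∈ s ∧ ∀ j ∈ Finset.Icc 1 n, cycCount n s j = c j) with hV
  have hΦmem : ∀ σ : Equiv.Perm (Fin K), sOf n (fun t => cbar (σ t)) ∈ V := by
    intro σ
    obtain ⟨h1f, hsf⟩ := hfprop σ
    rw [hV, Finset.mem_filter, Finset.mem_powerset]
    refine ⟨sOf_subset h1f hsf, one_mem_sOf h1f hsf hK1, ?_⟩
    intro j hj
    rw [Finset.mem_Icc] at hj
    rw [cycCount_sOf h1f hsf hj.1, ← hmult j hj.1 hj.2]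
    apply Finset.card_nbij (fun u => σ u)
    · intro u hu
      simp only [Finset.mem_coe, Finset.mem_filter, Finset.mem_univ, true_and] at hu ⊢
      exact hu
    · intro a _ b _ hab
      exact σ.injective hab
    · intro b hb
      simp only [Finset.coe_filter, Finset.mem_univ, true_and, Set.mem_setOf_eq,
        Set.mem_image] at hb ⊢
      exact ⟨σ.symm b, by simpa using hb, by simp⟩
  -- the key per-fiber identity
  have main_s : ∀ s ∈ V, (M : ℝ) *
      (∏ i ∈ Finset.Icc 1 n,
        (if i ∈ s then θ i / ((i : ℝ) - 1 + θ i) else ((i : ℝ) - 1) / ((i : ℝ) - 1 + θ i)))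
      = Cθ * ∑ σ ∈ Finset.univ.filter
          (fun σ : Equiv.Perm (Fin K) => sOf n (fun t => cbar (σ t)) = s),
          rhsProd n θ (fun t => cbar (σ t)) := by
    intro s hs
    have hs' := hs
    rw [hV, Finset.mem_filter, Finset.mem_powerset] at hs'
    obtain ⟨hsub, h1s, hcyc⟩ := hs'
    have hcard : s.card = K := by
      rw [← sum_cycCount s hsub, Finset.sum_congr rfl hcyc, hK]
    obtain ⟨f, h1f, hsf, hset⟩ := exists_spacings s hsub h1s hcard hK1
    -- each σ in the fiber realizes f
    have hfeq : ∀ σ : Equiv.Perm (Fin K), sOf n (fun t => cbar (σ t)) = s →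
        (fun t => cbar (σ t)) = f := by
      intro σ hσ
      exact spacings_unique (hfprop σ).1 (hfprop σ).2 h1f hsf (by rw [hσ, hset])
    have hfeq' : ∀ σ : Equiv.Perm (Fin K), (fun t => cbar (σ t)) = f →
        sOf n (fun t => cbar (σ t)) = s := by
      intro σ hσ
      rw [show sOf n (fun t => cbar (σ t)) = sOf n f from by rw [hσ], hset]
    -- fiber sum is constant
    have hconst : ∑ σ ∈ Finset.univ.filter
          (fun σ : Equiv.Perm (Fin K) => sOf n (fun t => cbar (σ t)) = s),
          rhsProd n θ (fun t => cbar (σ t))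
        = (Finset.univ.filter
          (fun σ : Equiv.Perm (Fin K) => sOf n (fun t => cbar (σ t)) = s)).card
          * rhsProd n θ f := by
      rw [Finset.sum_congr rfl (fun σ hσ => by
        rw [hfeq σ (Finset.mem_filter.1 hσ).2]), Finset.sum_const, nsmul_eq_mul]
    -- the fiber has cardinality M
    have hcj : ∀ j, 1 ≤ j → j ≤ n → (Finset.univ.filter (fun u : Fin K => f u = j)).card = c j := by
      intro j hj1 hj2
      rw [← cycCount_sOf h1f hsf hj1, hset, hcyc j (Finset.mem_Icc.2 ⟨hj1, hj2⟩)]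
    have hfle : ∀ u, f u ≤ n := by
      intro u
      calc f u ≤ ∑ t, f t := Finset.single_le_sum (fun t _ => Nat.zero_le _) (Finset.mem_univ u)
        _ = n := hsf
    have hcount : ∀ j : ℕ, (Finset.univ.filter (fun u : Fin K => f u = j)).card
        = (Finset.univ.filter (fun u : Fin K => cbar u = j)).card := by
      intro j
      by_cases hj : 1 ≤ j ∧ j ≤ n
      · rw [hcj j hj.1 hj.2, ← hmult j hj.1 hj.2]
      · rw [Finset.filter_false_of_mem, Finset.filter_false_of_mem]
        · intro u _
          have := (hrange u).1
          have := (hrange u).2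
          omega
        · intro u _
          have := h1f u
          have := hfle u
          omega
    have hfiber : (Finset.univ.filter
        (fun σ : Equiv.Perm (Fin K) => sOf n (fun t => cbar (σ t)) = s)).card = M := by
      have hfilt : Finset.univ.filter
          (fun σ : Equiv.Perm (Fin K) => sOf n (fun t => cbar (σ t)) = s)
          = Finset.univ.filter (fun σ : Equiv.Perm (Fin K) => cbar ∘ σ = f) := by
        apply Finset.filter_congr
        intro σ _
        constructor
        · intro h; exact hfeq σ h
        · intro h; exact hfeq' σ h
      rw [hfilt, card_realize cbar f hcount]
      have himage : Finset.univ.image f ⊆ Finset.Icc 1 n := by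
        intro j hj
        obtain ⟨u, _, rfl⟩ := Finset.mem_image.1 hj
        exact Finset.mem_Icc.2 ⟨h1f u, hfle u⟩
      rw [hM, ← Finset.prod_subset himage]
      · apply Finset.prod_congr rfl
        intro j hj
        obtain ⟨u, _, rfl⟩ := Finset.mem_image.1 hj
        rw [hcj (f u) (h1f u) (hfle u)]
      · intro j hj hjn
        have : (Finset.univ.filter (fun u : Fin K => f u = j)).card = 0 := by
          rw [Finset.card_eq_zero, Finset.filter_eq_empty_iff]
          intro u _
          intro hf
          exact hjn (Finset.mem_image.2 ⟨u, Finset.mem_univ u, hf⟩)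
        rw [hcj j (Finset.mem_Icc.1 hj).1 (Finset.mem_Icc.1 hj).2] at this
        rw [this]
        rfl
    -- weight product
    have hW := prod_weights hθpos h1f hsf hK1 hn
    rw [hset] at hW
    rw [hW, hconst, hfiber]
    rw [show (∏ i ∈ Finset.Icc 1 (K - 1), θ (pos n f i) / ((pos n f i : ℝ) - 1))
      = rhsProd n θ f from rfl]
    rw [hCθ]
    ring
  -- assemble
  have hsumG : (∑ σ : Equiv.Perm (Fin K), rhsProd n θ (fun t => cbar (σ t)))
      = ∑ s ∈ V, ∑ σ ∈ Finset.univ.filter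
          (fun σ : Equiv.Perm (Fin K) => sOf n (fun t => cbar (σ t)) = s),
          rhsProd n θ (fun t => cbar (σ t)) :=
    (Finset.sum_fiberwise_of_maps_to (fun σ _ => hΦmem σ) _).symm
  have hMpos : 0 < M := Finset.prod_pos (fun j _ => Nat.factorial_pos _)
  have hMne : (M : ℝ) ≠ 0 := Nat.cast_ne_zero.2 (by omega)
  have hLHS : (M : ℝ) * (∑ s ∈ V, ∏ i ∈ Finset.Icc 1 n,
        (if i ∈ s then θ i / ((i : ℝ) - 1 + θ i) else ((i : ℝ) - 1) / ((i : ℝ) - 1 + θ i)))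
      = Cθ * ∑ σ : Equiv.Perm (Fin K), rhsProd n θ (fun t => cbar (σ t)) := by
    rw [Finset.mul_sum, Finset.sum_congr rfl main_s, hsumG, Finset.mul_sum]
  -- rewrite the statement RHS
  have hGrw : (∑ σ : Equiv.Perm (Fin K), ∏ i ∈ Finset.Icc 1 (K - 1),
          θ (n + 1 - ∑ t ∈ Finset.univ.filter (fun t : Fin K => (t : ℕ) < i), cbar (σ t))
            / (((n + 1 - ∑ t ∈ Finset.univ.filter (fun t : Fin K => (t : ℕ) < i),
                  cbar (σ t) : ℕ) : ℝ) - 1))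
      = ∑ σ : Equiv.Perm (Fin K), rhsProd n θ (fun t => cbar (σ t)) := rfl
  rw [hGrw]
  have hprodD : (∏ k ∈ Finset.Icc 1 n, (θ k + (k : ℝ) - 1))
      = ∏ k ∈ Finset.Icc 1 n, ((k : ℝ) - 1 + θ k) :=
    Finset.prod_congr rfl (fun k _ => by ring)
  have hMcast : (M : ℝ) = ∏ i ∈ Finset.Icc 1 n, ((c i).factorial : ℝ) := by
    rw [hM]
    push_cast
    rfl
  have hinvM : (∏ i ∈ Finset.Icc 1 n, 1 / ((c i).factorial : ℝ)) = 1 / (M : ℝ) := by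
    simp only [one_div]
    rw [hMcast]
    exact Finset.prod_inv_distrib _
  rw [hprodD, hinvM]
  calc ∑ s ∈ V, ∏ i ∈ Finset.Icc 1 n,
        (if i ∈ s then θ i / ((i : ℝ) - 1 + θ i) else ((i : ℝ) - 1) / ((i : ℝ) - 1 + θ i))
      = (M : ℝ)⁻¹ * ((M : ℝ) * ∑ s ∈ V, ∏ i ∈ Finset.Icc 1 n,
        (if i ∈ s then θ i / ((i : ℝ) - 1 + θ i) else ((i : ℝ) - 1) / ((i : ℝ) - 1 + θ i))) := by
        field_simp
    _ = (M : ℝ)⁻¹ * (Cθ * ∑ σ : Equiv.Perm (Fin K), rhsProd n θ (fun t => cbar (σ t))) := by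
        rw [hLHS]
    _ = (((n - 1).factorial : ℝ) / ∏ k ∈ Finset.Icc 1 n, ((k : ℝ) - 1 + θ k)) * θ 1
        * (1 / (M : ℝ))
        * ∑ σ : Equiv.Perm (Fin K), rhsProd n θ (fun t => cbar (σ t)) := by
        rw [hCθ]
        ring

end Stmt12Aux

/-- joint distribution of the cycle counts of the generalized Feller
coupling `(Y_n, …, Y_1)` with `P(Y_i = 1) = θ_i/(i-1+θ_i)`. -/
theorem stmt12 (n : ℕ) (hn : 1 ≤ n)
    (θ : ℕ → ℝ) (hθ1 : θ 1 = 1) (hθpos : ∀ i, 1 ≤ i → 0 < θ i)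
    (c : ℕ → ℕ) (hc : ∑ j ∈ Finset.Icc 1 n, j * c j = n)
    (K : ℕ) (hK : K = ∑ j ∈ Finset.Icc 1 n, c j)
    (cbar : Fin K → ℕ) (hmono : Monotone cbar)
    (hrange : ∀ t : Fin K, 1 ≤ cbar t ∧ cbar t ≤ n)
    (hmult : ∀ j : ℕ, 1 ≤ j → j ≤ n →
      (Finset.univ.filter (fun t : Fin K => cbar t = j)).card = c j) :
    ∑ s ∈ (Finset.Icc 1 n).powerset.filter
        (fun s => 1 ∈ s ∧ ∀ j ∈ Finset.Icc 1 n, cycCount n s j = c j),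
      ∏ i ∈ Finset.Icc 1 n,
        (if i ∈ s then θ i / ((i : ℝ) - 1 + θ i) else ((i : ℝ) - 1) / ((i : ℝ) - 1 + θ i))
    = (((n - 1).factorial : ℝ) / ∏ k ∈ Finset.Icc 1 n, (θ k + (k : ℝ) - 1)) * θ 1
      * (∏ i ∈ Finset.Icc 1 n, 1 / ((c i).factorial : ℝ))
      * ∑ σ : Equiv.Perm (Fin K), ∏ i ∈ Finset.Icc 1 (K - 1),
          θ (n + 1 - ∑ t ∈ Finset.univ.filter (fun t : Fin K => (t : ℕ) < i), cbar (σ t))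
            / (((n + 1 - ∑ t ∈ Finset.univ.filter (fun t : Fin K => (t : ℕ) < i),
                  cbar (σ t) : ℕ) : ℝ) - 1) :=
  Stmt12Aux.main n hn θ hθ1 hθpos c hc K hK cbar hmono hrange hmult
end

section
/- Let p : ℕ → ℝ satisfy p(1) = 0, p(2) = 1, 0 < p(i) < 1 for all i ≥ 3, q(i) := 1 − p(i), and suppose Σ_{j=1}^{∞} p(j) = ∞. Then for every i ≥ 3 the limit φ_i := lim_{m→∞} Σ_{j=0}^{m} (−1)^j Π_{l=i}^{i+j} q(l) exists and satisfies 0 < q(i)·p(i+1) < φ_i < q(i) < 1; in particular 0 < φ_i < 1. -/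
open Finset Filter

/-- existence and bounds for the limiting marginal probabilities
`φ_i = lim_n P(X_i^{n,p} = 1)` of the random-derangement chain. -/
theorem stmt13 (p q : ℕ → ℝ)
    (hp1 : p 1 = 0) (hp2 : p 2 = 1) (hp : ∀ i, 3 ≤ i → 0 < p i ∧ p i < 1)
    (hq : ∀ i, q i = 1 - p i)
    (hdiv : Tendsto (fun N : ℕ => ∑ j ∈ Finset.Icc 1 N, p j) atTop atTop) :
    ∀ i : ℕ, 3 ≤ i → ∃ φ : ℝ,
      Tendsto (fun m : ℕ => ∑ j ∈ Finset.range (m + 1),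
          (-1 : ℝ) ^ j * ∏ l ∈ Finset.Icc i (i + j), q l) atTop (nhds φ) ∧
      0 < q i * p (i + 1) ∧ q i * p (i + 1) < φ ∧ φ < q i ∧ q i < 1 := by
  intro i hi
  -- basic facts about q
  have hq01 : ∀ l, 3 ≤ l → 0 < q l ∧ q l < 1 := by
    intro l hl
    obtain ⟨h1, h2⟩ := hp l hl
    constructor <;> [rw [hq]; rw [hq]] <;> linarith
  set a : ℕ → ℝ := fun j => ∏ l ∈ Finset.Icc i (i + j), q l with ha
  have hapos : ∀ j, 0 < a j := by
    intro j
    apply Finset.prod_pos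
    intro l hl
    exact (hq01 l (le_trans hi (Finset.mem_Icc.mp hl).1)).1
  have hsucc : ∀ j, a (j + 1) = a j * q (i + (j + 1)) := by
    intro j
    simp only [ha]
    rw [show i + (j + 1) = (i + j) + 1 by ring,
      Finset.prod_Icc_succ_top (by omega) q]
  have hqlt : ∀ j : ℕ, q (i + j) < 1 := fun j => (hq01 _ (by omega)).2
  have hanti : Antitone a := by
    apply antitone_nat_of_succ_le
    intro j
    rw [hsucc]
    nth_rewrite 2 [show a j = a j * 1 by ring]
    exact mul_le_mul_of_nonneg_left (hqlt (j + 1)).le (hapos j).le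
  -- p is nonneg on [1, ∞)
  have hpnn : ∀ l, 1 ≤ l → 0 ≤ p l := by
    intro l hl
    rcases Nat.lt_or_ge l 3 with h | h
    · interval_cases l
      · simp [hp1]
      · simp [hp2]
    · exact (hp l h).1.le
  -- sum over Icc i (i+j) tends to infinity
  have hsplit : ∀ j : ℕ, ∑ l ∈ Finset.Icc 1 (i - 1), p l + ∑ l ∈ Finset.Icc i (i + j), p l
      = ∑ l ∈ Finset.Icc 1 (i + j), p l := by
    intro j
    have h1 : Finset.Icc 1 (i - 1) = Finset.Ioc 0 (i - 1) := by
      ext x; simp [Nat.lt_iff_add_one_le]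
    have h2 : Finset.Icc i (i + j) = Finset.Ioc (i - 1) (i + j) := by
      ext x; simp; omega
    have h3 : Finset.Icc 1 (i + j) = Finset.Ioc 0 (i + j) := by
      ext x; simp [Nat.lt_iff_add_one_le]
    rw [h1, h2, h3, Finset.sum_Ioc_consecutive _ (by omega) (by omega)]
  have hsum : Tendsto (fun j : ℕ => ∑ l ∈ Finset.Icc i (i + j), p l) atTop atTop := by
    have h1 : Tendsto (fun j : ℕ => ∑ l ∈ Finset.Icc 1 (i + j), p l) atTop atTop := by
      apply hdiv.comp
      exact tendsto_atTop_mono (fun j => Nat.le_add_left j i) tendsto_id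
    have h2 : (fun j : ℕ => ∑ l ∈ Finset.Icc i (i + j), p l)
        = fun j : ℕ => ∑ l ∈ Finset.Icc 1 (i + j), p l + -(∑ l ∈ Finset.Icc 1 (i - 1), p l) := by
      funext j
      rw [← hsplit j]; ring
    rw [h2]
    exact tendsto_atTop_add_const_right _ _ h1
  -- a tends to zero
  have haexp : ∀ j, a j ≤ Real.exp (-(∑ l ∈ Finset.Icc i (i + j), p l)) := by
    intro j
    have : a j ≤ ∏ l ∈ Finset.Icc i (i + j), Real.exp (-(p l)) := by
      apply Finset.prod_le_prod
      · intro l hl; exact (hq01 l (le_trans hi (Finset.mem_Icc.mp hl).1)).1.le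
      · intro l hl
        rw [hq]
        linarith [Real.add_one_le_exp (-(p l))]
    rw [← Real.exp_sum] at this
    rwa [show (∑ l ∈ Finset.Icc i (i + j), -p l) = -∑ l ∈ Finset.Icc i (i + j), p l by rw [Finset.sum_neg_distrib]] at this
  have ha0 : Tendsto a atTop (nhds 0) := by
    apply tendsto_of_tendsto_of_tendsto_of_le_of_le (tendsto_const_nhds (x := (0:ℝ)))
      (Real.tendsto_exp_neg_atTop_nhds_zero.comp hsum)
    · intro j; exact (hapos j).le
    · intro j; exact haexp j
  -- alternating series convergence
  obtain ⟨φ, hφ⟩ := hanti.tendsto_alternating_series_of_tendsto_zero ha0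
  refine ⟨φ, ?_, ?_, ?_, ?_, ?_⟩
  · exact hφ.comp (tendsto_add_atTop_nat 1)
  · have h1 : 0 < q i := (hq01 i hi).1
    have h2 : 0 < p (i + 1) := (hp (i + 1) (by omega)).1
    positivity
  · -- q i * p (i+1) < φ : use lower bound from range 4
    have hlb := hanti.alternating_series_le_tendsto hφ 2
    have hS4 : ∑ j ∈ Finset.range (2 * 2), (-1 : ℝ) ^ j * a j
        = a 0 - a 1 + (a 2 - a 3) := by
      norm_num [Finset.sum_range_succ]; ring
    have ha01 : a 0 - a 1 = q i * p (i + 1) := by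
      have h0 : a 0 = q i := by simp [ha]
      have h1 : a 1 = q i * q (i + 1) := by
        rw [show (1:ℕ) = 0 + 1 from rfl, hsucc 0, h0]
      rw [h0, h1, hq (i + 1)]; ring
    have h23 : a 3 < a 2 := by
      rw [show (3:ℕ) = 2 + 1 from rfl, hsucc 2]
      nth_rewrite 2 [show a 2 = a 2 * 1 by ring]
      exact mul_lt_mul_of_pos_left (hqlt 3) (hapos 2)
    rw [hS4, ha01] at hlb
    linarith
  · -- φ < q i : use upper bound from range 3
    have hub := hanti.tendsto_le_alternating_series hφ 1
    have hS3 : ∑ j ∈ Finset.range (2 * 1 + 1), (-1 : ℝ) ^ j * a j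
        = a 0 - (a 1 - a 2) := by
      norm_num [Finset.sum_range_succ]; ring
    have h0 : a 0 = q i := by simp [ha]
    have h12 : a 2 < a 1 := by
      rw [show (2:ℕ) = 1 + 1 from rfl, hsucc 1]
      nth_rewrite 2 [show a 1 = a 1 * 1 by ring]
      exact mul_lt_mul_of_pos_left (hqlt 2) (hapos 1)
    rw [hS3, h0] at hub
    linarith
  · rw [hq]; linarith [(hp i hi).1]
end

section
/- Let p : ℕ → ℝ satisfy p(1) = 0, p(2) = 1, 0 < p(i) < 1 for i ≥ 3, q(i) := 1 − p(i), and Σ_{j=1}^{∞} p(j) = ∞, so that φ_i := lim_{m→∞} Σ_{j=0}^{m} (−1)^j Π_{l=i}^{i+j} q(l) exists for each i ≥ 3, with φ_1 := 1, φ_2 := 0, and 0 < φ_i < 1 for i ≥ 3. For n ≥ 1 and a : {1,…,n} → {0,1} define: μ_n(a) := Π_{i=1}^{n−1} t_i(a) if a(1) = 1, a(n) = 0 and a has no two adjacent 1s (with t_i(a) = 1 if a(i+1) = 1, t_i(a) = p(i) if a(i+1) = a(i) = 0, t_i(a) = q(i) if a(i+1) = 0, a(i) = 1), and μ_n(a)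 := 0 otherwise; ρ_n(a) := Π_{i=1}^{n−1} r_i(a) if a(1) = 1 and a has no two adjacent 1s (with r_i(a) = 1 if a(i) = 1, r_i(a) = φ_{i+1}/(1−φ_i) if a(i) = 0 and a(i+1) = 1, r_i(a) = 1 − φ_{i+1}/(1−φ_i) if a(i) = a(i+1) = 0), and ρ_n(a) := 0 otherwise. Then for every n ≥ 2, (1/2)·Σ_{a ∈ {0,1}^{{1,…,n}}} |ρ_n(a) − μ_n(a)| = φ_n; that is, the total variation distance between the law of the first n steps of the limiting infinite chain X^{∞,p} and the law of X^{n,p} equals φ_n. -/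
open Finset Filter

/-- Mass function of the first `n` steps of the random-derangement chain `X^{n,p}` on
binary strings of length `n`, encoded by the set of `1`-positions. -/
noncomputable def muTV (p q : ℕ → ℝ) (n : ℕ) (s : Finset ℕ) : ℝ :=
  if 1 ∈ s ∧ n ∉ s ∧ ∀ i ∈ s, i + 1 ∉ s then
    ∏ i ∈ Finset.Icc 1 (n - 1), (if i + 1 ∈ s then 1 else if i ∈ s then q i else p i)
  else 0

/-- Mass function of the first `n` coordinates of the limiting infinite chain `X^{∞,p}`. -/
noncomputable def rhoTV (φ : ℕ → ℝ) (n : ℕ) (s : Finset ℕ) : ℝ :=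
  if 1 ∈ s ∧ ∀ i ∈ s, i + 1 ∉ s then
    ∏ i ∈ Finset.Icc 1 (n - 1),
      (if i ∈ s then 1
       else if i + 1 ∈ s then φ (i + 1) / (1 - φ i)
       else 1 - φ (i + 1) / (1 - φ i))
  else 0

noncomputable def Rpr (φ : ℕ → ℝ) (n : ℕ) (s : Finset ℕ) : ℝ :=
  ∏ i ∈ Finset.Icc 1 (n - 1),
      (if i ∈ s then 1
       else if i + 1 ∈ s then φ (i + 1) / (1 - φ i)
       else 1 - φ (i + 1) / (1 - φ i))

noncomputable def Mpr (p q : ℕ → ℝ) (n : ℕ) (s : Finset ℕ) : ℝ :=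
  ∏ i ∈ Finset.Icc 1 (n - 1), (if i + 1 ∈ s then 1 else if i ∈ s then q i else p i)

lemma Icc_succ (n : ℕ) (hn : 1 ≤ n) :
    Finset.Icc 1 (n+1) = insert (n+1) (Finset.Icc 1 n) := by
  ext x; simp [Finset.mem_Icc, Finset.mem_insert]; omega

lemma Rpr_succ (φ : ℕ → ℝ) (n : ℕ) (hn : 1 ≤ n) (s : Finset ℕ) :
    Rpr φ (n+1) s = Rpr φ n s *
      (if n ∈ s then 1
       else if n + 1 ∈ s then φ (n + 1) / (1 - φ n)
       else 1 - φ (n + 1) / (1 - φ n)) := by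
  unfold Rpr
  rw [show n + 1 - 1 = (n-1) + 1 by omega, Finset.prod_Icc_succ_top (by omega),
    Nat.sub_add_cancel hn]

lemma Mpr_succ (p q : ℕ → ℝ) (n : ℕ) (hn : 1 ≤ n) (s : Finset ℕ) :
    Mpr p q (n+1) s = Mpr p q n s *
      (if n + 1 ∈ s then 1 else if n ∈ s then q n else p n) := by
  unfold Mpr
  rw [show n + 1 - 1 = (n-1) + 1 by omega, Finset.prod_Icc_succ_top (by omega),
    Nat.sub_add_cancel hn]

lemma Rpr_insert (φ : ℕ → ℝ) (n : ℕ) (t : Finset ℕ) :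
    Rpr φ n (insert (n+1) t) = Rpr φ n t := by
  unfold Rpr
  refine Finset.prod_congr rfl fun i hi => ?_
  simp only [Finset.mem_Icc] at hi
  have h1 : ¬ (i = n + 1) := by omega
  have h2 : ¬ (i + 1 = n + 1) := by omega
  simp [Finset.mem_insert, h1, h2, show i ≠ n by omega]

lemma Mpr_insert (p q : ℕ → ℝ) (n : ℕ) (t : Finset ℕ) :
    Mpr p q n (insert (n+1) t) = Mpr p q n t := by
  unfold Mpr
  refine Finset.prod_congr rfl fun i hi => ?_
  simp only [Finset.mem_Icc] at hi
  have h1 : ¬ (i = n + 1) := by omega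
  have h2 : ¬ (i + 1 = n + 1) := by omega
  simp [Finset.mem_insert, h1, h2, show i ≠ n by omega]

lemma valid_insert (n : ℕ) (hn : 1 ≤ n) (t : Finset ℕ) (ht : t ⊆ Finset.Icc 1 n) :
    ((1 ∈ insert (n+1) t ∧ ∀ i ∈ insert (n+1) t, i + 1 ∉ insert (n+1) t)
      ↔ ((1 ∈ t ∧ ∀ i ∈ t, i + 1 ∉ t) ∧ n ∉ t)) := by
  constructor
  · rintro ⟨h1, h2⟩
    have h1' : 1 ∈ t := by
      rcases Finset.mem_insert.1 h1 with h | h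
      · omega
      · exact h
    refine ⟨⟨h1', fun i hi => ?_⟩, fun hnt => ?_⟩
    · intro hmem
      exact h2 i (Finset.mem_insert_of_mem hi) (Finset.mem_insert_of_mem hmem)
    · exact h2 n (Finset.mem_insert_of_mem hnt) (Finset.mem_insert_self _ _)
  · rintro ⟨⟨h1, h2⟩, hnt⟩
    refine ⟨Finset.mem_insert_of_mem h1, fun i hi hmem => ?_⟩
    rcases Finset.mem_insert.1 hi with rfl | hi
    · rcases Finset.mem_insert.1 hmem with h | h
      · omega
      · have := Finset.mem_Icc.1 (ht h); omega
    · rcases Finset.mem_insert.1 hmem with h | h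
      · exact hnt (by rwa [show i = n by omega] at hi)
      · exact h2 i hi h

lemma sumR (φ : ℕ → ℝ) (hφ1 : φ 1 = 1) (hφ2 : φ 2 = 0)
    (hlt : ∀ i, 2 ≤ i → φ i ≠ 1) :
    ∀ n, 1 ≤ n →
      ((∑ s ∈ (Finset.Icc 1 n).powerset,
        if (1 ∈ s ∧ ∀ i ∈ s, i + 1 ∉ s) ∧ n ∈ s then Rpr φ n s else 0) = φ n) ∧
      ((∑ s ∈ (Finset.Icc 1 n).powerset,
        if (1 ∈ s ∧ ∀ i ∈ s, i + 1 ∉ s) ∧ n ∉ s then Rpr φ n s else 0) = 1 - φ n) := by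
  intro n hn
  induction n, hn using Nat.le_induction with
  | base =>
      constructor
      all_goals
        rw [Finset.Icc_self, show ({1} : Finset ℕ) = insert 1 ∅ from rfl,
          Finset.sum_powerset_insert (by simp), Finset.powerset_empty,
          Finset.sum_singleton, Finset.sum_singleton]
        simp [Rpr, hφ1]
  | succ n hn ih =>
      have hnotmem : (n+1) ∉ Finset.Icc 1 n := by simp
      constructor
      · rw [Icc_succ n hn, Finset.sum_powerset_insert hnotmem]
        have e1 : (∑ t ∈ (Finset.Icc 1 n).powerset,
            if (1 ∈ t ∧ ∀ i ∈ t, i + 1 ∉ t) ∧ n + 1 ∈ t then Rpr φ (n+1) t else 0) = 0 := by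
          refine Finset.sum_eq_zero fun t ht => ?_
          have hts := Finset.mem_powerset.1 ht
          have : n + 1 ∉ t := fun h => by have := Finset.mem_Icc.1 (hts h); omega
          simp [this]
        have e2 : (∑ t ∈ (Finset.Icc 1 n).powerset,
            if (1 ∈ insert (n+1) t ∧ ∀ i ∈ insert (n+1) t, i + 1 ∉ insert (n+1) t)
                ∧ n + 1 ∈ insert (n+1) t then Rpr φ (n+1) (insert (n+1) t) else 0)
            = (∑ t ∈ (Finset.Icc 1 n).powerset,
                (if (1 ∈ t ∧ ∀ i ∈ t, i + 1 ∉ t) ∧ n ∉ t then Rpr φ n t else 0))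
              * (φ (n+1) / (1 - φ n)) := by
          rw [Finset.sum_mul]
          refine Finset.sum_congr rfl fun t ht => ?_
          have hts := Finset.mem_powerset.1 ht
          have hvi := valid_insert n hn t hts
          by_cases hc : (1 ∈ t ∧ ∀ i ∈ t, i + 1 ∉ t) ∧ n ∉ t
          · rw [if_pos ⟨hvi.2 hc, Finset.mem_insert_self _ _⟩, if_pos hc]
            rw [Rpr_succ φ n hn, Rpr_insert]
            have hn' : n ∉ insert (n+1) t := by
              simp only [Finset.mem_insert]
              push_neg
              exact ⟨by omega, hc.2⟩
            rw [if_neg hn', if_pos (Finset.mem_insert_self _ _)]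
          · rw [if_neg (fun h => hc (hvi.1 h.1)), if_neg hc, zero_mul]
        rw [e1, e2, ih.2, zero_add]
        rcases Nat.lt_or_ge n 2 with h2 | h2
        · have : n = 1 := by omega
          subst this
          rw [hφ1, hφ2]; ring
        · have h1 : (1 : ℝ) - φ n ≠ 0 := fun h => hlt n h2 (by linarith)
          field_simp
      · rw [Icc_succ n hn, Finset.sum_powerset_insert hnotmem]
        have e2 : (∑ t ∈ (Finset.Icc 1 n).powerset,
            if (1 ∈ insert (n+1) t ∧ ∀ i ∈ insert (n+1) t, i + 1 ∉ insert (n+1) t)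
                ∧ n + 1 ∉ insert (n+1) t then Rpr φ (n+1) (insert (n+1) t) else 0) = 0 := by
          refine Finset.sum_eq_zero fun t ht => ?_
          have : n + 1 ∈ insert (n+1) t := Finset.mem_insert_self _ _
          simp [this]
        have e1 : (∑ t ∈ (Finset.Icc 1 n).powerset,
            if (1 ∈ t ∧ ∀ i ∈ t, i + 1 ∉ t) ∧ n + 1 ∉ t then Rpr φ (n+1) t else 0)
            = (∑ t ∈ (Finset.Icc 1 n).powerset,
                (if (1 ∈ t ∧ ∀ i ∈ t, i + 1 ∉ t) ∧ n ∈ t then Rpr φ n t else 0)) * 1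
              + (∑ t ∈ (Finset.Icc 1 n).powerset,
                (if (1 ∈ t ∧ ∀ i ∈ t, i + 1 ∉ t) ∧ n ∉ t then Rpr φ n t else 0))
                * (1 - φ (n+1) / (1 - φ n)) := by
          rw [Finset.sum_mul, Finset.sum_mul, ← Finset.sum_add_distrib]
          refine Finset.sum_congr rfl fun t ht => ?_
          have hts := Finset.mem_powerset.1 ht
          have hn1 : n + 1 ∉ t := fun h => by have := Finset.mem_Icc.1 (hts h); omega
          by_cases hv : (1 ∈ t ∧ ∀ i ∈ t, i + 1 ∉ t)
          · rw [if_pos ⟨hv, hn1⟩, Rpr_succ φ n hn]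
            by_cases hnt : n ∈ t
            · rw [if_pos hnt, if_pos ⟨hv, hnt⟩, if_neg (fun h => h.2 hnt), zero_mul, add_zero]
            · rw [if_neg hnt, if_neg hn1, if_neg (fun h => hnt h.2), if_pos ⟨hv, hnt⟩,
                zero_mul, zero_add]
          · rw [if_neg (fun h => hv h.1), if_neg (fun h => hv h.1), if_neg (fun h => hv h.1),
              zero_mul, zero_mul, add_zero]
        rw [e1, e2, ih.1, ih.2, add_zero, mul_one]
        rcases Nat.lt_or_ge n 2 with h2 | h2
        · have : n = 1 := by omega
          subst this
          rw [hφ1, hφ2]; ring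
        · have h1 : (1 : ℝ) - φ n ≠ 0 := fun h => hlt n h2 (by linarith)
          field_simp; ring

lemma pointwiseRM (p q φ : ℕ → ℝ) (hq : ∀ i, q i = 1 - p i) (hp1 : p 1 = 0)
    (hφ1 : φ 1 = 1) (hφ2 : φ 2 = 0) (hlt : ∀ i, 2 ≤ i → φ i ≠ 1)
    (key : ∀ i, 1 ≤ i → φ i = q i * (1 - φ (i+1))) :
    ∀ n, 1 ≤ n → ∀ s, s ⊆ Finset.Icc 1 n → (1 ∈ s ∧ ∀ i ∈ s, i + 1 ∉ s) →
      Rpr φ n s = (if n ∈ s then φ n else 1 - φ n) * Mpr p q n s := by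
  intro n hn
  induction n, hn using Nat.le_induction with
  | base =>
      intro s hs hv
      have h0 : Finset.Icc 1 (1-1) = (∅ : Finset ℕ) := rfl
      simp [Rpr, Mpr, h0, hv.1, hφ1]
  | succ n hn ih =>
      intro s hs hv
      by_cases hmem : n + 1 ∈ s
      · have hns : n ∉ s := fun h => hv.2 n h hmem
        have hie : insert (n+1) (s.erase (n+1)) = s := Finset.insert_erase hmem
        have hsub : s.erase (n+1) ⊆ Finset.Icc 1 n := by
          intro x hx
          have hx1 := Finset.mem_erase.1 hx
          have := Finset.mem_Icc.1 (hs hx1.2)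
          exact Finset.mem_Icc.2 ⟨this.1, by omega⟩
        have hvt : 1 ∈ s.erase (n+1) ∧ ∀ i ∈ s.erase (n+1), i + 1 ∉ s.erase (n+1) := by
          refine ⟨Finset.mem_erase.2 ⟨by omega, hv.1⟩, fun i hi hcon => ?_⟩
          exact hv.2 i (Finset.mem_of_mem_erase hi) (Finset.mem_of_mem_erase hcon)
        have hnt : n ∉ s.erase (n+1) := fun h => hns (Finset.mem_of_mem_erase h)
        have hR : Rpr φ n s = Rpr φ n (s.erase (n+1)) := by
          conv_lhs => rw [← hie]
          rw [Rpr_insert]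
        have hM : Mpr p q n s = Mpr p q n (s.erase (n+1)) := by
          conv_lhs => rw [← hie]
          rw [Mpr_insert]
        have iht := ih (s.erase (n+1)) hsub hvt
        rw [if_neg hnt] at iht
        rw [Rpr_succ φ n hn, Mpr_succ p q n hn, hR, hM, iht]
        simp only [if_pos hmem, if_neg hns]
        rcases Nat.lt_or_ge n 2 with h2 | h2
        · have hn1 : n = 1 := by omega
          subst hn1
          rw [hφ1, hφ2]; ring
        · have h1 : (1 : ℝ) - φ n ≠ 0 := fun h => hlt n h2 (by linarith)
          field_simp
      · have hsub : s ⊆ Finset.Icc 1 n := by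
          intro x hx
          have := Finset.mem_Icc.1 (hs hx)
          refine Finset.mem_Icc.2 ⟨this.1, ?_⟩
          rcases Nat.lt_or_ge x (n+1) with h | h
          · omega
          · exact absurd (by rwa [show x = n+1 by omega] at hx) hmem
        have iht := ih s hsub hv
        rw [Rpr_succ φ n hn, Mpr_succ p q n hn, iht]
        simp only [if_neg hmem]
        by_cases hns : n ∈ s
        · simp only [if_pos hns]
          have hk := key n (by omega)
          rw [hk]; ring
        · have h1s : (1:ℕ) ∈ s := hv.1
          have hn2 : 2 ≤ n := by
            rcases Nat.lt_or_ge n 2 with h | h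
            · have : n = 1 := by omega
              subst this
              exact absurd h1s hns
            · exact h
          simp only [if_neg hns]
          have h1 : (1 : ℝ) - φ n ≠ 0 := fun h => hlt n hn2 (by linarith)
          have hk := key n (by omega)
          have hpq : p n = 1 - q n := by rw [hq n]; ring
          rw [hpq]
          field_simp
          linear_combination (-(Mpr p q n s)) * hk

lemma key_rec (q φ : ℕ → ℝ) (i : ℕ)
    (L1 : Tendsto (fun m : ℕ => ∑ j ∈ Finset.range (m + 1),
          (-1 : ℝ) ^ j * ∏ l ∈ Finset.Icc i (i + j), q l) atTop (nhds (φ i)))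
    (L2 : Tendsto (fun m : ℕ => ∑ j ∈ Finset.range (m + 1),
          (-1 : ℝ) ^ j * ∏ l ∈ Finset.Icc (i+1) (i+1 + j), q l) atTop (nhds (φ (i+1)))) :
    φ i = q i * (1 - φ (i+1)) := by
  have hins : ∀ j : ℕ, ∏ l ∈ Finset.Icc i (i + (j+1)), q l
      = q i * ∏ l ∈ Finset.Icc (i+1) (i+1+j), q l := by
    intro j
    have hset : Finset.Icc i (i + (j+1)) = insert i (Finset.Icc (i+1) (i+1+j)) := by
      ext x; simp only [Finset.mem_Icc, Finset.mem_insert]; omega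
    rw [hset, Finset.prod_insert (by simp)]
  have hsum : ∀ m : ℕ, (∑ j ∈ Finset.range (m + 1 + 1),
        (-1 : ℝ) ^ j * ∏ l ∈ Finset.Icc i (i + j), q l)
      = q i * (1 - ∑ j ∈ Finset.range (m + 1),
        (-1 : ℝ) ^ j * ∏ l ∈ Finset.Icc (i+1) (i+1 + j), q l) := by
    intro m
    rw [Finset.sum_range_succ']
    have e1 : ∀ j ∈ Finset.range (m+1),
        (-1 : ℝ) ^ (j+1) * ∏ l ∈ Finset.Icc i (i + (j+1)), q l
        = -(q i * ((-1:ℝ)^j * ∏ l ∈ Finset.Icc (i+1) (i+1+j), q l)) := by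
      intro j _
      rw [hins j, pow_succ]; ring
    rw [Finset.sum_congr rfl e1, Finset.sum_neg_distrib, ← Finset.mul_sum]
    simp only [pow_zero, Nat.add_zero, Finset.Icc_self, Finset.prod_singleton, one_mul]
    ring
  have T1 : Tendsto (fun m : ℕ => ∑ j ∈ Finset.range (m + 1 + 1),
        (-1 : ℝ) ^ j * ∏ l ∈ Finset.Icc i (i + j), q l) atTop (nhds (φ i)) :=
    L1.comp (tendsto_add_atTop_nat 1)
  have T2 : Tendsto (fun m : ℕ => q i * (1 - ∑ j ∈ Finset.range (m + 1),
        (-1 : ℝ) ^ j * ∏ l ∈ Finset.Icc (i+1) (i+1 + j), q l)) atTop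
        (nhds (q i * (1 - φ (i+1)))) :=
    (tendsto_const_nhds.sub L2).const_mul (q i)
  exact tendsto_nhds_unique (T1.congr hsum) T2

lemma Mpr_nonneg (p q : ℕ → ℝ) (hp0 : ∀ i, 1 ≤ i → 0 ≤ p i) (hq0 : ∀ i, 1 ≤ i → 0 ≤ q i)
    (n : ℕ) (s : Finset ℕ) : 0 ≤ Mpr p q n s := by
  refine Finset.prod_nonneg fun i hi => ?_
  have hi1 : 1 ≤ i := (Finset.mem_Icc.1 hi).1
  split_ifs
  · norm_num
  · exact hq0 i hi1
  · exact hp0 i hi1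

lemma Rpr_nonneg (φ : ℕ → ℝ) (hφ1 : φ 1 = 1) (hφ0 : ∀ j, 2 ≤ j → 0 ≤ φ j)
    (hφlt : ∀ i, 2 ≤ i → φ i < 1) (hsum1 : ∀ i, 2 ≤ i → φ i + φ (i+1) ≤ 1)
    (n : ℕ) (s : Finset ℕ) : 0 ≤ Rpr φ n s := by
  refine Finset.prod_nonneg fun i hi => ?_
  have hi1 : 1 ≤ i := (Finset.mem_Icc.1 hi).1
  rcases Nat.lt_or_ge i 2 with h2 | h2
  · have : i = 1 := by omega
    subst this
    have : (1:ℝ) - φ 1 = 0 := by rw [hφ1]; ring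
    rw [this, div_zero]
    split_ifs <;> norm_num
  · have h0 : (0:ℝ) < 1 - φ i := by have := hφlt i h2; linarith
    have h1 : 0 ≤ φ (i+1) := hφ0 (i+1) (by omega)
    split_ifs
    · norm_num
    · exact div_nonneg h1 h0.le
    · have : φ (i+1) / (1 - φ i) ≤ 1 := by
        rw [div_le_one h0]
        have := hsum1 i h2; linarith
      linarith

/-- the total variation distance between the first `n` steps of `X^{∞,p}`
and `X^{n,p}` equals `φ_n`. -/
theorem stmt14 (p q : ℕ → ℝ)
    (hp1 : p 1 = 0) (hp2 : p 2 = 1) (hp : ∀ i, 3 ≤ i → 0 < p i ∧ p i < 1)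
    (hq : ∀ i, q i = 1 - p i)
    (hdiv : Tendsto (fun N : ℕ => ∑ j ∈ Finset.Icc 1 N, p j) atTop atTop)
    (φ : ℕ → ℝ) (hφ1 : φ 1 = 1) (hφ2 : φ 2 = 0)
    (hφ : ∀ i : ℕ, 3 ≤ i →
      Tendsto (fun m : ℕ => ∑ j ∈ Finset.range (m + 1),
          (-1 : ℝ) ^ j * ∏ l ∈ Finset.Icc i (i + j), q l) atTop (nhds (φ i)) ∧
      0 < φ i ∧ φ i < 1) :
    ∀ n : ℕ, 2 ≤ n →
      (1 / 2 : ℝ) * ∑ s ∈ (Finset.Icc 1 n).powerset, |rhoTV φ n s - muTV p q n s| = φ n := by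
  -- basic facts
  have hp0 : ∀ i, 1 ≤ i → 0 ≤ p i := by
    intro i hi
    rcases Nat.lt_or_ge i 3 with h | h
    · interval_cases i <;> simp [hp1, hp2]
    · exact (hp i h).1.le
  have hq0 : ∀ i, 1 ≤ i → 0 ≤ q i := by
    intro i hi
    rw [hq i]
    rcases Nat.lt_or_ge i 3 with h | h
    · interval_cases i <;> simp [hp1, hp2]
    · have := (hp i h).2; linarith
  have hq1 : ∀ i, 1 ≤ i → q i ≤ 1 := by
    intro i hi
    rw [hq i]
    have := hp0 i hi; linarith
  have hφlt : ∀ i, 2 ≤ i → φ i < 1 := by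
    intro i hi
    rcases Nat.lt_or_ge i 3 with h | h
    · have : i = 2 := by omega
      subst this; rw [hφ2]; norm_num
    · exact (hφ i h).2.2
  have hne : ∀ i, 2 ≤ i → φ i ≠ 1 := fun i hi => ne_of_lt (hφlt i hi)
  have hφ0 : ∀ j, 2 ≤ j → 0 ≤ φ j := by
    intro j hj
    rcases Nat.lt_or_ge j 3 with h | h
    · have : j = 2 := by omega
      subst this; rw [hφ2]
    · exact (hφ j h).2.1.le
  have key : ∀ i, 1 ≤ i → φ i = q i * (1 - φ (i+1)) := by
    intro i hi
    rcases Nat.lt_or_ge i 3 with h | h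
    · interval_cases i
      · rw [hφ1, hφ2, hq 1, hp1]; ring
      · rw [hφ2, hq 2, hp2]; ring
    · exact key_rec q φ i (hφ i h).1 (hφ (i+1) (by omega)).1
  have hsum1 : ∀ i, 2 ≤ i → φ i + φ (i+1) ≤ 1 := by
    intro i hi
    have hk := key i (by omega)
    have h1 : φ (i+1) ≤ 1 := (hφlt (i+1) (by omega)).le
    have h2 : 0 ≤ q i := hq0 i (by omega)
    have h3 : q i ≤ 1 := hq1 i (by omega)
    nlinarith
  intro n hn
  have hA := (sumR φ hφ1 hφ2 hne n (by omega)).1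
  have hB := (sumR φ hφ1 hφ2 hne n (by omega)).2
  have h1φ : (1:ℝ) - φ n ≠ 0 := fun h => hne n hn (by linarith)
  have hφn0 : 0 ≤ φ n := hφ0 n hn
  have habs : ∀ s ∈ (Finset.Icc 1 n).powerset,
      |rhoTV φ n s - muTV p q n s|
        = (if (1 ∈ s ∧ ∀ i ∈ s, i + 1 ∉ s) ∧ n ∈ s then Rpr φ n s else 0)
          + (φ n / (1 - φ n)) *
            (if (1 ∈ s ∧ ∀ i ∈ s, i + 1 ∉ s) ∧ n ∉ s then Rpr φ n s else 0) := by
    intro s hs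
    by_cases hv : 1 ∈ s ∧ ∀ i ∈ s, i + 1 ∉ s
    · have hρ : rhoTV φ n s = Rpr φ n s := by
        simp only [rhoTV, if_pos hv]; rfl
      by_cases hns : n ∈ s
      · have hμ : muTV p q n s = 0 := by
          simp only [muTV]
          rw [if_neg]
          rintro ⟨-, h, -⟩; exact h hns
        rw [hμ, hρ, sub_zero, abs_of_nonneg (Rpr_nonneg φ hφ1 hφ0 hφlt hsum1 n s),
          if_pos ⟨hv, hns⟩, if_neg (fun h => h.2 hns), mul_zero, add_zero]
      · have hμ : muTV p q n s = Mpr p q n s := by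
          simp only [muTV]
          rw [if_pos ⟨hv.1, hns, hv.2⟩]; rfl
        have hpt := pointwiseRM p q φ hq hp1 hφ1 hφ2 hne key n (by omega) s
          (Finset.mem_powerset.1 hs) hv
        rw [if_neg hns] at hpt
        have hM0 : 0 ≤ Mpr p q n s := Mpr_nonneg p q hp0 hq0 n s
        rw [hμ, hρ, hpt, if_neg (fun h => hns h.2), if_pos ⟨hv, hns⟩, zero_add,
          show (1 - φ n) * Mpr p q n s - Mpr p q n s = -(φ n * Mpr p q n s) by ring,
          abs_neg, abs_of_nonneg (mul_nonneg hφn0 hM0)]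
        field_simp
    · have hμ : muTV p q n s = 0 := by
        simp only [muTV]
        rw [if_neg]
        rintro ⟨h1, -, h2⟩; exact hv ⟨h1, h2⟩
      have hρ : rhoTV φ n s = 0 := by
        simp only [rhoTV]; rw [if_neg hv]
      rw [hμ, hρ, if_neg (fun h => hv h.1), if_neg (fun h => hv h.1), mul_zero, add_zero,
        sub_zero, abs_zero]
  rw [Finset.sum_congr rfl habs, Finset.sum_add_distrib, ← Finset.mul_sum, hA, hB,
    div_mul_cancel₀ _ h1φ]
  ring
end

section
/- Let p : ℕ → ℝ satisfy p(1) = 0, p(2) = 1, 0 < p(i) < 1 for all i ≥ 3, and q(i) := 1 − p(i). Then the following are equivalent: (i) Σ_{n=1}^{∞} p(n) = ∞ and there exists φ : ℕ → ℝ such that for every n ≥ 3 the partial sums Σ_{j=0}^{m} (−1)^j Π_{l=n}^{n+j} q(l) converge to φ(n) as m → ∞, and φ(n) → 0 as n → ∞; (ii) q(n) → 0 as n → ∞. -/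
open Finset Filter

private lemma stmt15_prodA (q : ℕ → ℝ) (n j : ℕ) :
    ∏ l ∈ Finset.Icc n (n + j), q l = q n * ∏ l ∈ Finset.Icc (n+1) (n + j), q l := by
  rw [Finset.Icc_add_one_left_eq_Ioc, ← Finset.Icc_erase_left]
  exact (Finset.mul_prod_erase _ _ (Finset.mem_Icc.mpr ⟨le_rfl, Nat.le_add_right _ _⟩)).symm

private lemma stmt15_sumB (q : ℕ → ℝ) (n m : ℕ) :
    ∑ j ∈ Finset.range (m + 1 + 1), (-1:ℝ)^j * ∏ l ∈ Finset.Icc n (n+j), q l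
    = q n * (1 - ∑ j ∈ Finset.range (m+1), (-1:ℝ)^j * ∏ l ∈ Finset.Icc (n+1) ((n+1)+j), q l) := by
  rw [Finset.sum_range_succ']
  have hterm : ∀ k, (-1:ℝ)^(k+1) * ∏ l ∈ Finset.Icc n (n+(k+1)), q l
      = -(q n * ((-1:ℝ)^k * ∏ l ∈ Finset.Icc (n+1) ((n+1)+k), q l)) := by
    intro k
    rw [stmt15_prodA, show n+(k+1) = (n+1)+k from by omega]
    ring
  rw [Finset.sum_congr rfl (fun k _ => hterm k)]
  simp only [pow_zero, one_mul, Nat.add_zero, Finset.Icc_self, Finset.prod_singleton,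
    Finset.sum_neg_distrib, ← Finset.mul_sum]
  ring

/-- the total variation distance `φ_n` between `X^{∞,p}` and `X^{n,p}`
is well defined and tends to `0` iff `q_n → 0`. -/
theorem stmt15 (p q : ℕ → ℝ)
    (hp1 : p 1 = 0) (hp2 : p 2 = 1) (hp : ∀ i, 3 ≤ i → 0 < p i ∧ p i < 1)
    (hq : ∀ i, q i = 1 - p i) :
    ((Tendsto (fun N : ℕ => ∑ j ∈ Finset.Icc 1 N, p j) atTop atTop) ∧
      ∃ φ : ℕ → ℝ,
        (∀ n : ℕ, 3 ≤ n →
          Tendsto (fun m : ℕ => ∑ j ∈ Finset.range (m + 1),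
              (-1 : ℝ) ^ j * ∏ l ∈ Finset.Icc n (n + j), q l) atTop (nhds (φ n))) ∧
        Tendsto φ atTop (nhds 0)) ↔
    Tendsto q atTop (nhds 0) := by
  constructor
  · rintro ⟨-, φ, hconv, hφ0⟩
    have hrec : ∀ n, 3 ≤ n → φ n = q n * (1 - φ (n+1)) := by
      intro n hn
      have h1 := (hconv n hn).comp (tendsto_add_atTop_nat 1)
      have h2 : Tendsto (fun m : ℕ => q n * (1 - ∑ j ∈ Finset.range (m+1),
          (-1:ℝ)^j * ∏ l ∈ Finset.Icc (n+1) ((n+1)+j), q l)) atTop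
          (nhds (q n * (1 - φ (n+1)))) :=
        (tendsto_const_nhds.sub (hconv (n+1) (by omega))).const_mul _
      refine tendsto_nhds_unique ?_ h2
      convert h1 using 2 with m
      exact (stmt15_sumB q n m).symm
    have hev : ∀ᶠ n in atTop, |φ (n+1)| < 1/2 := by
      obtain ⟨N, hN0⟩ := Metric.tendsto_atTop.mp hφ0 (1/2) (by norm_num)
      have hN : ∀ k ≥ N, |φ k| < 1/2 := by
        intro k hk
        have := hN0 k hk
        rwa [Real.dist_eq, sub_zero] at this
      exact eventually_atTop.mpr ⟨N, fun n hn => hN (n+1) (by omega)⟩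
    apply squeeze_zero_norm' (a := fun n => 2 * |φ n|)
    · filter_upwards [hev, eventually_ge_atTop 3] with n h12 h3
      have heq : |φ n| = |q n| * |1 - φ (n+1)| := by rw [hrec n h3, abs_mul]
      have h1 : φ (n+1) < 1/2 := lt_of_le_of_lt (le_abs_self _) h12
      have h2 : |1 - φ (n+1)| = 1 - φ (n+1) := abs_of_pos (by linarith)
      have h3' : (1:ℝ)/2 ≤ |1 - φ (n+1)| := by rw [h2]; linarith
      have := mul_le_mul_of_nonneg_left h3' (abs_nonneg (q n))
      rw [← heq] at this
      calc ‖q n‖ = |q n| := rfl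
        _ ≤ 2 * |φ n| := by linarith
    · have h0 : Tendsto (fun n => |φ n|) atTop (nhds 0) := by
        simpa using hφ0.abs
      simpa using h0.const_mul 2
  · intro hq0
    have hqpos : ∀ l, 3 ≤ l → 0 < q l := fun l hl => by
      have := (hp l hl).2; rw [hq]; linarith
    obtain ⟨N1, hN1⟩ := Metric.tendsto_atTop.mp hq0 (1/2) (by norm_num)
    set N0 := max N1 3 with hN0def
    have hN0 : ∀ l, N0 ≤ l → 0 < q l ∧ q l ≤ 1/2 := by
      intro l hl
      have hl3 : 3 ≤ l := le_trans (le_max_right _ _) hl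
      have hd := hN1 l (le_trans (le_max_left _ _) hl)
      rw [Real.dist_eq, sub_zero] at hd
      exact ⟨hqpos l hl3, le_of_lt (lt_of_le_of_lt (le_abs_self _) hd)⟩
    have hN03 : 3 ≤ N0 := le_max_right _ _
    constructor
    · -- divergence of ∑ p
      have hpnn : ∀ j, 1 ≤ j → 0 ≤ p j := by
        intro j hj
        rcases Nat.lt_or_ge j 3 with h | h
        · interval_cases j <;> simp [hp1, hp2]
        · exact le_of_lt (hp j h).1
      apply tendsto_atTop_mono' atTop (show ∀ᶠ N : ℕ in atTop,
          ((N:ℝ) + 1 - N0)/2 ≤ ∑ j ∈ Finset.Icc 1 N, p j from ?_)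
      · have h1 : Tendsto (fun N : ℕ => (N:ℝ) + (1 - N0)) atTop atTop :=
          tendsto_atTop_add_const_right _ _ tendsto_natCast_atTop_atTop
        have h2 := h1.atTop_div_const (show (0:ℝ) < 2 by norm_num)
        refine h2.congr fun N => by ring
      filter_upwards [eventually_ge_atTop N0] with N hN
      have hsub : Finset.Icc N0 N ⊆ Finset.Icc 1 N := by
        intro x hx; rw [Finset.mem_Icc] at *; omega
      have h1 : ∑ j ∈ Finset.Icc N0 N, p j ≤ ∑ j ∈ Finset.Icc 1 N, p j := by
        apply Finset.sum_le_sum_of_subset_of_nonneg hsub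
        intro i hi _; exact hpnn i (Finset.mem_Icc.mp hi).1
      have h2 : ((Finset.Icc N0 N).card : ℝ) * (1/2) ≤ ∑ j ∈ Finset.Icc N0 N, p j := by
        rw [← nsmul_eq_mul]
        apply Finset.card_nsmul_le_sum
        intro x hx
        have hx' := (Finset.mem_Icc.mp hx).1
        have := (hN0 x hx').2
        rw [hq] at this; linarith
      have hcard : ((Finset.Icc N0 N).card : ℝ) = (N:ℝ) + 1 - N0 := by
        rw [Nat.card_Icc]
        push_cast [Nat.cast_sub (by omega : N0 ≤ N + 1)]
        ring
      rw [hcard] at h2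
      calc ((N:ℝ) + 1 - N0)/2 = ((N:ℝ)+1-N0) * (1/2) := by ring
        _ ≤ _ := le_trans h2 h1
    · -- existence of φ
      set f : ℕ → ℕ → ℝ := fun n j => (-1:ℝ)^j * ∏ l ∈ Finset.Icc n (n+j), q l with hf
      have hnorm : ∀ n j, 3 ≤ n → ‖f n j‖ = ∏ l ∈ Finset.Icc n (n+j), q l := by
        intro n j hn
        have hpos : 0 ≤ ∏ l ∈ Finset.Icc n (n+j), q l :=
          Finset.prod_nonneg fun l hl => le_of_lt (hqpos l (le_trans hn (Finset.mem_Icc.mp hl).1))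
        have habs : |∏ l ∈ Finset.Icc n (n+j), q l| = ∏ l ∈ Finset.Icc n (n+j), q l :=
          abs_of_nonneg hpos
        rw [hf]
        dsimp only
        rw [Real.norm_eq_abs, abs_mul, abs_pow, abs_neg, abs_one, one_pow, one_mul]
        exact habs
      have hsum : ∀ n, 3 ≤ n → Summable (f n) := by
        intro n hn
        apply summable_of_ratio_norm_eventually_le (show (1:ℝ)/2 < 1 by norm_num)
        filter_upwards [eventually_ge_atTop N0] with j hj
        rw [hnorm n (j+1) hn, hnorm n j hn,
          show n + (j+1) = (n + j) + 1 from rfl,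
          Finset.prod_Icc_succ_top (by omega : n ≤ n + j + 1)]
        have hj2 := hN0 (n + j + 1) (by omega)
        have hnng : 0 ≤ ∏ l ∈ Finset.Icc n (n+j), q l :=
          Finset.prod_nonneg fun l hl => le_of_lt (hqpos l (le_trans hn (Finset.mem_Icc.mp hl).1))
        rw [mul_comm ((1:ℝ)/2)]
        exact mul_le_mul_of_nonneg_left hj2.2 hnng
      refine ⟨fun n => ∑' j, f n j, ?_, ?_⟩
      · intro n hn
        exact ((hsum n hn).hasSum.tendsto_sum_nat).comp (tendsto_add_atTop_nat 1)
      · apply squeeze_zero_norm' (a := fun n => 2 * q n)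
        · filter_upwards [eventually_ge_atTop N0] with n hn
          have hn3 : 3 ≤ n := le_trans hN03 hn
          have hbound : ∀ j, ‖f n j‖ ≤ q n * (1/2)^j := by
            intro j
            rw [hnorm n j hn3, stmt15_prodA]
            have h1 : ∏ l ∈ Finset.Icc (n+1) (n+j), q l ≤ (1/2)^j := by
              calc ∏ l ∈ Finset.Icc (n+1) (n+j), q l
                  ≤ ∏ l ∈ Finset.Icc (n+1) (n+j), (1/2:ℝ) := by
                    apply Finset.prod_le_prod
                    · intro l hl
                      exact le_of_lt (hqpos l (by have := (Finset.mem_Icc.mp hl).1; omega))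
                    · intro l hl
                      exact (hN0 l (by have := (Finset.mem_Icc.mp hl).1; omega)).2
                _ = (1/2:ℝ)^j := by
                    rw [Finset.prod_const, Nat.card_Icc]
                    congr 1; omega
            exact mul_le_mul_of_nonneg_left h1 (le_of_lt (hqpos n hn3))
          have hgs : Summable (fun j : ℕ => q n * (1/2:ℝ)^j) :=
            (summable_geometric_of_lt_one (by norm_num) (by norm_num)).mul_left _
          have hns : Summable (fun j => ‖f n j‖) :=
            Summable.of_nonneg_of_le (fun j => norm_nonneg _) hbound hgs
          calc ‖∑' j, f n j‖ ≤ ∑' j, ‖f n j‖ := norm_tsum_le_tsum_norm hns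
            _ ≤ ∑' j, q n * (1/2:ℝ)^j := Summable.tsum_le_tsum hbound hns hgs
            _ = q n * (1 - 1/2)⁻¹ := by
                rw [tsum_mul_left, tsum_geometric_of_lt_one (by norm_num) (by norm_num)]
            _ = 2 * q n := by ring
        · simpa using hq0.const_mul 2
end

section
/- Let θ : ℕ → ℝ with θ_j > 0 for all j. For each i ≥ 2 define γ_{i,n} for n ≥ i by: γ_{i,i} = (i−1)/(i−1+θ_i), γ_{i,i+1} = γ_{i,i} · i/(i+θ_{i+1}), and γ_{i,n} = ((n−1)/(n−1+θ_n)) · ( γ_{i,n−1} + (θ_{n−1}/(n−2+θ_{n−1}))·γ_{i,n−2} ) for n ≥ i+2. Then the following are equivalent: (a) Σ_{j=1}^{∞} θ_j·θ_{j+1} / ( (j−1+θ_j)(j+θ_{j+1}) ) < ∞ and θ_n/n → 0 as n → ∞; (b) for every i ≥ 2, the limit γ_{i,∞} := lim_{n→∞} γ_{i,n} exists and is strictly positive. -/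
open Finset Filter

private noncomputable def pp (θ : ℕ → ℝ) (n : ℕ) : ℝ := θ n / ((n : ℝ) - 1 + θ n)
private noncomputable def qq (θ : ℕ → ℝ) (n : ℕ) : ℝ := ((n : ℝ) - 1) / ((n : ℝ) - 1 + θ n)

private lemma den_pos {θ : ℕ → ℝ} {n : ℕ} (hθ : 0 < θ n) (hn : 1 ≤ n) :
    0 < (n : ℝ) - 1 + θ n := by
  have h : (1 : ℝ) ≤ (n : ℝ) := by exact_mod_cast hn
  linarith

private lemma pp_nonneg {θ : ℕ → ℝ} {n : ℕ} (hθ : 0 < θ n) (hn : 1 ≤ n) : 0 ≤ pp θ n :=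
  div_nonneg hθ.le (den_pos hθ hn).le

private lemma pp_pos {θ : ℕ → ℝ} {n : ℕ} (hθ : 0 < θ n) (hn : 1 ≤ n) : 0 < pp θ n :=
  div_pos hθ (den_pos hθ hn)

private lemma qq_nonneg {θ : ℕ → ℝ} {n : ℕ} (hθ : 0 < θ n) (hn : 1 ≤ n) : 0 ≤ qq θ n := by
  have h : (1 : ℝ) ≤ (n : ℝ) := by exact_mod_cast hn
  exact div_nonneg (by linarith) (den_pos hθ hn).le

private lemma qq_pos {θ : ℕ → ℝ} {n : ℕ} (hθ : 0 < θ n) (hn : 2 ≤ n) : 0 < qq θ n := by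
  have h : (2 : ℝ) ≤ (n : ℝ) := by exact_mod_cast hn
  exact div_pos (by linarith) (den_pos hθ (by omega))

private lemma qq_le_one {θ : ℕ → ℝ} {n : ℕ} (hθ : 0 < θ n) (hn : 1 ≤ n) : qq θ n ≤ 1 := by
  rw [qq, div_le_one (den_pos hθ hn)]; linarith

private lemma pq_sum {θ : ℕ → ℝ} {n : ℕ} (hθ : 0 < θ n) (hn : 1 ≤ n) : pp θ n + qq θ n = 1 := by
  rw [pp, qq, ← add_div, div_eq_one_iff_eq (den_pos hθ hn).ne']; ring

/-- the sequence `a_n = γ_{i,n+1} + p_{n+1} γ_{i,n}` -/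
private noncomputable def aa (θ : ℕ → ℝ) (g : ℕ → ℕ → ℝ) (i n : ℕ) : ℝ :=
  g i (n + 1) + pp θ (n + 1) * g i n

section
variable {θ : ℕ → ℝ} {g : ℕ → ℕ → ℝ} {i : ℕ}
  (hθpos : ∀ j, 1 ≤ j → 0 < θ j)
  (hg0 : ∀ i : ℕ, 2 ≤ i → g i i = ((i : ℝ) - 1) / ((i : ℝ) - 1 + θ i))
  (hg1 : ∀ i : ℕ, 2 ≤ i → g i (i + 1) = g i i * (i : ℝ) / ((i : ℝ) + θ (i + 1)))
  (hgrec : ∀ i : ℕ, 2 ≤ i → ∀ n : ℕ, i + 2 ≤ n →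
      g i n = (((n : ℝ) - 1) / ((n : ℝ) - 1 + θ n))
        * (g i (n - 1) + (θ (n - 1) / ((n : ℝ) - 2 + θ (n - 1))) * g i (n - 2)))
  (hi : 2 ≤ i)
set_option linter.unusedSectionVars false
include hθpos hg0 hg1 hgrec hi

private lemma grec' (n : ℕ) (hn : i ≤ n) :
    g i (n + 2) = qq θ (n + 2) * (g i (n + 1) + pp θ (n + 1) * g i n) := by
  have h := hgrec i hi (n + 2) (by omega)
  have e1 : n + 2 - 1 = n + 1 := rfl
  have e2 : n + 2 - 2 = n := rfl
  rw [e1, e2] at h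
  rw [h, qq, pp]
  push_cast
  ring_nf

private lemma gfirst : g i (i + 1) = g i i * qq θ (i + 1) := by
  rw [hg1 i hi, qq, mul_div_assoc]
  push_cast
  ring_nf

private lemma gpos : ∀ n, i ≤ n → 0 < g i n := by
  have hii : 0 < g i i := by
    rw [hg0 i hi]
    have := qq_pos (θ := θ) (hθpos i (by omega)) hi
    rw [qq] at this; exact this
  have hii1 : 0 < g i (i + 1) := by
    rw [gfirst hθpos hg0 hg1 hgrec hi]
    exact mul_pos hii (qq_pos (hθpos (i + 1) (by omega)) (by omega))
  have key : ∀ k, 0 < g i (i + k) ∧ 0 < g i (i + k + 1) := by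
    intro k
    induction k with
    | zero => exact ⟨hii, hii1⟩
    | succ k ih =>
      refine ⟨ih.2, ?_⟩
      have hr := grec' hθpos hg0 hg1 hgrec hi (i + k) (by omega)
      have e : i + (k + 1) + 1 = (i + k) + 2 := by omega
      rw [e, hr]
      have h1 : 0 < qq θ (i + k + 2) := qq_pos (hθpos _ (by omega)) (by omega)
      have h2 : 0 ≤ pp θ (i + k + 1) := pp_nonneg (hθpos _ (by omega)) (by omega)
      exact mul_pos h1 (by nlinarith [ih.1, ih.2])
  intro n hn
  obtain ⟨k, rfl⟩ := Nat.exists_eq_add_of_le hn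
  exact (key k).1

private lemma aa_start : aa θ g i i = g i i := by
  rw [aa, gfirst hθpos hg0 hg1 hgrec hi]
  have h := pq_sum (θ := θ) (hθpos (i + 1) (by omega)) (by omega : 1 ≤ i + 1)
  linear_combination g i i * h

private lemma g_eq (n : ℕ) (hn : i ≤ n) : g i (n + 2) = qq θ (n + 2) * aa θ g i n :=
  grec' hθpos hg0 hg1 hgrec hi n hn

private lemma aa_rec (n : ℕ) (hn : i ≤ n) :
    aa θ g i (n + 1) = aa θ g i n - pp θ (n + 2) * pp θ (n + 1) * g i n := by
  have h := grec' hθpos hg0 hg1 hgrec hi n hn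
  have hsum : pp θ (n + 2) + qq θ (n + 2) = 1 := pq_sum (hθpos (n + 2) (by omega)) (by omega)
  rw [aa, aa, h]
  linear_combination (g i (n + 1) + pp θ (n + 1) * g i n) * hsum

private lemma aa_pos (n : ℕ) (hn : i ≤ n) : 0 < aa θ g i n := by
  have h1 := gpos hθpos hg0 hg1 hgrec hi (n + 1) (by omega)
  have h2 := gpos hθpos hg0 hg1 hgrec hi n hn
  have h3 : 0 ≤ pp θ (n + 1) := pp_nonneg (hθpos _ (by omega)) (by omega)
  rw [aa]; nlinarith

private lemma aa_antitone {m n : ℕ} (hm : i ≤ m) (hmn : m ≤ n) : aa θ g i n ≤ aa θ g i m := by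
  induction n, hmn using Nat.le_induction with
  | base => exact le_refl _
  | succ n hmn ih =>
    have h := aa_rec hθpos hg0 hg1 hgrec hi n (le_trans hm hmn)
    have h2 := gpos hθpos hg0 hg1 hgrec hi n (le_trans hm hmn)
    have h3 : 0 ≤ pp θ (n + 1) := pp_nonneg (hθpos _ (by omega)) (by omega)
    have h4 : 0 ≤ pp θ (n + 2) := pp_nonneg (hθpos _ (by omega)) (by omega)
    nlinarith [mul_nonneg (mul_nonneg h4 h3) h2.le]

private lemma g_le_one : ∀ n, i ≤ n → g i n ≤ 1 := by
  have hii : g i i ≤ 1 := by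
    rw [hg0 i hi]
    have := qq_le_one (θ := θ) (hθpos i (by omega)) (by omega)
    rw [qq] at this; exact this
  have h0 : 0 < g i i := gpos hθpos hg0 hg1 hgrec hi i le_rfl
  intro n hn
  obtain ⟨k, rfl⟩ := Nat.exists_eq_add_of_le hn
  match k with
  | 0 => exact hii
  | 1 =>
    rw [gfirst hθpos hg0 hg1 hgrec hi]
    have hq1 := qq_le_one (θ := θ) (hθpos (i + 1) (by omega)) (by omega)
    have hq0 := qq_nonneg (θ := θ) (hθpos (i + 1) (by omega)) (by omega)
    nlinarith
  | (k + 2) =>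
    have e : i + (k + 2) = (i + k) + 2 := by omega
    rw [e, g_eq hθpos hg0 hg1 hgrec hi (i + k) (by omega)]
    have hq1 := qq_le_one (θ := θ) (hθpos (i + k + 2) (by omega)) (by omega)
    have hq0 := qq_nonneg (θ := θ) (hθpos (i + k + 2) (by omega)) (by omega)
    have haa : aa θ g i (i + k) ≤ aa θ g i i :=
      aa_antitone hθpos hg0 hg1 hgrec hi le_rfl (by omega)
    have haa0 : 0 < aa θ g i (i + k) := aa_pos hθpos hg0 hg1 hgrec hi (i + k) (by omega)
    have : aa θ g i i = g i i := aa_start hθpos hg0 hg1 hgrec hi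
    nlinarith

private lemma aa_tendsto : ∃ A : ℝ, 0 ≤ A ∧ Tendsto (fun n => aa θ g i n) atTop (nhds A) := by
  set s : ℕ → ℝ := fun k => aa θ g i (k + i) with hs
  have hanti : Antitone s := antitone_nat_of_succ_le (fun k => by
    exact aa_antitone hθpos hg0 hg1 hgrec hi (by omega) (by omega))
  have hbdd : BddBelow (Set.range s) := by
    refine ⟨0, ?_⟩
    rintro x ⟨k, rfl⟩
    exact (aa_pos hθpos hg0 hg1 hgrec hi (k + i) (by omega)).le
  have hlim : Tendsto s atTop (nhds (⨅ k, s k)) := tendsto_atTop_ciInf hanti hbdd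
  refine ⟨⨅ k, s k, ?_, ?_⟩
  · exact le_ciInf (fun k => (aa_pos hθpos hg0 hg1 hgrec hi (k + i) (by omega)).le)
  · exact (tendsto_add_atTop_iff_nat i).mp hlim

end

private noncomputable def bseq (u v : ℕ → ℝ) : ℕ → ℝ
  | 0 => 1
  | 1 => u 1
  | (n + 2) => u (n + 2) * (bseq u v (n + 1) + v (n + 1) * bseq u v n)

section
variable {u v : ℕ → ℝ}
  (huv : ∀ k, 1 ≤ k → 0 ≤ u k ∧ u k ≤ 1 ∧ 0 ≤ v k ∧ u k + v k = 1)
include huv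

private lemma bseq_bounds : ∀ k, 0 ≤ bseq u v k ∧ bseq u v k ≤ 1 ∧
    bseq u v (k + 1) + v (k + 1) * bseq u v k ≤ 1 ∧ 0 ≤ bseq u v (k + 1) := by
  intro k
  induction k with
  | zero =>
    obtain ⟨h0, h1, h2, h3⟩ := huv 1 le_rfl
    simp only [bseq]
    refine ⟨zero_le_one, le_refl _, by linarith, h0⟩
  | succ k ih =>
    obtain ⟨hb0, hb1, hB, hb0'⟩ := ih
    obtain ⟨hu0, hu1, hv0, huv1⟩ := huv (k + 1) (by omega)
    obtain ⟨hu0', hu1', hv0', huv1'⟩ := huv (k + 2) (by omega)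
    have hb2 : bseq u v (k + 2) = u (k + 2) * (bseq u v (k + 1) + v (k + 1) * bseq u v k) := rfl
    have hBnn : 0 ≤ bseq u v (k + 1) + v (k + 1) * bseq u v k := by positivity
    have h1 : bseq u v (k + 1) ≤ 1 := by nlinarith
    have h2 : 0 ≤ bseq u v (k + 2) := by rw [hb2]; positivity
    refine ⟨hb0', h1, ?_, h2⟩
    rw [hb2]
    nlinarith

private lemma bseq_B_lower : ∀ k,
    1 - (∑ j ∈ range k, v (j + 1) * v (j + 2)) ≤ bseq u v (k + 1) + v (k + 1) * bseq u v k := by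
  intro k
  induction k with
  | zero =>
    obtain ⟨h0, h1, h2, h3⟩ := huv 1 le_rfl
    simp only [bseq, range_zero, sum_empty]
    linarith
  | succ k ih =>
    obtain ⟨hb0, hb1, hB, hb0'⟩ := bseq_bounds huv k
    obtain ⟨hu0, hu1, hv0, huv1⟩ := huv (k + 1) (by omega)
    obtain ⟨hu0', hu1', hv0', huv1'⟩ := huv (k + 2) (by omega)
    have hb2 : bseq u v (k + 2) = u (k + 2) * (bseq u v (k + 1) + v (k + 1) * bseq u v k) := rfl
    rw [sum_range_succ]
    have key : bseq u v (k + 2) + v (k + 2) * bseq u v (k + 1)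
        = (bseq u v (k + 1) + v (k + 1) * bseq u v k) - v (k + 2) * (v (k + 1) * bseq u v k) := by
      rw [hb2]; linear_combination (bseq u v (k + 1) + v (k + 1) * bseq u v k) * huv1'
    rw [key]
    have : v (k + 2) * (v (k + 1) * bseq u v k) ≤ v (k + 1) * v (k + 2) := by nlinarith [mul_nonneg (mul_nonneg hv0 hv0') (by linarith : (0:ℝ) ≤ 1 - bseq u v k)]
    linarith

private lemma bseq_lower (k : ℕ) :
    u (k + 2) * (1 - ∑ j ∈ range k, v (j + 1) * v (j + 2)) ≤ bseq u v (k + 2) := by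
  obtain ⟨hu0, hu1, hv0, huv1⟩ := huv (k + 2) (by omega)
  have hb2 : bseq u v (k + 2) = u (k + 2) * (bseq u v (k + 1) + v (k + 1) * bseq u v k) := rfl
  rw [hb2]
  exact mul_le_mul_of_nonneg_left (bseq_B_lower huv k) hu0

end

private lemma den_pos' {θ : ℕ → ℝ} {n : ℕ} (hθ : 0 < θ n) (hn : 1 ≤ n) :
    0 < (n : ℝ) - 1 + θ n := by
  have h : (1 : ℝ) ≤ (n : ℝ) := by exact_mod_cast hn
  linarith

section
variable {θ : ℕ → ℝ} (hθpos : ∀ j, 1 ≤ j → 0 < θ j)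
include hθpos

private lemma pp_tendsto_zero (h : Tendsto (fun n : ℕ => θ n / n) atTop (nhds 0)) :
    Tendsto (pp θ) atTop (nhds 0) := by
  have hg : Tendsto (fun n : ℕ => 2 * (θ n / n)) atTop (nhds 0) := by
    simpa using (tendsto_const_nhds (x := (2:ℝ))).mul h
  refine squeeze_zero' ?_ ?_ hg
  · filter_upwards [eventually_ge_atTop 1] with n hn
    exact div_nonneg (hθpos n hn).le (den_pos' (hθpos n hn) hn).le
  · filter_upwards [eventually_ge_atTop 2] with n hn
    have hθn := hθpos n (by omega)
    have hD := den_pos' hθn (by omega)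
    have hn2 : (2 : ℝ) ≤ (n : ℝ) := by exact_mod_cast hn
    have hn0 : (0 : ℝ) < (n : ℝ) := by linarith
    have he : 2 * (θ n / n) = (2 * θ n) / n := by ring
    rw [pp, he, div_le_div_iff₀ hD hn0]
    nlinarith

private lemma theta_div_tendsto_zero (h : Tendsto (pp θ) atTop (nhds 0)) :
    Tendsto (fun n : ℕ => θ n / n) atTop (nhds 0) := by
  have hg : Tendsto (fun n : ℕ => 2 * pp θ n) atTop (nhds 0) := by
    simpa using (tendsto_const_nhds (x := (2:ℝ))).mul h
  refine squeeze_zero' ?_ ?_ hg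
  · filter_upwards [eventually_ge_atTop 1] with n hn
    have hn0 : (0 : ℝ) ≤ (n : ℝ) := by positivity
    exact div_nonneg (hθpos n hn).le hn0
  · have hev : ∀ᶠ n : ℕ in atTop, pp θ n < 1/2 := h.eventually_lt_const (by norm_num)
    filter_upwards [eventually_ge_atTop 2, hev] with n hn hhalf
    have hθn := hθpos n (by omega)
    have hD := den_pos' hθn (by omega)
    have hn2 : (2 : ℝ) ≤ (n : ℝ) := by exact_mod_cast hn
    have hn0 : (0 : ℝ) < (n : ℝ) := by linarith
    rw [pp] at hhalf ⊢
    rw [div_lt_iff₀ hD] at hhalf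
    have he : 2 * (θ n / ((n:ℝ) - 1 + θ n)) = (2 * θ n) / ((n:ℝ) - 1 + θ n) := by ring
    rw [he, div_le_div_iff₀ hn0 hD]
    nlinarith

private lemma qq_tendsto_one (h : Tendsto (pp θ) atTop (nhds 0)) :
    Tendsto (qq θ) atTop (nhds 1) := by
  have : Tendsto (fun n : ℕ => 1 - pp θ n) atTop (nhds 1) := by
    simpa using (tendsto_const_nhds (x := (1:ℝ))).sub h
  refine this.congr' ?_
  filter_upwards [eventually_ge_atTop 1] with n hn
  have hθn := hθpos n hn
  have hD := den_pos' hθn hn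
  rw [pp, qq]
  field_simp
  ring

private lemma summand_eq (j : ℕ) :
    θ (j + 1) * θ (j + 2) / (((j : ℝ) + θ (j + 1)) * ((j : ℝ) + 1 + θ (j + 2)))
      = pp θ (j + 1) * pp θ (j + 2) := by
  rw [pp, pp, div_mul_div_comm]
  push_cast
  ring_nf

end

section
variable {θ : ℕ → ℝ} {g : ℕ → ℕ → ℝ} {i : ℕ}
  (hθpos : ∀ j, 1 ≤ j → 0 < θ j)
  (hg0 : ∀ i : ℕ, 2 ≤ i → g i i = ((i : ℝ) - 1) / ((i : ℝ) - 1 + θ i))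
  (hg1 : ∀ i : ℕ, 2 ≤ i → g i (i + 1) = g i i * (i : ℝ) / ((i : ℝ) + θ (i + 1)))
  (hgrec : ∀ i : ℕ, 2 ≤ i → ∀ n : ℕ, i + 2 ≤ n →
      g i n = (((n : ℝ) - 1) / ((n : ℝ) - 1 + θ n))
        * (g i (n - 1) + (θ (n - 1) / ((n : ℝ) - 2 + θ (n - 1))) * g i (n - 2)))
  (hi : 2 ≤ i)
set_option linter.unusedSectionVars false
include hθpos hg0 hg1 hgrec hi

private lemma forward
    (hsum : Summable (fun j : ℕ => pp θ (j + 1) * pp θ (j + 2)))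
    (hppz : Tendsto (pp θ) atTop (nhds 0)) :
    ∃ L : ℝ, 0 < L ∧ Tendsto (fun n : ℕ => g i n) atTop (nhds L) := by
  obtain ⟨A, hA0, hA⟩ := aa_tendsto hθpos hg0 hg1 hgrec hi
  have hqq1 : Tendsto (qq θ) atTop (nhds 1) := qq_tendsto_one hθpos hppz
  -- `g i` tends to `A`
  have hgA : Tendsto (fun n : ℕ => g i n) atTop (nhds A) := by
    have h2 : Tendsto (fun n : ℕ => qq θ (n + 2) * aa θ g i n) atTop (nhds (1 * A)) :=
      (hqq1.comp (tendsto_add_atTop_nat 2)).mul hA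
    rw [one_mul] at h2
    have h3 : Tendsto (fun n : ℕ => g i (n + 2)) atTop (nhds A) := by
      refine h2.congr' ?_
      filter_upwards [eventually_ge_atTop i] with n hn
      exact (g_eq hθpos hg0 hg1 hgrec hi n hn).symm
    exact (tendsto_add_atTop_iff_nat 2).mp h3
  -- choose a cut point N with small tail
  set c : ℕ → ℝ := fun j => pp θ (j + 1) * pp θ (j + 2) with hcdef
  have htail : Tendsto (fun N : ℕ => ∑' k : ℕ, c (k + N)) atTop (nhds 0) :=
    tendsto_sum_nat_add c
  have hev : ∀ᶠ N : ℕ in atTop, (∑' k : ℕ, c (k + N)) < 1/2 :=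
    htail.eventually_lt_const (by norm_num)
  obtain ⟨N, hN1, hN2⟩ := ((eventually_ge_atTop (i + 1)).and hev).exists
  set t : ℝ := ∑' k : ℕ, c (k + N) with htdef
  have hsumN : Summable (fun k : ℕ => c (k + N)) := (summable_nat_add_iff N).mpr hsum
  have htnn : 0 ≤ t := tsum_nonneg (fun k => mul_nonneg
    (pp_nonneg (hθpos _ (by omega)) (by omega)) (pp_nonneg (hθpos _ (by omega)) (by omega)))
  -- the comparison sequence
  set u : ℕ → ℝ := fun k => qq θ (N + k) with hudef
  set v : ℕ → ℝ := fun k => pp θ (N + k) with hvdef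
  have huv : ∀ k, 1 ≤ k → 0 ≤ u k ∧ u k ≤ 1 ∧ 0 ≤ v k ∧ u k + v k = 1 := by
    intro k hk
    have h1 : 1 ≤ N + k := by omega
    have hθk := hθpos (N + k) h1
    refine ⟨qq_nonneg hθk h1, qq_le_one hθk h1, pp_nonneg hθk h1, ?_⟩
    have := pq_sum (θ := θ) hθk h1
    simp only [hudef, hvdef]
    linarith
  have hγN : 0 < g i N := gpos hθpos hg0 hg1 hgrec hi N (by omega)
  have hrecN : ∀ k, g i (N + (k + 2))
      = u (k + 2) * (g i (N + (k + 1)) + v (k + 1) * g i (N + k)) := by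
    intro k
    have h := grec' hθpos hg0 hg1 hgrec hi (N + k) (by omega)
    have e2 : N + (k + 2) = N + k + 2 := by omega
    have e1 : N + (k + 1) = N + k + 1 := by omega
    rw [e2, e1, h]
    simp only [hudef, hvdef, e2, e1]
  have hgge : ∀ k, g i N * bseq u v k ≤ g i (N + k) := by
    have key : ∀ k, g i N * bseq u v k ≤ g i (N + k)
        ∧ g i N * bseq u v (k + 1) ≤ g i (N + (k + 1)) := by
      intro k
      induction k with
      | zero =>
        constructor
        · simp [bseq]
        · -- g i N * u 1 ≤ g i (N + 1)
          obtain ⟨M, rfl⟩ : ∃ M, N = M + 1 := ⟨N - 1, by omega⟩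
          have h := grec' hθpos hg0 hg1 hgrec hi M (by omega)
          have e : M + 1 + 1 = M + 2 := rfl
          have hgM : 0 < g i M := gpos hθpos hg0 hg1 hgrec hi M (by omega)
          have hppM : 0 ≤ pp θ (M + 1) := pp_nonneg (hθpos _ (by omega)) (by omega)
          have hqqM : 0 ≤ qq θ (M + 2) := qq_nonneg (hθpos _ (by omega)) (by omega)
          have hb1 : bseq u v 1 = qq θ (M + 1 + 1) := by
            simp only [bseq, hudef]
          rw [hb1, e, h]
          nlinarith [mul_nonneg hqqM (mul_nonneg hppM hgM.le)]
      | succ k ih =>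
        refine ⟨ih.2, ?_⟩
        have hb2 : bseq u v (k + 2) = u (k + 2) * (bseq u v (k + 1) + v (k + 1) * bseq u v k) := rfl
        have hu0 : 0 ≤ u (k + 2) := (huv (k + 2) (by omega)).1
        have hv0 : 0 ≤ v (k + 1) := (huv (k + 1) (by omega)).2.2.1
        rw [hrecN k, hb2]
        have h1 := ih.1
        have h2 := ih.2
        nlinarith [mul_le_mul_of_nonneg_left h1 hv0]
    exact fun k => (key k).1
  -- lower bound for aa along a subsequence shape
  have hkey : ∀ k : ℕ, g i N * ((1 - t) * qq θ (k + (N + 2))) ≤ aa θ g i (k + (N + 1)) := by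
    intro k
    have e2 : k + (N + 2) = N + (k + 2) := by omega
    have e1 : k + (N + 1) = N + (k + 1) := by omega
    rw [e2, e1]
    have hS : (∑ j ∈ range k, v (j + 1) * v (j + 2)) ≤ t := by
      have : (∑ j ∈ range k, v (j + 1) * v (j + 2)) = ∑ j ∈ range k, c (j + N) := by
        refine sum_congr rfl (fun j _ => ?_)
        simp only [hvdef, hcdef]
        have e3 : N + (j + 1) = j + N + 1 := by omega
        have e4 : N + (j + 2) = j + N + 2 := by omega
        rw [e3, e4]
      rw [this, htdef]
      exact Summable.sum_le_tsum (range k)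
        (fun j _ => mul_nonneg (pp_nonneg (hθpos _ (by omega)) (by omega))
          (pp_nonneg (hθpos _ (by omega)) (by omega))) hsumN
    have hblow : u (k + 2) * (1 - ∑ j ∈ range k, v (j + 1) * v (j + 2)) ≤ bseq u v (k + 2) :=
      bseq_lower huv k
    have hgge2 := hgge (k + 2)
    have hu0 : 0 ≤ u (k + 2) := (huv (k + 2) (by omega)).1
    have haa : g i (N + (k + 2)) ≤ aa θ g i (N + (k + 1)) := by
      have e5 : N + (k + 1) + 1 = N + (k + 2) := by omega
      rw [aa, e5]
      have hppk : 0 ≤ pp θ (N + (k + 2)) := pp_nonneg (hθpos _ (by omega)) (by omega)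
      have hgk : 0 < g i (N + (k + 1)) := gpos hθpos hg0 hg1 hgrec hi _ (by omega)
      nlinarith
    have huq : u (k + 2) = qq θ (N + (k + 2)) := rfl
    have : g i N * (u (k + 2) * (1 - ∑ j ∈ range k, v (j + 1) * v (j + 2))) ≤ g i (N + (k + 2)) := by
      calc g i N * (u (k + 2) * (1 - ∑ j ∈ range k, v (j + 1) * v (j + 2)))
          ≤ g i N * bseq u v (k + 2) := by
            exact mul_le_mul_of_nonneg_left hblow hγN.le
        _ ≤ g i (N + (k + 2)) := hgge2
    have hfin : g i N * ((1 - t) * qq θ (N + (k + 2)))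
        ≤ g i N * (u (k + 2) * (1 - ∑ j ∈ range k, v (j + 1) * v (j + 2))) := by
      rw [huq]
      have h1t : 0 ≤ 1 - t := by linarith [hN2]
      have hts : (1 - t) ≤ (1 - ∑ j ∈ range k, v (j + 1) * v (j + 2)) := by linarith
      have hq0 : 0 ≤ qq θ (N + (k + 2)) :=
        qq_nonneg (hθpos (N + (k + 2)) (by omega)) (by omega : 1 ≤ N + (k + 2))
      have h5 : (1 - t) * qq θ (N + (k + 2))
          ≤ qq θ (N + (k + 2)) * (1 - ∑ j ∈ range k, v (j + 1) * v (j + 2)) := by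
        nlinarith [mul_le_mul_of_nonneg_right hts hq0]
      exact mul_le_mul_of_nonneg_left h5 hγN.le
    linarith
  -- pass to the limit
  have hLHS : Tendsto (fun k : ℕ => g i N * ((1 - t) * qq θ (k + (N + 2)))) atTop
      (nhds (g i N * ((1 - t) * 1))) :=
    tendsto_const_nhds.mul (tendsto_const_nhds.mul (hqq1.comp (tendsto_add_atTop_nat (N + 2))))
  have hRHS : Tendsto (fun k : ℕ => aa θ g i (k + (N + 1))) atTop (nhds A) :=
    hA.comp (tendsto_add_atTop_nat (N + 1))
  have hAge : g i N * ((1 - t) * 1) ≤ A := le_of_tendsto_of_tendsto' hLHS hRHS hkey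
  refine ⟨A, ?_, hgA⟩
  have : (0 : ℝ) < g i N * ((1 - t) * 1) := by nlinarith [hN2]
  linarith

end

section
variable {θ : ℕ → ℝ} {g : ℕ → ℕ → ℝ}
  (hθpos : ∀ j, 1 ≤ j → 0 < θ j)
  (hg0 : ∀ i : ℕ, 2 ≤ i → g i i = ((i : ℝ) - 1) / ((i : ℝ) - 1 + θ i))
  (hg1 : ∀ i : ℕ, 2 ≤ i → g i (i + 1) = g i i * (i : ℝ) / ((i : ℝ) + θ (i + 1)))
  (hgrec : ∀ i : ℕ, 2 ≤ i → ∀ n : ℕ, i + 2 ≤ n →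
      g i n = (((n : ℝ) - 1) / ((n : ℝ) - 1 + θ n))
        * (g i (n - 1) + (θ (n - 1) / ((n : ℝ) - 2 + θ (n - 1))) * g i (n - 2)))
set_option linter.unusedSectionVars false
include hθpos hg0 hg1 hgrec

private lemma backward {L : ℝ} (hLpos : 0 < L)
    (hgL : Tendsto (fun n : ℕ => g 2 n) atTop (nhds L)) :
    Summable (fun j : ℕ => pp θ (j + 1) * pp θ (j + 2)) ∧ Tendsto (pp θ) atTop (nhds 0) := by
  have h2 : (2 : ℕ) ≤ 2 := le_rfl
  obtain ⟨A, hA0, hA⟩ := aa_tendsto hθpos hg0 hg1 hgrec h2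
  have hshift : Tendsto (fun n : ℕ => g 2 (n + 1)) atTop (nhds L) :=
    hgL.comp (tendsto_add_atTop_nat 1)
  have hLA : L ≤ A := by
    refine le_of_tendsto_of_tendsto hshift hA ?_
    filter_upwards [eventually_ge_atTop 2] with n hn
    have hgn : 0 < g 2 n := gpos hθpos hg0 hg1 hgrec h2 n hn
    have hppn : 0 ≤ pp θ (n + 1) := pp_nonneg (hθpos _ (by omega)) (by omega)
    simp only [aa]
    nlinarith
  have hApos : 0 < A := lt_of_lt_of_le hLpos hLA
  -- the limit of `pp (n+1)`
  have hppl : Tendsto (fun n : ℕ => pp θ (n + 1)) atTop (nhds ((A - L) / L)) := by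
    have hnum : Tendsto (fun n : ℕ => (aa θ g 2 n - g 2 (n + 1)) / g 2 n) atTop
        (nhds ((A - L) / L)) := (hA.sub hshift).div hgL hLpos.ne'
    refine hnum.congr' ?_
    filter_upwards [eventually_ge_atTop 2] with n hn
    have hgn : 0 < g 2 n := gpos hθpos hg0 hg1 hgrec h2 n hn
    have he : aa θ g 2 n - g 2 (n + 1) = pp θ (n + 1) * g 2 n := by rw [aa]; ring
    rw [he, mul_div_assoc, div_self hgn.ne', mul_one]
  -- the limit of `qq (n+2)`
  have hqql : Tendsto (fun n : ℕ => qq θ (n + 2)) atTop (nhds (L / A)) := by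
    have hnum : Tendsto (fun n : ℕ => g 2 (n + 2) / aa θ g 2 n) atTop (nhds (L / A)) :=
      (hgL.comp (tendsto_add_atTop_nat 2)).div hA hApos.ne'
    refine hnum.congr' ?_
    filter_upwards [eventually_ge_atTop 2] with n hn
    have haan : 0 < aa θ g 2 n := aa_pos hθpos hg0 hg1 hgrec h2 n hn
    rw [g_eq hθpos hg0 hg1 hgrec h2 n hn, mul_div_assoc, div_self haan.ne', mul_one]
  -- deduce `A = L`
  have hone : Tendsto (fun n : ℕ => pp θ (n + 2) + qq θ (n + 2)) atTop
      (nhds ((A - L) / L + L / A)) := by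
    have hp2 : Tendsto (fun n : ℕ => pp θ (n + 2)) atTop (nhds ((A - L) / L)) :=
      hppl.comp (tendsto_add_atTop_nat 1)
    exact hp2.add hqql
  have hone' : Tendsto (fun n : ℕ => pp θ (n + 2) + qq θ (n + 2)) atTop (nhds 1) := by
    refine Tendsto.congr' ?_ (tendsto_const_nhds (x := (1 : ℝ)))
    filter_upwards [eventually_ge_atTop 0] with n _
    exact (pq_sum (hθpos (n + 2) (by omega)) (by omega)).symm
  have heq : (A - L) / L + L / A = 1 := tendsto_nhds_unique hone hone'
  have hAL : A = L := by
    have hsq : (A - L) ^ 2 = 0 := by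
      field_simp at heq
      nlinarith
    have := (pow_eq_zero_iff (two_ne_zero)).mp hsq
    linarith [this]
  have hppz : Tendsto (pp θ) atTop (nhds 0) := by
    rw [← tendsto_add_atTop_iff_nat 1]
    have hz : (A - L) / L = 0 := by rw [hAL]; simp
    rw [← hz]
    exact hppl
  refine ⟨?_, hppz⟩
  -- summability
  have hev : ∀ᶠ n : ℕ in atTop, 2 ≤ n ∧ L / 2 < g 2 n :=
    (eventually_ge_atTop 2).and (hgL.eventually_const_lt (by linarith))
  obtain ⟨N₀, hN₀⟩ := eventually_atTop.mp hev
  rw [← summable_nat_add_iff N₀]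
  have hterm : ∀ m : ℕ, ∀ j ∈ range m,
      pp θ (j + N₀ + 1) * pp θ (j + N₀ + 2)
        ≤ 2 * (aa θ g 2 (N₀ + j) - aa θ g 2 (N₀ + j + 1)) / L := by
    intro m j _
    have hrec := aa_rec hθpos hg0 hg1 hgrec h2 (N₀ + j) (by
      have := (hN₀ (N₀ + j) (by omega)).1; omega)
    have hgNj := (hN₀ (N₀ + j) (by omega)).2
    have hN2 : 2 ≤ N₀ := (hN₀ N₀ (le_refl _)).1
    have hp1 : 0 ≤ pp θ (N₀ + j + 1) := pp_nonneg (hθpos _ (by omega)) (by omega)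
    have hp2 : 0 ≤ pp θ (N₀ + j + 2) := pp_nonneg (hθpos _ (by omega)) (by omega)
    have e1 : j + N₀ + 1 = N₀ + j + 1 := by omega
    have e2 : j + N₀ + 2 = N₀ + j + 2 := by omega
    rw [e1, e2, le_div_iff₀ hLpos]
    nlinarith [mul_nonneg hp1 hp2]
  refine summable_of_sum_range_le (c := 2 * aa θ g 2 N₀ / L) ?_ ?_
  · intro j
    have hN2 : 2 ≤ N₀ := (hN₀ N₀ (le_refl _)).1
    exact mul_nonneg (pp_nonneg (hθpos _ (by omega)) (by omega))
      (pp_nonneg (hθpos _ (by omega)) (by omega))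
  · intro m
    have hN2 : 2 ≤ N₀ := (hN₀ N₀ (le_refl _)).1
    have tel : ∑ j ∈ range m, (aa θ g 2 (N₀ + j) - aa θ g 2 (N₀ + j + 1))
        = aa θ g 2 N₀ - aa θ g 2 (N₀ + m) := by
      have := Finset.sum_range_sub' (fun j => aa θ g 2 (N₀ + j)) m
      simpa [add_assoc] using this
    calc ∑ j ∈ range m, pp θ (j + N₀ + 1) * pp θ (j + N₀ + 2)
        ≤ ∑ j ∈ range m, 2 * (aa θ g 2 (N₀ + j) - aa θ g 2 (N₀ + j + 1)) / L :=
          sum_le_sum (hterm m)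
      _ = 2 * (aa θ g 2 N₀ - aa θ g 2 (N₀ + m)) / L := by
          rw [← tel, ← sum_div, ← mul_sum]
      _ ≤ 2 * aa θ g 2 N₀ / L := by
          have haam : 0 < aa θ g 2 (N₀ + m) := aa_pos hθpos hg0 hg1 hgrec h2 _ (by omega)
          have : (0:ℝ) < L := hLpos
          gcongr
          linarith

end

/-- the limits `γ_{i,∞}` of the no-adjacent-ones probabilities
`γ_{i,n}` of the generalized Feller coupling exist and are positive iff
`∑ θ_j θ_{j+1}/((j-1+θ_j)(j+θ_{j+1})) < ∞` and `θ_n/n → 0`. -/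
theorem stmt16 (θ : ℕ → ℝ) (hθpos : ∀ j, 1 ≤ j → 0 < θ j)
    (g : ℕ → ℕ → ℝ)
    (hg0 : ∀ i : ℕ, 2 ≤ i → g i i = ((i : ℝ) - 1) / ((i : ℝ) - 1 + θ i))
    (hg1 : ∀ i : ℕ, 2 ≤ i → g i (i + 1) = g i i * (i : ℝ) / ((i : ℝ) + θ (i + 1)))
    (hgrec : ∀ i : ℕ, 2 ≤ i → ∀ n : ℕ, i + 2 ≤ n →
      g i n = (((n : ℝ) - 1) / ((n : ℝ) - 1 + θ n))
        * (g i (n - 1) + (θ (n - 1) / ((n : ℝ) - 2 + θ (n - 1))) * g i (n - 2))) :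
    ((Summable (fun j : ℕ => θ (j + 1) * θ (j + 2)
        / (((j : ℝ) + θ (j + 1)) * ((j : ℝ) + 1 + θ (j + 2)))) ∧
      Tendsto (fun n : ℕ => θ n / n) atTop (nhds 0)) ↔
    (∀ i : ℕ, 2 ≤ i → ∃ L : ℝ, 0 < L ∧ Tendsto (fun n : ℕ => g i n) atTop (nhds L))) := by
  constructor
  · rintro ⟨hsum, hθn⟩ i hi
    have hsum' : Summable (fun j : ℕ => pp θ (j + 1) * pp θ (j + 2)) :=
      hsum.congr (fun j => summand_eq hθpos j)
    exact forward hθpos hg0 hg1 hgrec hi hsum' (pp_tendsto_zero hθpos hθn)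
  · intro h
    obtain ⟨L, hLpos, hgL⟩ := h 2 le_rfl
    obtain ⟨hsum', hppz⟩ := backward hθpos hg0 hg1 hgrec hLpos hgL
    exact ⟨hsum'.congr (fun j => (summand_eq hθpos j).symm),
      theta_div_tendsto_zero hθpos hppz⟩
end

section
/- Let θ : ℕ → ℝ with θ_i > 0 for all i and θ_n → θ > 0 as n → ∞, and set θ_{<n>} := Π_{k=1}^{n} (θ_k + k − 1). Fix r ≥ 1 and real numbers x_1, …, x_r > 0 with x_1 + ⋯ + x_r < 1. For n set a_i := ⌊n·x_i⌋ and m := a_1 + ⋯ + a_r. Then, as n → ∞, n^r · ( n!·θ_{<n−m>} / ( (n−m)!·θ_{<n>} ) ) · ( Π_{j=1}^{r} θ_{n+1−(a_1+⋯+a_j)} ) / ( n·(n−a_1)·(n−a_1−a_2)⋯(n−a_1−⋯−a_{r−1}) ) → θ^r · (1 − x_1 − ⋯ − x_r)^{θ−1} / ( (1−x_1)(1−x_1−x_2)⋯(1−x_1−⋯−x_{r−1}) ). -/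
open Finset Filter

lemma aux_log_ge {y : ℝ} (hy : 0 < y) : 1 - y⁻¹ ≤ Real.log y := by
  have h := Real.log_le_sub_one_of_pos (inv_pos.mpr hy)
  rw [Real.log_inv] at h
  linarith

lemma aux_term1 :
    Tendsto (fun k : ℕ => (k : ℝ) * Real.log ((k : ℝ) / ((k : ℝ) - 1))) atTop (nhds 1) := by
  have hub : Tendsto (fun k : ℕ => (k : ℝ) / ((k : ℝ) - 1)) atTop (nhds 1) := by
    have h1 : Tendsto (fun k : ℕ => (k : ℝ) - 1) atTop atTop :=
      tendsto_atTop_add_const_right _ (-1) tendsto_natCast_atTop_atTop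
    have h3 : Tendsto (fun k : ℕ => 1 + ((k : ℝ) - 1)⁻¹) atTop (nhds (1 + 0)) :=
      tendsto_const_nhds.add h1.inv_tendsto_atTop
    rw [add_zero] at h3
    refine h3.congr' ?_
    filter_upwards [eventually_ge_atTop 2] with k hk
    have hk2 : (2 : ℝ) ≤ (k : ℝ) := by exact_mod_cast hk
    have h0 : (k : ℝ) - 1 ≠ 0 := by linarith
    field_simp
    ring
  apply tendsto_of_tendsto_of_tendsto_of_le_of_le' tendsto_const_nhds hub
  · filter_upwards [eventually_ge_atTop 2] with k hk
    have hk2 : (2 : ℝ) ≤ (k : ℝ) := by exact_mod_cast hk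
    have hkpos : (0 : ℝ) < k := by linarith
    have hden : (0 : ℝ) < (k : ℝ) - 1 := by linarith
    have hy : (0 : ℝ) < (k : ℝ) / ((k : ℝ) - 1) := div_pos hkpos hden
    have hlb := aux_log_ge hy
    have heq : (1 : ℝ) - ((k : ℝ) / ((k : ℝ) - 1))⁻¹ = ((k : ℝ))⁻¹ := by
      rw [inv_div]
      field_simp
      ring
    rw [heq] at hlb
    have := mul_le_mul_of_nonneg_left hlb hkpos.le
    calc (1 : ℝ) = (k : ℝ) * ((k : ℝ))⁻¹ := (mul_inv_cancel₀ (ne_of_gt hkpos)).symm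
      _ ≤ (k : ℝ) * Real.log ((k : ℝ) / ((k : ℝ) - 1)) := this
  · filter_upwards [eventually_ge_atTop 2] with k hk
    have hk2 : (2 : ℝ) ≤ (k : ℝ) := by exact_mod_cast hk
    have hkpos : (0 : ℝ) < k := by linarith
    have hden : (0 : ℝ) < (k : ℝ) - 1 := by linarith
    have hy : (0 : ℝ) < (k : ℝ) / ((k : ℝ) - 1) := div_pos hkpos hden
    have hub' := Real.log_le_sub_one_of_pos hy
    have := mul_le_mul_of_nonneg_left hub' hkpos.le
    calc (k : ℝ) * Real.log ((k : ℝ) / ((k : ℝ) - 1))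
        ≤ (k : ℝ) * ((k : ℝ) / ((k : ℝ) - 1) - 1) := this
      _ = (k : ℝ) / ((k : ℝ) - 1) := by field_simp; ring

lemma aux_term2 (θ : ℕ → ℝ) (hθpos : ∀ i, 1 ≤ i → 0 < θ i) (ϑ : ℝ)
    (hθlim : Tendsto θ atTop (nhds ϑ)) :
    Tendsto (fun k : ℕ => (k : ℝ) * Real.log ((θ k + (k : ℝ) - 1) / (k : ℝ)))
      atTop (nhds (ϑ - 1)) := by
  have hinv : Tendsto (fun k : ℕ => ((k : ℝ))⁻¹) atTop (nhds 0) :=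
    tendsto_inv_atTop_nhds_zero_nat
  have hwk : Tendsto (fun k : ℕ => (θ k + (k : ℝ) - 1) / (k : ℝ)) atTop (nhds 1) := by
    have h : Tendsto (fun k : ℕ => (θ k - 1) * ((k : ℝ))⁻¹ + 1) atTop
        (nhds ((ϑ - 1) * 0 + 1)) := ((hθlim.sub_const 1).mul hinv).add_const 1
    rw [mul_zero, zero_add] at h
    refine h.congr' ?_
    filter_upwards [eventually_ge_atTop 1] with k hk
    have hk0 : (k : ℝ) ≠ 0 := Nat.cast_ne_zero.mpr (by omega)
    field_simp
    ring
  have hkw : Tendsto (fun k : ℕ => (k : ℝ) / (θ k + (k : ℝ) - 1)) atTop (nhds 1) := by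
    have h := hwk.inv₀ one_ne_zero
    rw [inv_one] at h
    exact h.congr (fun k => by rw [inv_div])
  have hlow : Tendsto (fun k : ℕ => (θ k - 1) * ((k : ℝ) / (θ k + (k : ℝ) - 1)))
      atTop (nhds (ϑ - 1)) := by
    have h := (hθlim.sub_const 1).mul hkw
    rwa [mul_one] at h
  have hup : Tendsto (fun k : ℕ => θ k - 1) atTop (nhds (ϑ - 1)) := hθlim.sub_const 1
  apply tendsto_of_tendsto_of_tendsto_of_le_of_le' hlow hup
  · filter_upwards [eventually_ge_atTop 1] with k hk
    have hk1 : (1 : ℝ) ≤ (k : ℝ) := by exact_mod_cast hk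
    have hkpos : (0 : ℝ) < k := by linarith
    have hwpos : 0 < θ k + (k : ℝ) - 1 := by have := hθpos k hk; linarith
    have hy : 0 < (θ k + (k : ℝ) - 1) / (k : ℝ) := div_pos hwpos hkpos
    have hlb := aux_log_ge hy
    have heq : (k : ℝ) * (1 - ((θ k + (k : ℝ) - 1) / (k : ℝ))⁻¹)
        = (θ k - 1) * ((k : ℝ) / (θ k + (k : ℝ) - 1)) := by
      rw [inv_div]
      field_simp
      ring
    calc (θ k - 1) * ((k : ℝ) / (θ k + (k : ℝ) - 1))
        = (k : ℝ) * (1 - ((θ k + (k : ℝ) - 1) / (k : ℝ))⁻¹) := heq.symm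
      _ ≤ (k : ℝ) * Real.log ((θ k + (k : ℝ) - 1) / (k : ℝ)) :=
          mul_le_mul_of_nonneg_left hlb hkpos.le
  · filter_upwards [eventually_ge_atTop 1] with k hk
    have hk1 : (1 : ℝ) ≤ (k : ℝ) := by exact_mod_cast hk
    have hkpos : (0 : ℝ) < k := by linarith
    have hwpos : 0 < θ k + (k : ℝ) - 1 := by have := hθpos k hk; linarith
    have hy : 0 < (θ k + (k : ℝ) - 1) / (k : ℝ) := div_pos hwpos hkpos
    have hub' := Real.log_le_sub_one_of_pos hy
    calc (k : ℝ) * Real.log ((θ k + (k : ℝ) - 1) / (k : ℝ))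
        ≤ (k : ℝ) * ((θ k + (k : ℝ) - 1) / (k : ℝ) - 1) :=
          mul_le_mul_of_nonneg_left hub' hkpos.le
      _ = θ k - 1 := by field_simp; ring

lemma aux_kE (θ : ℕ → ℝ) (hθpos : ∀ i, 1 ≤ i → 0 < θ i) (ϑ : ℝ)
    (hθlim : Tendsto θ atTop (nhds ϑ)) :
    Tendsto (fun k : ℕ => (k : ℝ) * (Real.log ((k : ℝ) / (θ k + (k : ℝ) - 1))
      + (ϑ - 1) * (Real.log (k : ℝ) - Real.log ((k : ℝ) - 1)))) atTop (nhds 0) := by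
  have h1 := aux_term1
  have h2 := aux_term2 θ hθpos ϑ hθlim
  have h : Tendsto (fun k : ℕ => (ϑ - 1) * ((k : ℝ) * Real.log ((k : ℝ) / ((k : ℝ) - 1)))
      - (k : ℝ) * Real.log ((θ k + (k : ℝ) - 1) / (k : ℝ))) atTop
      (nhds ((ϑ - 1) * 1 - (ϑ - 1))) := (h1.const_mul (ϑ - 1)).sub h2
  rw [mul_one, sub_self] at h
  refine h.congr' ?_
  filter_upwards [eventually_ge_atTop 2] with k hk
  have hk2 : (2 : ℝ) ≤ (k : ℝ) := by exact_mod_cast hk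
  have hk0 : (k : ℝ) ≠ 0 := by intro h'; rw [h'] at hk2; linarith
  have hk1 : (k : ℝ) - 1 ≠ 0 := by intro h'; nlinarith
  have hw : (0 : ℝ) < θ k + (k : ℝ) - 1 := by
    have := hθpos k (by omega); linarith
  rw [Real.log_div hk0 hk1, Real.log_div hk0 (ne_of_gt hw),
    Real.log_div (ne_of_gt hw) hk0]
  ring

lemma aux_tele : ∀ (n A : ℕ), 1 ≤ A → A ≤ n →
    ∑ k ∈ Finset.Ioc A n, (Real.log (k : ℝ) - Real.log ((k : ℝ) - 1))
      = Real.log (n : ℝ) - Real.log (A : ℝ) := by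
  intro n A hA hAn
  induction n, hAn using Nat.le_induction with
  | base => simp
  | succ n hAn ih =>
      rw [Finset.sum_Ioc_succ_top hAn, ih]
      have h1 : ((n + 1 : ℕ) : ℝ) = (n : ℝ) + 1 := by push_cast; ring
      rw [h1]
      ring

lemma aux_cast_factorial (N : ℕ) :
    (N.factorial : ℝ) = ∏ k ∈ Finset.Ioc 0 N, (k : ℝ) := by
  induction N with
  | zero => simp
  | succ n ih =>
      rw [Finset.prod_Ioc_succ_top (Nat.zero_le _), ← ih, Nat.factorial_succ]
      push_cast
      ring

lemma aux_Icc_one (N : ℕ) : Finset.Icc 1 N = Finset.Ioc 0 N := by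
  ext k
  simp only [Finset.mem_Icc, Finset.mem_Ioc]
  omega

lemma aux_sum_vanish (E : ℕ → ℝ)
    (hE : Tendsto (fun k : ℕ => (k : ℝ) * E k) atTop (nhds 0))
    (A M : ℕ → ℕ) (hA : Tendsto A atTop atTop) (C : ℝ) (hC : 0 ≤ C)
    (hcard : ∀ᶠ n in atTop, (M n : ℝ) ≤ C * (A n : ℝ))
    (hMeq : ∀ᶠ n in atTop, n - A n = M n) :
    Tendsto (fun n : ℕ => ∑ k ∈ Finset.Ioc (A n) n, E k) atTop (nhds 0) := by
  rw [Metric.tendsto_atTop] at hE ⊢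
  intro ε hε
  have hC1 : (0 : ℝ) < C + 1 := by linarith
  have hε' : 0 < ε / (C + 1) := div_pos hε hC1
  obtain ⟨K, hK⟩ := hE (ε / (C + 1)) hε'
  obtain ⟨N, hN⟩ := eventually_atTop.mp
    ((hA.eventually_ge_atTop (K + 1)).and (hcard.and hMeq))
  refine ⟨N, fun n hn => ?_⟩
  obtain ⟨hA1, hc, hMn⟩ := hN n hn
  have hApos : (0 : ℝ) < (A n : ℝ) := by
    have : 1 ≤ A n := by omega
    exact_mod_cast Nat.lt_of_lt_of_le Nat.zero_lt_one this
  rw [Real.dist_eq, sub_zero]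
  have hbound : ∀ k ∈ Finset.Ioc (A n) n, |E k| ≤ ε / (C + 1) / (A n : ℝ) := by
    intro k hk
    rw [Finset.mem_Ioc] at hk
    have hkK : K ≤ k := by omega
    have hkpos : (0 : ℝ) < (k : ℝ) := by
      have : 1 ≤ k := by omega
      exact_mod_cast Nat.lt_of_lt_of_le Nat.zero_lt_one this
    have h := hK k hkK
    rw [Real.dist_eq, sub_zero, abs_mul, abs_of_pos hkpos] at h
    have h1 : |E k| ≤ ε / (C + 1) / (k : ℝ) := by
      rw [le_div_iff₀ hkpos, mul_comm]
      linarith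
    refine h1.trans ?_
    apply div_le_div_of_nonneg_left hε'.le hApos
    exact_mod_cast hk.1.le
  calc |∑ k ∈ Finset.Ioc (A n) n, E k|
      ≤ ∑ k ∈ Finset.Ioc (A n) n, |E k| := Finset.abs_sum_le_sum_abs _ _
    _ ≤ ∑ _k ∈ Finset.Ioc (A n) n, ε / (C + 1) / (A n : ℝ) := Finset.sum_le_sum hbound
    _ = (M n : ℝ) * (ε / (C + 1) / (A n : ℝ)) := by
        rw [Finset.sum_const, Nat.card_Ioc, hMn, nsmul_eq_mul]
    _ ≤ C * (A n : ℝ) * (ε / (C + 1) / (A n : ℝ)) := by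
        apply mul_le_mul_of_nonneg_right hc (by positivity)
    _ = C * (ε / (C + 1)) := by field_simp
    _ < (C + 1) * (ε / (C + 1)) := mul_lt_mul_of_pos_right (by linarith) hε'
    _ = ε := by field_simp

/-- GEM limit for the ordered cycle lengths of the generalized Feller
coupling: the probability of the first `r` cycles having sizes `⌊n x_1⌋, …, ⌊n x_r⌋`,
scaled by `n^r`, converges to the GEM(θ) density. -/
theorem stmt18 (θ : ℕ → ℝ) (hθpos : ∀ i, 1 ≤ i → 0 < θ i)
    (ϑ : ℝ) (hϑ : 0 < ϑ) (hθlim : Tendsto θ atTop (nhds ϑ))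
    (r : ℕ) (hr : 1 ≤ r) (x : Fin r → ℝ) (hx : ∀ t, 0 < x t)
    (hsum : ∑ t, x t < 1)
    (a : ℕ → Fin r → ℕ) (ha : ∀ n t, a n t = Nat.floor ((n : ℝ) * x t))
    (m : ℕ → ℕ) (hm : ∀ n, m n = ∑ t, a n t) :
    Tendsto (fun n : ℕ =>
      (n : ℝ) ^ r
        * ((n.factorial : ℝ) * (∏ k ∈ Finset.Icc 1 (n - m n), (θ k + (k : ℝ) - 1))
            / (((n - m n).factorial : ℝ) * ∏ k ∈ Finset.Icc 1 n, (θ k + (k : ℝ) - 1)))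
        * (∏ j : Fin r,
            θ (n + 1 - ∑ t ∈ Finset.univ.filter (fun t : Fin r => t ≤ j), a n t))
        / ∏ j ∈ Finset.range r,
            ((n : ℝ) - ∑ t ∈ Finset.univ.filter (fun t : Fin r => (t : ℕ) < j), a n t))
      atTop
      (nhds (ϑ ^ r * (1 - ∑ t, x t) ^ (ϑ - 1)
        / ∏ j ∈ Finset.range (r - 1),
            (1 - ∑ t ∈ Finset.univ.filter (fun t : Fin r => (t : ℕ) ≤ j), x t))) := by
  obtain ⟨r', rfl⟩ : ∃ r'', r = r'' + 1 := ⟨r - 1, by omega⟩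
  set s : ℝ := ∑ t, x t with hs_def
  haveI : Nonempty (Fin (r' + 1)) := ⟨0⟩
  have hs0 : 0 < s := Finset.sum_pos (fun t _ => hx t) Finset.univ_nonempty
  have hs1 : s < 1 := hsum
  have h1s : 0 < 1 - s := by linarith
  -- basic limits of a n t / n
  have hat : ∀ t, Tendsto (fun n : ℕ => (a n t : ℝ) / n) atTop (nhds (x t)) := by
    intro t
    have h := (tendsto_nat_floor_mul_div_atTop (le_of_lt (hx t))).comp
      (tendsto_natCast_atTop_atTop (R := ℝ))
    exact h.congr (fun n => by simp only [Function.comp_apply, ha n t, mul_comm])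
  have hsumT : ∀ T : Finset (Fin (r' + 1)),
      Tendsto (fun n : ℕ => (∑ t ∈ T, (a n t : ℝ)) / n) atTop (nhds (∑ t ∈ T, x t)) := by
    intro T
    exact (tendsto_finset_sum T (fun t _ => hat t)).congr
      (fun n => (Finset.sum_div _ _ _).symm)
  have hmn : Tendsto (fun n : ℕ => (m n : ℝ) / n) atTop (nhds s) := by
    refine (hsumT Finset.univ).congr (fun n => ?_)
    rw [hm n, Nat.cast_sum]
  have hm_le : ∀ n : ℕ, (m n : ℝ) ≤ n * s := by
    intro n
    rw [hm n, Nat.cast_sum, hs_def, Finset.mul_sum]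
    refine Finset.sum_le_sum (fun t _ => ?_)
    rw [ha n t]
    exact Nat.floor_le (by have := (hx t).le; positivity)
  have hm_lt : ∀ n : ℕ, 1 ≤ n → m n < n := by
    intro n hn
    have h1 : (m n : ℝ) ≤ n * s := hm_le n
    have hnpos : (0 : ℝ) < n := by exact_mod_cast hn
    have h2 : (n : ℝ) * s < n * 1 := by
      exact mul_lt_mul_of_pos_left hs1 hnpos
    have : (m n : ℝ) < n := by nlinarith
    exact_mod_cast this
  have hA_div : Tendsto (fun n : ℕ => ((n - m n : ℕ) : ℝ) / n) atTop (nhds (1 - s)) := by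
    have h : Tendsto (fun n : ℕ => 1 - (m n : ℝ) / n) atTop (nhds (1 - s)) :=
      tendsto_const_nhds.sub hmn
    refine (h.congr' ?_ : _)
    filter_upwards [eventually_ge_atTop 1] with n hn
    have hmn' : m n ≤ n := (hm_lt n hn).le
    have hn0 : (n : ℝ) ≠ 0 := Nat.cast_ne_zero.mpr (by omega)
    rw [Nat.cast_sub hmn']
    field_simp
  have hA_top : Tendsto (fun n : ℕ => n - m n) atTop atTop := by
    rw [← tendsto_natCast_atTop_iff (R := ℝ)]
    refine (Tendsto.pos_mul_atTop h1s hA_div (tendsto_natCast_atTop_atTop (R := ℝ))).congr' ?_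
    filter_upwards [eventually_ge_atTop 1] with n hn
    have hn0 : (n : ℝ) ≠ 0 := Nat.cast_ne_zero.mpr (by omega)
    field_simp
  have hMA : Tendsto (fun n : ℕ => (m n : ℝ) / ((n - m n : ℕ) : ℝ)) atTop
      (nhds (s / (1 - s))) := by
    have h := hmn.div hA_div (ne_of_gt h1s)
    refine h.congr' ?_
    filter_upwards [eventually_ge_atTop 1, hA_top.eventually_ge_atTop 1] with n hn hA1
    have hn0 : (n : ℝ) ≠ 0 := Nat.cast_ne_zero.mpr (by omega)
    have hA0 : ((n - m n : ℕ) : ℝ) ≠ 0 := Nat.cast_ne_zero.mpr (by omega)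
    rw [Pi.div_apply]
    field_simp
  have hCval : (0 : ℝ) ≤ s / (1 - s) + 1 := by positivity
  have hcard : ∀ᶠ n in atTop, (m n : ℝ) ≤ (s / (1 - s) + 1) * ((n - m n : ℕ) : ℝ) := by
    have h2 : ∀ᶠ n in atTop, (m n : ℝ) / ((n - m n : ℕ) : ℝ) < s / (1 - s) + 1 :=
      hMA.eventually_lt_const (by linarith)
    filter_upwards [h2, hA_top.eventually_ge_atTop 1] with n hlt hA1
    have hApos : (0 : ℝ) < ((n - m n : ℕ) : ℝ) := by exact_mod_cast hA1
    have := (div_lt_iff₀ hApos).mp hlt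
    linarith
  have hMeq : ∀ᶠ n in atTop, n - (n - m n) = m n := by
    filter_upwards [eventually_ge_atTop 1] with n hn
    have := hm_lt n hn
    omega
  -- the log-sum limit
  have hEsum : Tendsto (fun n : ℕ => ∑ k ∈ Finset.Ioc (n - m n) n,
      (Real.log ((k : ℝ) / (θ k + (k : ℝ) - 1))
        + (ϑ - 1) * (Real.log (k : ℝ) - Real.log ((k : ℝ) - 1)))) atTop (nhds 0) :=
    aux_sum_vanish _ (aux_kE θ hθpos ϑ hθlim) (fun n => n - m n) m hA_top _
      hCval hcard hMeq
  have hlogA : Tendsto (fun n : ℕ => Real.log (((n - m n : ℕ) : ℝ) / (n : ℝ))) atTop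
      (nhds (Real.log (1 - s))) :=
    (Real.continuousAt_log (ne_of_gt h1s)).tendsto.comp hA_div
  have hlogsum : Tendsto (fun n : ℕ => ∑ k ∈ Finset.Ioc (n - m n) n,
      Real.log ((k : ℝ) / (θ k + (k : ℝ) - 1))) atTop
      (nhds ((ϑ - 1) * Real.log (1 - s))) := by
    have h := hEsum.add (hlogA.const_mul (ϑ - 1))
    rw [zero_add] at h
    refine h.congr' ?_
    filter_upwards [hA_top.eventually_ge_atTop 1, eventually_ge_atTop 1] with n hA1 hn1
    have hAn : n - m n ≤ n := Nat.sub_le _ _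
    have htele := aux_tele n (n - m n) hA1 hAn
    have hA0 : ((n - m n : ℕ) : ℝ) ≠ 0 := Nat.cast_ne_zero.mpr (by omega)
    have hn0 : (n : ℝ) ≠ 0 := Nat.cast_ne_zero.mpr (by omega)
    rw [Finset.sum_add_distrib, ← Finset.mul_sum, htele, Real.log_div hA0 hn0]
    ring
  have hprodIoc : Tendsto (fun n : ℕ =>
      ∏ k ∈ Finset.Ioc (n - m n) n, ((k : ℝ) / (θ k + (k : ℝ) - 1))) atTop
      (nhds ((1 - s) ^ (ϑ - 1))) := by
    have h := (Real.continuous_exp.tendsto _).comp hlogsum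
    rw [Real.rpow_def_of_pos h1s, mul_comm]
    refine h.congr' ?_
    filter_upwards [hA_top.eventually_ge_atTop 1] with n hA1
    simp only [Function.comp_apply]
    rw [Real.exp_sum]
    refine Finset.prod_congr rfl (fun k hk => ?_)
    rw [Finset.mem_Ioc] at hk
    have hk1 : 1 ≤ k := by omega
    have hk1' : (1 : ℝ) ≤ (k : ℝ) := by exact_mod_cast hk1
    have hkpos : (0 : ℝ) < k := by linarith
    have hwpos : 0 < θ k + (k : ℝ) - 1 := by have := hθpos k hk1; linarith
    exact Real.exp_log (div_pos hkpos hwpos)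
  have hwne : ∀ (N : ℕ) (k : ℕ), k ∈ Finset.Ioc 0 N → θ k + (k : ℝ) - 1 ≠ 0 := by
    intro N k hk
    rw [Finset.mem_Ioc] at hk
    have hk1 : 1 ≤ k := hk.1
    have hk1' : (1 : ℝ) ≤ (k : ℝ) := by exact_mod_cast hk1
    have := hθpos k hk1
    intro h'
    linarith
  have hA' : Tendsto (fun n : ℕ =>
      (n.factorial : ℝ) * (∏ k ∈ Finset.Icc 1 (n - m n), (θ k + (k : ℝ) - 1))
        / (((n - m n).factorial : ℝ) * ∏ k ∈ Finset.Icc 1 n, (θ k + (k : ℝ) - 1)))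
      atTop (nhds ((1 - s) ^ (ϑ - 1))) := by
    refine hprodIoc.congr' ?_
    filter_upwards [hA_top.eventually_ge_atTop 1] with n hA1
    have hAn : n - m n ≤ n := Nat.sub_le _ _
    rw [aux_cast_factorial n, aux_cast_factorial (n - m n), aux_Icc_one, aux_Icc_one,
      ← Finset.prod_Ioc_consecutive (fun k : ℕ => (k : ℝ)) (Nat.zero_le (n - m n)) hAn,
      ← Finset.prod_Ioc_consecutive (fun k : ℕ => θ k + (k : ℝ) - 1)
        (Nat.zero_le (n - m n)) hAn,
      Finset.prod_div_distrib]
    have hPA : (∏ k ∈ Finset.Ioc 0 (n - m n), (k : ℝ)) ≠ 0 := by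
      refine Finset.prod_ne_zero_iff.mpr (fun k hk => ?_)
      rw [Finset.mem_Ioc] at hk
      exact Nat.cast_ne_zero.mpr (by omega)
    have hQA : (∏ k ∈ Finset.Ioc 0 (n - m n), (θ k + (k : ℝ) - 1)) ≠ 0 :=
      Finset.prod_ne_zero_iff.mpr (hwne (n - m n))
    have hQt : (∏ k ∈ Finset.Ioc (n - m n) n, (θ k + (k : ℝ) - 1)) ≠ 0 := by
      refine Finset.prod_ne_zero_iff.mpr (fun k hk => ?_)
      rw [Finset.mem_Ioc] at hk
      exact hwne n k (Finset.mem_Ioc.mpr ⟨by omega, hk.2⟩)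
    field_simp
  -- the θ-product piece
  have hB : Tendsto (fun n : ℕ => ∏ j : Fin (r' + 1),
      θ (n + 1 - ∑ t ∈ Finset.univ.filter (fun t : Fin (r' + 1) => t ≤ j), a n t))
      atTop (nhds (ϑ ^ (r' + 1))) := by
    have h : ∀ j : Fin (r' + 1), Tendsto (fun n : ℕ =>
        θ (n + 1 - ∑ t ∈ Finset.univ.filter (fun t : Fin (r' + 1) => t ≤ j), a n t))
        atTop (nhds ϑ) := by
      intro j
      apply hθlim.comp
      apply tendsto_atTop_mono ?_ hA_top
      intro n
      have hTm : ∑ t ∈ Finset.univ.filter (fun t : Fin (r' + 1) => t ≤ j), a n t ≤ m n := by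
        rw [hm n]
        exact Finset.sum_le_sum_of_subset (Finset.filter_subset _ _)
      omega
    have h2 := tendsto_finset_prod Finset.univ (fun j (_ : j ∈ Finset.univ) => h j)
    simpa using h2
  -- the n/(n - partial sum) pieces
  have hXle : ∀ j : ℕ,
      ∑ t ∈ Finset.univ.filter (fun t : Fin (r' + 1) => (t : ℕ) < j), x t ≤ s :=
    fun j => Finset.sum_le_sum_of_subset_of_nonneg (Finset.filter_subset _ _)
      (fun t _ _ => (hx t).le)
  have hU : ∀ j : ℕ, Tendsto (fun n : ℕ => (n : ℝ)
      / ((n : ℝ) - ∑ t ∈ Finset.univ.filter (fun t : Fin (r' + 1) => (t : ℕ) < j),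
          (a n t : ℝ))) atTop
      (nhds (1 - ∑ t ∈ Finset.univ.filter (fun t : Fin (r' + 1) => (t : ℕ) < j), x t)⁻¹) := by
    intro j
    have hXpos : 0 < 1 - ∑ t ∈ Finset.univ.filter
        (fun t : Fin (r' + 1) => (t : ℕ) < j), x t := by
      have := hXle j; linarith
    have h1 : Tendsto (fun n : ℕ => ((n : ℝ)
        - ∑ t ∈ Finset.univ.filter (fun t : Fin (r' + 1) => (t : ℕ) < j), (a n t : ℝ)) / n)
        atTop (nhds (1 - ∑ t ∈ Finset.univ.filter
          (fun t : Fin (r' + 1) => (t : ℕ) < j), x t)) := by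
      have h : Tendsto (fun n : ℕ => 1 - (∑ t ∈ Finset.univ.filter
          (fun t : Fin (r' + 1) => (t : ℕ) < j), (a n t : ℝ)) / n) atTop
          (nhds (1 - ∑ t ∈ Finset.univ.filter
            (fun t : Fin (r' + 1) => (t : ℕ) < j), x t)) :=
        tendsto_const_nhds.sub
          (hsumT (Finset.univ.filter (fun t : Fin (r' + 1) => (t : ℕ) < j)))
      refine h.congr' ?_
      filter_upwards [eventually_ge_atTop 1] with n hn
      have hn0 : (n : ℝ) ≠ 0 := Nat.cast_ne_zero.mpr (by omega)
      field_simp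
    have h2 := h1.inv₀ (ne_of_gt hXpos)
    exact h2.congr (fun n => inv_div _ _)
  have hC : Tendsto (fun n : ℕ => (n : ℝ) ^ (r' + 1)
      / ∏ j ∈ Finset.range (r' + 1),
          ((n : ℝ) - ∑ t ∈ Finset.univ.filter (fun t : Fin (r' + 1) => (t : ℕ) < j),
            (a n t : ℝ))) atTop
      (nhds (∏ j ∈ Finset.range (r' + 1),
        (1 - ∑ t ∈ Finset.univ.filter (fun t : Fin (r' + 1) => (t : ℕ) < j), x t)⁻¹)) := by
    have h := tendsto_finset_prod (Finset.range (r' + 1))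
      (fun j (_ : j ∈ Finset.range (r' + 1)) => hU j)
    refine h.congr (fun n => ?_)
    rw [Finset.prod_div_distrib, Finset.prod_const, Finset.card_range]
  -- combine
  have hfinal := (hA'.mul hB).mul hC
  have hre : ∏ j ∈ Finset.range (r' + 1),
      (1 - ∑ t ∈ Finset.univ.filter (fun t : Fin (r' + 1) => (t : ℕ) < j), x t)
      = ∏ j ∈ Finset.range r',
        (1 - ∑ t ∈ Finset.univ.filter (fun t : Fin (r' + 1) => (t : ℕ) ≤ j), x t) := by
    rw [Finset.prod_range_succ']
    have h0 : (Finset.univ.filter (fun t : Fin (r' + 1) => (t : ℕ) < 0)) = ∅ := by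
      ext t; simp
    rw [h0]
    simp only [Finset.sum_empty, sub_zero, mul_one]
    refine Finset.prod_congr rfl (fun j _ => ?_)
    congr 1
    refine Finset.sum_congr ?_ (fun _ _ => rfl)
    ext t
    simp [Nat.lt_succ_iff]
  have hXpos' : ∀ j ∈ Finset.range (r' + 1),
      (1 - ∑ t ∈ Finset.univ.filter (fun t : Fin (r' + 1) => (t : ℕ) < j), x t) ≠ 0 := by
    intro j _
    have := hXle j
    intro h'
    linarith
  have hval : (1 - s) ^ (ϑ - 1) * ϑ ^ (r' + 1) * ∏ j ∈ Finset.range (r' + 1),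
      (1 - ∑ t ∈ Finset.univ.filter (fun t : Fin (r' + 1) => (t : ℕ) < j), x t)⁻¹
      = ϑ ^ (r' + 1) * (1 - s) ^ (ϑ - 1)
        / ∏ j ∈ Finset.range (r' + 1 - 1),
            (1 - ∑ t ∈ Finset.univ.filter (fun t : Fin (r' + 1) => (t : ℕ) ≤ j), x t) := by
    rw [Finset.prod_inv_distrib, hre, Nat.add_sub_cancel, div_eq_mul_inv]
    ring
  rw [← hval]
  refine hfinal.congr (fun n => ?_)
  push_cast
  ring
end

section
/- Let θ > 0 and set θ*_3 = θ and θ*_i = θ(1 + θ/(i−2)) for i ≥ 4. Fix i ≥ 4 and define δ_{i,n} for n ≥ i by: δ_{i,i} = (i−1)/(i−1+θ*_i), δ_{i,i+1} = δ_{i,i} · i/(i+θ*_{i+1}), and δ_{i,n} = ((n−1)/(n−1+θ*_n)) · ( δ_{i,n−1} + (θ*_{n−1}/(n−2+θ*_{n−1}))·δ_{i,n−2} ) for n ≥ i+2. Then δ_{i,∞} := lim_{n→∞} δ_{i,n} exists and δ_{i,∞} = M(1, θ+i−1, −θ) · B(z_1(θ)+i−3, z_2(θ)+i−3) / B(i−2,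 θ+i−1), where M(1, b, z) := Σ_{j=0}^{∞} z^j/(b)_{(j)} is the confluent hypergeometric function, B(w_1, w_2) := Γ(w_1)Γ(w_2)/Γ(w_1+w_2) with Γ the complex Gamma function, and z_1(θ) = (3+θ − √((1−θ)(1+3θ)))/2, z_2(θ) = (3+θ + √((1−θ)(1+3θ)))/2 (complex square root; z_1, z_2 are complex conjugates when θ > 1, and the Beta ratio on the right-hand side is real). -/
open Finset Filter Topology

/-- Rising factorial `(x)_{(j)} = x (x+1) ⋯ (x+j-1)`. -/
noncomputable def risingFac (x : ℝ) (j : ℕ) : ℝ := ∏ k ∈ Finset.range j, (x + k)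

/-- Complex Beta function `B(w₁,w₂) = Γ(w₁)Γ(w₂)/Γ(w₁+w₂)`. -/
noncomputable def cBeta (w₁ w₂ : ℂ) : ℂ :=
  Complex.Gamma w₁ * Complex.Gamma w₂ / Complex.Gamma (w₁ + w₂)

lemma gamma_prod_ratio_tendsto (a b c d : ℂ) (hab : a + b = c + d)
    (ha : 0 < a.re) (hb : 0 < b.re) (hc : 0 < c.re) (hd : 0 < d.re) :
    Tendsto (fun N : ℕ => ∏ j ∈ Finset.range N,
      ((a + j) * (b + j)) / ((c + j) * (d + j))) atTop
      (𝓝 (Complex.Gamma c * Complex.Gamma d / (Complex.Gamma a * Complex.Gamma b))) := by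
  have hne : ∀ s : ℂ, 0 < s.re → ∀ j : ℕ, (s + (j:ℂ)) ≠ 0 := by
    intro s hs j h
    have : (s + (j:ℂ)).re = 0 := by rw [h]; simp
    simp only [Complex.add_re, Complex.natCast_re] at this
    have := Nat.cast_nonneg (α := ℝ) j
    linarith
  have hprod_ne : ∀ s : ℂ, 0 < s.re → ∀ n : ℕ, (∏ j ∈ Finset.range (n+1), (s + (j:ℂ))) ≠ 0 :=
    fun s hs n => Finset.prod_ne_zero_iff.mpr fun j _ => hne s hs j
  have hP : ∀ s : ℂ, 0 < s.re → ∀ n : ℕ, 1 ≤ n →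
      (∏ j ∈ Finset.range (n+1), (s + (j:ℂ)))
        = (n:ℂ) ^ s * (Nat.factorial n : ℂ) / Complex.GammaSeq s n := by
    intro s hs n hn
    have hn0 : (n:ℂ) ≠ 0 := Nat.cast_ne_zero.mpr (by omega)
    have hG : Complex.GammaSeq s n ≠ 0 := by
      refine div_ne_zero (mul_ne_zero ?_ (Nat.cast_ne_zero.mpr (Nat.factorial_ne_zero n)))
        (hprod_ne s hs n)
      simp [Complex.cpow_eq_zero_iff, hn0]
    rw [eq_div_iff hG, Complex.GammaSeq, mul_comm, div_mul_cancel₀ _ (hprod_ne s hs n)]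
  have hGne : ∀ s : ℂ, 0 < s.re → ∀ n : ℕ, 1 ≤ n → Complex.GammaSeq s n ≠ 0 := by
    intro s hs n hn
    have hn0 : (n:ℂ) ≠ 0 := Nat.cast_ne_zero.mpr (by omega)
    refine div_ne_zero (mul_ne_zero ?_ (Nat.cast_ne_zero.mpr (Nat.factorial_ne_zero n)))
      (hprod_ne s hs n)
    simp [Complex.cpow_eq_zero_iff, hn0]
  have key : ∀ᶠ n : ℕ in atTop, (∏ j ∈ Finset.range (n+1),
      ((a + j) * (b + j)) / ((c + j) * (d + j)))
      = Complex.GammaSeq c n * Complex.GammaSeq d n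
        / (Complex.GammaSeq a n * Complex.GammaSeq b n) := by
    filter_upwards [eventually_ge_atTop 1] with n hn
    have hn0 : (n:ℂ) ≠ 0 := Nat.cast_ne_zero.mpr (by omega)
    have hcp : (n:ℂ)^a * (n:ℂ)^b = (n:ℂ)^c * (n:ℂ)^d := by
      rw [← Complex.cpow_add _ _ hn0, ← Complex.cpow_add _ _ hn0, hab]
    have hF : ((n.factorial : ℕ) : ℂ) ≠ 0 := Nat.cast_ne_zero.mpr (Nat.factorial_ne_zero n)
    have hGa := hGne a ha n hn
    have hGb := hGne b hb n hn
    have hGc := hGne c hc n hn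
    have hGd := hGne d hd n hn
    have hx : ((n:ℂ) ^ c * (n:ℂ) ^ d) * (((Nat.factorial n : ℕ):ℂ) * ((Nat.factorial n : ℕ):ℂ)) ≠ 0 := by
      refine mul_ne_zero (mul_ne_zero ?_ ?_) (mul_ne_zero hF hF) <;>
        simp [Complex.cpow_eq_zero_iff, hn0]
    have aux : ∀ X P Q : ℂ, X ≠ 0 → P ≠ 0 → Q ≠ 0 → (X / P) / (X / Q) = Q / P := by
      intro X P Q hX hP' hQ'
      field_simp
    calc (∏ j ∈ Finset.range (n+1), ((a + j) * (b + j)) / ((c + j) * (d + j)))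
        = (∏ j ∈ Finset.range (n+1), (a + (j:ℂ))) * (∏ j ∈ Finset.range (n+1), (b + (j:ℂ)))
          / ((∏ j ∈ Finset.range (n+1), (c + (j:ℂ))) * (∏ j ∈ Finset.range (n+1), (d + (j:ℂ)))) := by
          rw [Finset.prod_div_distrib, Finset.prod_mul_distrib, Finset.prod_mul_distrib]
      _ = (((n:ℂ)^a * (n:ℂ)^b) * (((Nat.factorial n : ℕ):ℂ) * ((Nat.factorial n : ℕ):ℂ))
            / (Complex.GammaSeq a n * Complex.GammaSeq b n))
          / (((n:ℂ)^c * (n:ℂ)^d) * (((Nat.factorial n : ℕ):ℂ) * ((Nat.factorial n : ℕ):ℂ))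
            / (Complex.GammaSeq c n * Complex.GammaSeq d n)) := by
          rw [hP a ha n hn, hP b hb n hn, hP c hc n hn, hP d hd n hn]; ring
      _ = (((n:ℂ)^c * (n:ℂ)^d) * (((Nat.factorial n : ℕ):ℂ) * ((Nat.factorial n : ℕ):ℂ))
            / (Complex.GammaSeq a n * Complex.GammaSeq b n))
          / (((n:ℂ)^c * (n:ℂ)^d) * (((Nat.factorial n : ℕ):ℂ) * ((Nat.factorial n : ℕ):ℂ))
            / (Complex.GammaSeq c n * Complex.GammaSeq d n)) := by rw [hcp]
      _ = _ := aux _ _ _ hx (mul_ne_zero hGa hGb) (mul_ne_zero hGc hGd)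
  have hlim : Tendsto (fun n : ℕ => Complex.GammaSeq c n * Complex.GammaSeq d n
      / (Complex.GammaSeq a n * Complex.GammaSeq b n)) atTop
      (𝓝 (Complex.Gamma c * Complex.Gamma d / (Complex.Gamma a * Complex.Gamma b))) := by
    refine Tendsto.div ((Complex.GammaSeq_tendsto_Gamma c).mul (Complex.GammaSeq_tendsto_Gamma d))
      ((Complex.GammaSeq_tendsto_Gamma a).mul (Complex.GammaSeq_tendsto_Gamma b))
      (mul_ne_zero (Complex.Gamma_ne_zero_of_re_pos ha) (Complex.Gamma_ne_zero_of_re_pos hb))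
  have := hlim.congr' (Filter.EventuallyEq.symm key)
  exact (tendsto_add_atTop_iff_nat 1).mp this

set_option maxHeartbeats 1000000 in
private lemma key_algebra (θ r s B X Y : ℝ) (hθ : 0 < θ) (hr : 4 ≤ r) (hs : 0 ≤ s) :
    ((r+s+2)-1)/((r+s+2)-1+θ*((r+s+2)-2+θ)/((r+s+2)-2))
      * (B * ((r+(s+1)-1)*(r+(s+1)-2+θ)/((r+(s+1)-1)*(r+(s+1)-2)+θ*((r+(s+1)-2))+θ^2)) * X
        + (θ*((r+(s+1))-2+θ)/((r+(s+1))-2)) / ((r+s+2)-2+θ*((r+(s+1))-2+θ)/((r+(s+1))-2))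
          * (B * (X - Y)))
    = B * ((r+(s+1)-1)*(r+(s+1)-2+θ)/((r+(s+1)-1)*(r+(s+1)-2)+θ*((r+(s+1)-2))+θ^2))
        * ((r+(s+2)-1)*(r+(s+2)-2+θ)/((r+(s+2)-1)*(r+(s+2)-2)+θ*((r+(s+2)-2))+θ^2))
        * (X + Y * (-θ)/(θ+r-1+(s+1))) := by
  have hD1 : 0 < (r+s)*(r+s-1)+θ*(r+s-1)+θ^2 := by nlinarith
  have hD2 : 0 < (r+s+1)*(r+s)+θ*(r+s)+θ^2 := by nlinarith
  have h1 : (0:ℝ) < r+s-1 := by nlinarith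
  have h2 : (0:ℝ) < r+s := by nlinarith
  have h3 : (0:ℝ) < θ+r+s := by nlinarith
  have e1 : (r+(s+1)-1)*(r+(s+1)-2)+θ*((r+(s+1)-2))+θ^2
      = (r+s)*(r+s-1)+θ*(r+s-1)+θ^2 := by ring
  have e2 : (r+(s+2)-1)*(r+(s+2)-2)+θ*((r+(s+2)-2))+θ^2
      = (r+s+1)*(r+s)+θ*(r+s)+θ^2 := by ring
  have hden1 : (r+s+2)-1+θ*((r+s+2)-2+θ)/((r+s+2)-2)
      = ((r+s+1)*(r+s)+θ*(r+s)+θ^2)/(r+s) := by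
    rw [eq_div_iff h2.ne', add_mul, div_mul_eq_mul_div,
      show ((r+s+2)-2 : ℝ) = r+s from by ring, mul_div_cancel_right₀ _ h2.ne']
    ring
  have hden2 : (r+s+2)-2+θ*((r+(s+1))-2+θ)/((r+(s+1))-2)
      = ((r+s)*(r+s-1)+θ*(r+s-1)+θ^2)/(r+s-1) := by
    rw [eq_div_iff h1.ne', add_mul, div_mul_eq_mul_div,
      show ((r+(s+1))-2 : ℝ) = r+s-1 from by ring, mul_div_cancel_right₀ _ h1.ne']
    ring
  have hp : ((r+s+2)-1)/((r+s+2)-1+θ*((r+s+2)-2+θ)/((r+s+2)-2))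
      = (r+s+1)*(r+s)/((r+s+1)*(r+s)+θ*(r+s)+θ^2) := by
    rw [hden1, div_div_eq_mul_div, show ((r+s+2)-1 : ℝ) = r+s+1 from by ring]
  have hQQ : (θ*((r+(s+1))-2+θ)/((r+(s+1))-2)) / ((r+s+2)-2+θ*((r+(s+1))-2+θ)/((r+(s+1))-2))
      = θ*(r+s-1+θ)/((r+s)*(r+s-1)+θ*(r+s-1)+θ^2) := by
    rw [show ((r+(s+1))-2+θ : ℝ) = r+s-1+θ from by ring] at hden2 ⊢
    rw [show ((r+(s+1))-2 : ℝ) = r+s-1 from by ring] at hden2 ⊢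
    rw [hden2, div_div_div_cancel_right₀ h1.ne']
  rw [e1, e2, hp, hQQ, show (θ+r-1+(s+1) : ℝ) = θ+r+s from by ring]
  field_simp [hD1.ne', hD2.ne', h3.ne']
  ring

private lemma key_algebra1 (θ r d : ℝ) (hθ : 0 < θ) (hr : 4 ≤ r) :
    d * r / (r + θ*(r-1+θ)/(r-1))
      = d * ((r+1-1)*(r+1-2+θ)/((r+1-1)*(r+1-2)+θ*(r+1-2)+θ^2)) * (1 + -θ/(θ+r-1)) := by
  have h1 : (0:ℝ) < r-1 := by nlinarith
  have h2 : (0:ℝ) < θ+r-1 := by nlinarith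
  have hD : 0 < r*(r-1)+θ*(r-1)+θ^2 := by nlinarith
  have hden : r + θ*(r-1+θ)/(r-1) = (r*(r-1)+θ*(r-1)+θ^2)/(r-1) := by
    rw [eq_div_iff h1.ne', add_mul, div_mul_eq_mul_div, mul_div_cancel_right₀ _ h1.ne']
    ring
  rw [hden, div_div_eq_mul_div,
    show (r+1-1)*(r+1-2)+θ*(r+1-2)+θ^2 = r*(r-1)+θ*(r-1)+θ^2 from by ring]
  field_simp [hD.ne', h1.ne', h2.ne']
  ring

set_option maxHeartbeats 2000000 in
/-- the limit `δ_{i,∞}` of the no-adjacent-ones tail probabilities of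
the playground-game Feller-type coupling. -/
theorem stmt19 (θ : ℝ) (hθ : 0 < θ)
    (θs : ℕ → ℝ) (hθs3 : θs 3 = θ)
    (hθs : ∀ j : ℕ, 4 ≤ j → θs j = θ * (1 + θ / ((j : ℝ) - 2)))
    (i : ℕ) (hi : 4 ≤ i)
    (δ : ℕ → ℝ)
    (hδ0 : δ i = ((i : ℝ) - 1) / ((i : ℝ) - 1 + θs i))
    (hδ1 : δ (i + 1) = δ i * (i : ℝ) / ((i : ℝ) + θs (i + 1)))
    (hδrec : ∀ n : ℕ, i + 2 ≤ n →
      δ n = (((n : ℝ) - 1) / ((n : ℝ) - 1 + θs n))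
        * (δ (n - 1) + (θs (n - 1) / ((n : ℝ) - 2 + θs (n - 1))) * δ (n - 2))) :
    Tendsto (fun n : ℕ => (δ n : ℂ)) atTop (nhds
      (((∑' j : ℕ, (-θ) ^ j / risingFac (θ + i - 1) j : ℝ) : ℂ)
        * (cBeta ((3 + θ - ((((1 - θ) * (1 + 3 * θ) : ℝ) : ℂ)) ^ ((1 : ℂ) / 2)) / 2
              + (i : ℂ) - 3)
            ((3 + θ + ((((1 - θ) * (1 + 3 * θ) : ℝ) : ℂ)) ^ ((1 : ℂ) / 2)) / 2
              + (i : ℂ) - 3)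
          / cBeta ((i : ℂ) - 2) ((θ : ℂ) + (i : ℂ) - 1)))) := by
  have hi4 : (4:ℝ) ≤ (i:ℝ) := by exact_mod_cast hi
  set t : ℕ → ℝ := fun j => (-θ)^j / risingFac (θ + i - 1) j with ht
  set T : ℕ → ℝ := fun m => ∑ j ∈ Finset.range (m+1), t j with hT
  set D : ℕ → ℝ := fun k => ((k:ℝ)-1)*((k:ℝ)-2) + θ*((k:ℝ)-2) + θ^2 with hD
  set c : ℕ → ℝ := fun k => ((k:ℝ)-1)*((k:ℝ)-2+θ)/D k with hc
  set A : ℕ → ℝ := fun n => δ i * ∏ k ∈ Finset.Icc (i+1) n, c k with hA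
  have hθv : ∀ n : ℕ, 4 ≤ n → θs n = θ*((n:ℝ)-2+θ)/((n:ℝ)-2) := by
    intro n hn
    have h4 : (4:ℝ) ≤ (n:ℝ) := by exact_mod_cast hn
    have h2 : (n:ℝ)-2 ≠ 0 := by nlinarith
    rw [hθs n hn]
    field_simp
  have hrfpos : ∀ j : ℕ, 0 < risingFac (θ + i - 1) j := by
    intro j
    refine Finset.prod_pos fun k _ => ?_
    have : (0:ℝ) ≤ (k:ℝ) := Nat.cast_nonneg k
    nlinarith
  have htstep : ∀ m : ℕ, t (m+1) = t m * (-θ) / (θ + i - 1 + m) := by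
    intro m
    have hpos : (0:ℝ) < θ + i - 1 + m := by
      have : (0:ℝ) ≤ (m:ℝ) := Nat.cast_nonneg m
      nlinarith
    simp only [ht, risingFac, Finset.prod_range_succ, pow_succ]
    rw [div_mul_eq_mul_div, div_div]
  have hTstep : ∀ m : ℕ, T (m+1) = T m + t (m+1) := by
    intro m
    simp only [hT, Finset.sum_range_succ]
  have hAstep : ∀ n : ℕ, i ≤ n → A (n+1) = A n * c (n+1) := by
    intro n hn
    simp only [hA]
    rw [Finset.prod_Icc_succ_top (by omega : i+1 ≤ n+1)]
    ring
  have hkey : ∀ m : ℕ, δ (i + m) = A (i + m) * T m := by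
    intro m
    induction m using Nat.strong_induction_on with
    | _ m IH =>
    match m with
    | 0 =>
      have hA0 : A i = δ i := by
        simp only [hA, Finset.Icc_eq_empty (by omega : ¬ i+1 ≤ i), Finset.prod_empty, mul_one]
      have hT0 : T 0 = 1 := by simp [hT, ht, risingFac]
      simp [hA0, hT0]
    | 1 =>
      have hA1 : A (i+1) = δ i * c (i+1) := by
        simp only [hA, Finset.Icc_self, Finset.prod_singleton]
      have hT1 : T 1 = 1 + (-θ) / (θ + i - 1) := by
        simp [hT, ht, risingFac, Finset.sum_range_succ]
      have KEY := key_algebra1 θ (i:ℝ) (δ i) hθ hi4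
      rw [hδ1, hθv (i+1) (by omega), hT1, hA1]
      simp only [hc, hD]
      push_cast
      linear_combination KEY
    | (m+2) =>
      have IH1 := IH (m+1) (by omega)
      have IH2 := IH m (by omega)
      have hre := hδrec (i+(m+2)) (by omega)
      rw [show i+(m+2)-1 = i+(m+1) from by omega, show i+(m+2)-2 = i+m from by omega] at hre
      rw [hθv (i+(m+2)) (by omega), hθv (i+(m+1)) (by omega), IH1, IH2] at hre
      have hA1 : A (i+(m+1)) = A (i+m) * c (i+(m+1)) := hAstep (i+m) (by omega)
      have hA2 : A (i+(m+2)) = A (i+m) * c (i+(m+1)) * c (i+(m+2)) := by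
        rw [show i+(m+2) = (i+(m+1))+1 from by omega, hAstep (i+(m+1)) (by omega), hA1]
      have hT2 : T (m+2) = T (m+1) + t (m+1) * (-θ) / (θ + i - 1 + (m+1)) := by
        rw [hTstep (m+1), htstep (m+1)]
        norm_cast
      have hTm : T m = T (m+1) - t (m+1) := by rw [hTstep m]; ring
      rw [hre, hTm, hA1, hA2, hT2]
      simp only [hc, hD]
      push_cast
      have KEY := key_algebra θ (i:ℝ) (m:ℝ) (A (i+m)) (T (m+1)) (t (m+1)) hθ hi4
        (Nat.cast_nonneg m)
      linear_combination KEY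
  -- ===== analytic part =====
  have hDpos : ∀ k : ℕ, 2 ≤ k → 0 < D k := by
    intro k hk
    have : (2:ℝ) ≤ (k:ℝ) := by exact_mod_cast hk
    simp only [hD]
    nlinarith
  have hrfge : ∀ j : ℕ, (θ+3)^j ≤ risingFac (θ + i - 1) j := by
    intro j
    rw [risingFac, show (θ+3)^j = ∏ _k ∈ Finset.range j, (θ+3) from by
      rw [Finset.prod_const, Finset.card_range]]
    refine Finset.prod_le_prod (fun k _ => by positivity) (fun k _ => ?_)
    have : (0:ℝ) ≤ (k:ℝ) := Nat.cast_nonneg k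
    nlinarith
  have htsummable : Summable t := by
    refine Summable.of_norm_bounded (g := fun j : ℕ => (θ/(θ+3))^j) (summable_geometric_of_lt_one
      (by positivity) ?_) ?_
    · rw [div_lt_one (by linarith)]; linarith
    · intro j
      have h1 : 0 < risingFac (θ + i - 1) j := hrfpos j
      have h2 : (0:ℝ) < (θ+3)^j := by positivity
      simp only [ht, Real.norm_eq_abs, abs_div, abs_pow, abs_neg, abs_of_pos hθ,
        abs_of_pos h1, div_pow]
      exact div_le_div_of_nonneg_left (by positivity) h2 (hrfge j)
  have hTlim : Tendsto T atTop (𝓝 (∑' j, t j)) :=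
    htsummable.hasSum.tendsto_sum_nat.comp (tendsto_add_atTop_nat 1)
  -- complex setup
  set w : ℂ := ((((1 - θ) * (1 + 3 * θ) : ℝ) : ℂ)) ^ ((1:ℂ)/2) with hw
  set z₁ : ℂ := (3 + (θ:ℂ) - w)/2 with hz1
  set z₂ : ℂ := (3 + (θ:ℂ) + w)/2 with hz2
  have hwsq : w * w = (1 - (θ:ℂ)) * (1 + 3*(θ:ℂ)) := by
    have hcast : (((1 - θ) * (1 + 3 * θ) : ℝ) : ℂ) = (1 - (θ:ℂ)) * (1 + 3*(θ:ℂ)) := by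
      push_cast; ring
    by_cases hx0 : ((1 - θ) * (1 + 3 * θ) : ℝ) = 0
    · rw [hw, hx0, ← hcast, hx0]
      simp [Complex.zero_cpow (by norm_num : ((1:ℂ)/2) ≠ 0)]
    · have hne : (((1 - θ) * (1 + 3 * θ) : ℝ) : ℂ) ≠ 0 := Complex.ofReal_ne_zero.mpr hx0
      rw [hw, ← Complex.cpow_add _ _ hne, ← hcast]
      norm_num
  have hz12sum : z₁ + z₂ = 3 + (θ:ℂ) := by rw [hz1, hz2]; ring
  have hz12prod : z₁ * z₂ = 2 + (θ:ℂ) + (θ:ℂ)^2 := by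
    rw [hz1, hz2]; linear_combination (-(1:ℂ)/4) * hwsq
  have hwre : 0 ≤ w.re ∧ w.re < 1 + θ := by
    have hhalf : ((1:ℂ)/2) = (((1:ℝ)/2 : ℝ) : ℂ) := by norm_num
    rcases le_or_gt ((1 - θ) * (1 + 3 * θ)) 0 with hx | hx
    · have hE : Complex.exp (↑Real.pi * Complex.I * ((1:ℂ)/2)) = Complex.I := by
        rw [show (↑Real.pi * Complex.I * ((1:ℂ)/2)) = (↑Real.pi/2) * Complex.I from by ring,
          Complex.exp_mul_I, Complex.cos_pi_div_two, Complex.sin_pi_div_two]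
        simp
      have hr : w = (((-((1 - θ) * (1 + 3 * θ))) ^ ((1:ℝ)/2) : ℝ) : ℂ) * Complex.I := by
        rw [hw, Complex.ofReal_cpow_of_nonpos hx, hE,
          show (-(((1 - θ) * (1 + 3 * θ) : ℝ)) : ℂ) = ((-((1 - θ) * (1 + 3 * θ)) : ℝ) : ℂ) from
            by push_cast; ring,
          hhalf, Complex.ofReal_cpow (by linarith)]
      rw [hr]
      simp [Complex.mul_I_re]
      linarith
    · have hr : w = ((((1 - θ) * (1 + 3 * θ)) ^ ((1:ℝ)/2) : ℝ) : ℂ) := by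
        rw [hw, hhalf, Complex.ofReal_cpow hx.le]
      constructor
      · rw [hr]; simp only [Complex.ofReal_re]; positivity
      · rw [hr]
        simp only [Complex.ofReal_re]
        rw [← Real.sqrt_eq_rpow, Real.sqrt_lt' (by linarith)]
        nlinarith
  obtain ⟨hwre0, hwre1⟩ := hwre
  have hz1re : z₁.re = (3 + θ - w.re)/2 := by
    rw [hz1, show ((3:ℂ) + ↑θ - w)/2 = ((((1:ℝ)/2) : ℝ):ℂ) * (3 + ↑θ - w) from by push_cast; ring,
      Complex.re_ofReal_mul]
    simp [Complex.sub_re, Complex.add_re, Complex.ofReal_re]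
    ring
  have hz2re : z₂.re = (3 + θ + w.re)/2 := by
    rw [hz2, show ((3:ℂ) + ↑θ + w)/2 = ((((1:ℝ)/2) : ℝ):ℂ) * (3 + ↑θ + w) from by push_cast; ring,
      Complex.re_ofReal_mul]
    simp [Complex.add_re, Complex.ofReal_re]
    ring
  have hz1pos : 0 < z₁.re := by rw [hz1re]; linarith
  have hz2pos : 0 < z₂.re := by rw [hz2re]; linarith
  have hne0 : ∀ u : ℂ, 0 < u.re → u ≠ 0 := fun u hu h => by simp [h] at hu
  have hsum0 : (i:ℂ) + ((i:ℂ) - 1 + (θ:ℂ)) = ((i:ℂ) + z₁ - 2) + ((i:ℂ) + z₂ - 2) := by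
    linear_combination - hz12sum
  have hra : (0:ℝ) < ((i:ℂ) : ℂ).re := by
    simp only [Complex.natCast_re]
    linarith
  have hrb : 0 < ((i:ℂ) - 1 + (θ:ℂ)).re := by
    simp only [Complex.add_re, Complex.sub_re, Complex.natCast_re, Complex.one_re,
      Complex.ofReal_re]
    linarith
  have hrc : 0 < ((i:ℂ) + z₁ - 2).re := by
    simp only [Complex.add_re, Complex.sub_re, Complex.natCast_re]
    norm_num
    linarith
  have hrd : 0 < ((i:ℂ) + z₂ - 2).re := by
    simp only [Complex.add_re, Complex.sub_re, Complex.natCast_re]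
    norm_num
    linarith
  have hglim := gamma_prod_ratio_tendsto (i:ℂ) ((i:ℂ)-1+(θ:ℂ)) ((i:ℂ)+z₁-2) ((i:ℂ)+z₂-2)
    hsum0 hra hrb hrc hrd
  have hAeq : ∀ n : ℕ, ((A n : ℝ) : ℂ) = ((δ i : ℝ):ℂ) * ∏ j ∈ Finset.range (n - i),
      (((i:ℂ)+j) * (((i:ℂ)-1+(θ:ℂ))+j)) / ((((i:ℂ)+z₁-2)+j) * (((i:ℂ)+z₂-2)+j)) := by
    intro n
    rw [hA, Complex.ofReal_mul, Complex.ofReal_prod]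
    congr 1
    rw [← Finset.Ico_add_one_right_eq_Icc, Finset.prod_Ico_eq_prod_range,
      show n + 1 - (i + 1) = n - i from by omega]
    refine Finset.prod_congr rfl fun j _ => ?_
    have h1 : ((D (i+1+j) : ℝ) : ℂ) ≠ 0 :=
      Complex.ofReal_ne_zero.mpr (hDpos (i+1+j) (by omega)).ne'
    have hjr : (0:ℝ) ≤ (j:ℝ) := Nat.cast_nonneg j
    have h2c : (((i:ℂ)+z₁-2)+j) ≠ 0 := by
      refine hne0 _ ?_
      simp only [Complex.add_re, Complex.sub_re, Complex.natCast_re]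
      norm_num
      linarith
    have h2d : (((i:ℂ)+z₂-2)+j) ≠ 0 := by
      refine hne0 _ ?_
      simp only [Complex.add_re, Complex.sub_re, Complex.natCast_re]
      norm_num
      linarith
    rw [hc, Complex.ofReal_div, div_eq_div_iff h1 (mul_ne_zero h2c h2d)]
    simp only [hD]
    push_cast
    linear_combination ((((i:ℂ)+(j:ℂ))*((i:ℂ)+(j:ℂ)-1+(θ:ℂ)))*((i:ℂ)+(j:ℂ)-2)) * hz12sum
      + (((i:ℂ)+(j:ℂ))*((i:ℂ)+(j:ℂ)-1+(θ:ℂ))) * hz12prod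
  have hAlim : Tendsto (fun n : ℕ => ((A n : ℝ):ℂ)) atTop
      (𝓝 (((δ i : ℝ):ℂ) * (Complex.Gamma ((i:ℂ)+z₁-2) * Complex.Gamma ((i:ℂ)+z₂-2)
        / (Complex.Gamma (i:ℂ) * Complex.Gamma ((i:ℂ)-1+(θ:ℂ)))))) := by
    have h0 := (tendsto_const_nhds (x := ((δ i : ℝ):ℂ))).mul
      (hglim.comp (tendsto_sub_atTop_nat i))
    exact Tendsto.congr (fun n => (hAeq n).symm) h0
  have hTlimC : Tendsto (fun n : ℕ => ((T (n - i) : ℝ):ℂ)) atTop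
      (𝓝 (((∑' j, t j : ℝ) : ℂ))) :=
    (Complex.continuous_ofReal.tendsto _).comp (hTlim.comp (tendsto_sub_atTop_nat i))
  have hmain : Tendsto (fun n : ℕ => (δ n : ℂ)) atTop
      (𝓝 ((((δ i : ℝ):ℂ) * (Complex.Gamma ((i:ℂ)+z₁-2) * Complex.Gamma ((i:ℂ)+z₂-2)
        / (Complex.Gamma (i:ℂ) * Complex.Gamma ((i:ℂ)-1+(θ:ℂ)))))
        * ((∑' j, t j : ℝ) : ℂ))) := by
    refine (hAlim.mul hTlimC).congr' ?_
    filter_upwards [eventually_ge_atTop i] with n hn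
    have hk := hkey (n - i)
    rw [show i + (n - i) = n from by omega] at hk
    rw [hk]
    simp only [hA, Complex.ofReal_mul]
  -- constant identification
  have h2i : (0:ℝ) < (i:ℝ) - 2 := by linarith
  have hdeni : (i:ℝ)-1+θ*((i:ℝ)-2+θ)/((i:ℝ)-2) = D i/((i:ℝ)-2) := by
    rw [eq_div_iff h2i.ne', add_mul, div_mul_eq_mul_div, mul_div_cancel_right₀ _ h2i.ne']
    simp only [hD]
    ring
  have hδiR : δ i = ((i:ℝ)-1)*((i:ℝ)-2)/D i := by
    rw [hδ0, hθv i hi, hdeni, div_div_eq_mul_div]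
  have hDiC : ((D i : ℝ):ℂ) = ((i:ℂ)+z₁-3)*((i:ℂ)+z₂-3) := by
    simp only [hD]
    push_cast
    linear_combination (-((i:ℂ)-3)) * hz12sum - hz12prod
  have hδiC : ((δ i : ℝ):ℂ) = ((i:ℂ)-1)*((i:ℂ)-2)/(((i:ℂ)+z₁-3)*((i:ℂ)+z₂-3)) := by
    rw [hδiR, Complex.ofReal_div, Complex.ofReal_mul, hDiC]
    push_cast
    ring
  have hne13 : ((i:ℂ)+z₁-3) ≠ 0 := by
    refine hne0 _ ?_
    simp only [Complex.add_re, Complex.sub_re, Complex.natCast_re]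
    norm_num
    linarith
  have hne23 : ((i:ℂ)+z₂-3) ≠ 0 := by
    refine hne0 _ ?_
    simp only [Complex.add_re, Complex.sub_re, Complex.natCast_re]
    norm_num
    linarith
  have hni1 : ((i:ℂ)-2)+1 ≠ 0 := by
    refine hne0 _ ?_
    simp only [Complex.add_re, Complex.sub_re, Complex.natCast_re, Complex.one_re]
    norm_num
    linarith
  have hni2 : ((i:ℂ)-2) ≠ 0 := by
    refine hne0 _ ?_
    simp only [Complex.sub_re, Complex.natCast_re]
    norm_num
    linarith
  have hG1 : Complex.Gamma ((i:ℂ)+z₁-2) = ((i:ℂ)+z₁-3) * Complex.Gamma (z₁+(i:ℂ)-3) := by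
    rw [show (i:ℂ)+z₁-2 = ((i:ℂ)+z₁-3)+1 from by ring, Complex.Gamma_add_one _ hne13,
      show (i:ℂ)+z₁-3 = z₁+(i:ℂ)-3 from by ring]
  have hG2 : Complex.Gamma ((i:ℂ)+z₂-2) = ((i:ℂ)+z₂-3) * Complex.Gamma (z₂+(i:ℂ)-3) := by
    rw [show (i:ℂ)+z₂-2 = ((i:ℂ)+z₂-3)+1 from by ring, Complex.Gamma_add_one _ hne23,
      show (i:ℂ)+z₂-3 = z₂+(i:ℂ)-3 from by ring]
  have hGi : Complex.Gamma ((i:ℂ)) = (((i:ℂ)-2)+1) * (((i:ℂ)-2) * Complex.Gamma ((i:ℂ)-2)) := by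
    calc Complex.Gamma ((i:ℂ)) = Complex.Gamma ((((i:ℂ)-2)+1)+1) := by
          rw [show (((i:ℂ)-2)+1)+1 = ((i:ℂ)) from by ring]
      _ = _ := by rw [Complex.Gamma_add_one _ hni1, Complex.Gamma_add_one _ hni2]
  have hGb : Complex.Gamma ((i:ℂ)-1+(θ:ℂ)) = Complex.Gamma ((θ:ℂ)+(i:ℂ)-1) := by
    rw [show (i:ℂ)-1+(θ:ℂ) = (θ:ℂ)+(i:ℂ)-1 from by ring]
  have hGsumne : Complex.Gamma (((i:ℂ)-2)+((θ:ℂ)+(i:ℂ)-1)) ≠ 0 := by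
    refine Complex.Gamma_ne_zero_of_re_pos ?_
    simp only [Complex.add_re, Complex.sub_re, Complex.natCast_re, Complex.one_re,
      Complex.ofReal_re]
    norm_num
    linarith
  have hβ : cBeta (z₁+(i:ℂ)-3) (z₂+(i:ℂ)-3) / cBeta ((i:ℂ)-2) ((θ:ℂ)+(i:ℂ)-1)
      = Complex.Gamma (z₁+(i:ℂ)-3) * Complex.Gamma (z₂+(i:ℂ)-3)
        / (Complex.Gamma ((i:ℂ)-2) * Complex.Gamma ((θ:ℂ)+(i:ℂ)-1)) := by
    simp only [cBeta]
    rw [show (z₁+(i:ℂ)-3)+(z₂+(i:ℂ)-3) = ((i:ℂ)-2)+((θ:ℂ)+(i:ℂ)-1) from by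
      linear_combination hz12sum]
    rw [div_div_div_cancel_right₀ hGsumne]
  have hGimne : Complex.Gamma ((i:ℂ)-2) ≠ 0 := by
    refine Complex.Gamma_ne_zero_of_re_pos ?_
    simp only [Complex.sub_re, Complex.natCast_re]
    norm_num
    linarith
  have hGbne : Complex.Gamma ((θ:ℂ)+(i:ℂ)-1) ≠ 0 := by
    refine Complex.Gamma_ne_zero_of_re_pos ?_
    simp only [Complex.add_re, Complex.sub_re, Complex.natCast_re, Complex.one_re,
      Complex.ofReal_re]
    norm_num
    linarith
  have hconst : (((∑' j, t j : ℝ) : ℂ))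
        * (cBeta (z₁+(i:ℂ)-3) (z₂+(i:ℂ)-3) / cBeta ((i:ℂ)-2) ((θ:ℂ)+(i:ℂ)-1))
      = (((δ i : ℝ):ℂ) * (Complex.Gamma ((i:ℂ)+z₁-2) * Complex.Gamma ((i:ℂ)+z₂-2)
        / (Complex.Gamma (i:ℂ) * Complex.Gamma ((i:ℂ)-1+(θ:ℂ)))))
        * ((∑' j, t j : ℝ) : ℂ) := by
    rw [hβ, hδiC, hG1, hG2, hGi, hGb]
    field_simp [hne13, hne23, hni1, hni2, hGimne, hGbne]
    ring
  rw [show (3 + (θ:ℂ) - w)/2 + (i:ℂ) - 3 = z₁+(i:ℂ)-3 from by rw [hz1],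
    show (3 + (θ:ℂ) + w)/2 + (i:ℂ) - 3 = z₂+(i:ℂ)-3 from by rw [hz2], hconst]
  exact hmain
end
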